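/- arXiv:2506.10354 — 7 statements merged into one kernel-verified Lean document; each statement's English description precedes it below -/
import Mathlib

section
/- Variational characterization of the projection onto an ℓp ball for p ∈ (1, ∞): for every Y ∈ ℝ^d, the Euclidean projection θ̂ = Π_{B_p^d}(Y) satisfies, coordinatewise, θ̂_i = sign(Y_i) · Ψ_{p,λ*}(|Y_i|) for i = 1, …, d, where λ* = inf{ λ ≥ 0 : Σ_{i=1}^d Ψ_{p,λ}(|Y_i|)^p ≤ 1 }. Equivalently, there is λ* ≥ 0 such that for each i, sign(θ̂_i) = sign(Y_i) (with θ̂_i = 0 when Y_i = 0) and |Y_i| = |θ̂_i| + λ*·|θ̂_i|^{p−1}, together with the complementary slackness condition λ*·(‖θ̂‖_p^p − 1) = 0. -/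
open MeasureTheory ProbabilityTheory Real Filter Pointwise
open scoped ENNReal NNReal

noncomputable section

/-- The standard Gaussian measure `N(0, I_d)` on `ℝ^d`. -/
def stdGaussian (d : ℕ) : Measure (Fin d → ℝ) :=
  Measure.pi fun _ => gaussianReal 0 1

/-- Squared Euclidean distance on `ℝ^d`. -/
def sqDist {d : ℕ} (x y : Fin d → ℝ) : ℝ := ∑ i, (x i - y i) ^ 2

/-- The ℓp (quasi)norm, for `0 < p < ∞`. -/
def pNorm {d : ℕ} (p : ℝ) (x : Fin d → ℝ) : ℝ := (∑ i, |x i| ^ p) ^ (1 / p)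

/-- The unit ℓp ball in `ℝ^d`. -/
def lpBall (d : ℕ) (p : ℝ) : Set (Fin d → ℝ) := {x | pNorm p x ≤ 1}

/-- `proj` is a Euclidean projection onto `Θ`: it takes values in `Θ` and
minimizes the Euclidean distance to `Θ`. -/
def IsProjOn {d : ℕ} (Θ : Set (Fin d → ℝ)) (proj : (Fin d → ℝ) → Fin d → ℝ) : Prop :=
  ∀ y, proj y ∈ Θ ∧ ∀ ϑ ∈ Θ, sqDist y (proj y) ≤ sqDist y ϑ

/-- The risk `E‖θhat(θ + σξ) − θ‖₂²` of an estimator at `θ`. -/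
def risk {d : ℕ} (θhat : (Fin d → ℝ) → Fin d → ℝ) (σ : ℝ) (θ : Fin d → ℝ) : ℝ≥0∞ :=
  ∫⁻ ξ, ENNReal.ofReal (sqDist (θhat (θ + σ • ξ)) θ) ∂(stdGaussian d)

/-- Worst-case (supremum) risk of an estimator over `Θ`. -/
def supRisk {d : ℕ} (Θ : Set (Fin d → ℝ)) (θhat : (Fin d → ℝ) → Fin d → ℝ) (σ : ℝ) : ℝ≥0∞ :=
  ⨆ θ ∈ Θ, risk θhat σ θ

/-- Minimax risk over `Θ`: infimum over measurable estimators of the worst-case risk. -/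
def minimax {d : ℕ} (Θ : Set (Fin d → ℝ)) (σ : ℝ) : ℝ≥0∞ :=
  ⨅ θhat ∈ {f : (Fin d → ℝ) → Fin d → ℝ | Measurable f}, supRisk Θ θhat σ

section PsiAux

variable {p : ℝ} {Ψ : ℝ → ℝ → ℝ}

private lemma sign_mul_abs' (r : ℝ) : Real.sign r * |r| = r := by
  rcases lt_trichotomy r 0 with h | h | h
  · rw [Real.sign_of_neg h, abs_of_neg h]; ring
  · simp [h]
  · rw [Real.sign_of_pos h, abs_of_pos h]; ring

private lemma psi_le (hp : 1 < p)
    (hΨ : ∀ lam : ℝ, 0 ≤ lam → ∀ t : ℝ, 0 ≤ t →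
      0 ≤ Ψ lam t ∧ Ψ lam t + lam * Ψ lam t ^ (p - 1) = t)
    {lam t : ℝ} (hl : 0 ≤ lam) (ht : 0 ≤ t) : Ψ lam t ≤ t := by
  obtain ⟨h0, he⟩ := hΨ lam hl t ht
  nlinarith [mul_nonneg hl (Real.rpow_nonneg h0 (p - 1))]

private lemma psi_zero (hp : 1 < p)
    (hΨ : ∀ lam : ℝ, 0 ≤ lam → ∀ t : ℝ, 0 ≤ t →
      0 ≤ Ψ lam t ∧ Ψ lam t + lam * Ψ lam t ^ (p - 1) = t)
    {lam : ℝ} (hl : 0 ≤ lam) : Ψ lam 0 = 0 := by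
  obtain ⟨h0, he⟩ := hΨ lam hl 0 le_rfl
  nlinarith [mul_nonneg hl (Real.rpow_nonneg h0 (p - 1))]

private lemma psi_pos (hp : 1 < p)
    (hΨ : ∀ lam : ℝ, 0 ≤ lam → ∀ t : ℝ, 0 ≤ t →
      0 ≤ Ψ lam t ∧ Ψ lam t + lam * Ψ lam t ^ (p - 1) = t)
    {lam t : ℝ} (hl : 0 ≤ lam) (ht : 0 < t) : 0 < Ψ lam t := by
  obtain ⟨h0, he⟩ := hΨ lam hl t ht.le
  rcases h0.lt_or_eq with h | h
  · exact h
  · exfalso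
    rw [← h, Real.zero_rpow (by intro h; linarith [sub_eq_zero.mp h] : p - 1 ≠ 0)] at he
    simp at he
    linarith

private lemma psi_anti (hp : 1 < p)
    (hΨ : ∀ lam : ℝ, 0 ≤ lam → ∀ t : ℝ, 0 ≤ t →
      0 ≤ Ψ lam t ∧ Ψ lam t + lam * Ψ lam t ^ (p - 1) = t)
    {lam₁ lam₂ t : ℝ} (h1 : 0 ≤ lam₁) (h12 : lam₁ ≤ lam₂) (ht : 0 ≤ t) :
    Ψ lam₂ t ≤ Ψ lam₁ t := by
  obtain ⟨a0, ae⟩ := hΨ lam₁ h1 t ht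
  obtain ⟨b0, be⟩ := hΨ lam₂ (h1.trans h12) t ht
  by_contra hc
  push_neg at hc
  have hr : Ψ lam₁ t ^ (p - 1) ≤ Ψ lam₂ t ^ (p - 1) :=
    Real.rpow_le_rpow a0 hc.le (by linarith)
  have h1' : lam₁ * Ψ lam₁ t ^ (p - 1) ≤ lam₁ * Ψ lam₂ t ^ (p - 1) :=
    mul_le_mul_of_nonneg_left hr h1
  have h2' : lam₁ * Ψ lam₂ t ^ (p - 1) ≤ lam₂ * Ψ lam₂ t ^ (p - 1) :=
    mul_le_mul_of_nonneg_right h12 (Real.rpow_nonneg b0 _)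
  linarith

private lemma psi_lip (hp : 1 < p)
    (hΨ : ∀ lam : ℝ, 0 ≤ lam → ∀ t : ℝ, 0 ≤ t →
      0 ≤ Ψ lam t ∧ Ψ lam t + lam * Ψ lam t ^ (p - 1) = t)
    {lam₁ lam₂ t : ℝ} (h1 : 0 ≤ lam₁) (h12 : lam₁ ≤ lam₂) (ht : 0 ≤ t) :
    Ψ lam₁ t - Ψ lam₂ t ≤ (lam₂ - lam₁) * t ^ (p - 1) := by
  obtain ⟨a0, ae⟩ := hΨ lam₁ h1 t ht
  obtain ⟨b0, be⟩ := hΨ lam₂ (h1.trans h12) t ht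
  have hba : Ψ lam₂ t ≤ Ψ lam₁ t := psi_anti hp hΨ h1 h12 ht
  have hr1 : Ψ lam₂ t ^ (p - 1) ≤ Ψ lam₁ t ^ (p - 1) :=
    Real.rpow_le_rpow b0 hba (by linarith)
  have hr2 : Ψ lam₁ t ^ (p - 1) ≤ t ^ (p - 1) :=
    Real.rpow_le_rpow a0 (psi_le hp hΨ h1 ht) (by linarith)
  have h1' : lam₂ * Ψ lam₂ t ^ (p - 1) ≤ lam₂ * Ψ lam₁ t ^ (p - 1) :=
    mul_le_mul_of_nonneg_left hr1 (h1.trans h12)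
  have h2' : (lam₂ - lam₁) * Ψ lam₁ t ^ (p - 1) ≤ (lam₂ - lam₁) * t ^ (p - 1) :=
    mul_le_mul_of_nonneg_left hr2 (by linarith)
  nlinarith

end PsiAux

/-- Variational characterization of the projection onto the unit ℓp ball,
`p ∈ (1, ∞)`. Let `Ψ lam t` be the unique nonnegative solution `ψ` of `ψ + lam·ψ^(p-1) = t`
(for `lam ≥ 0`, `t ≥ 0`). Then the projection `θ̂ = Π_{B_p^d}(Y)` satisfies
`θ̂ᵢ = sign(Yᵢ)·Ψ(λ*, |Yᵢ|)` where `λ* = inf{λ ≥ 0 : Σᵢ Ψ(λ, |Yᵢ|)^p ≤ 1}`; equivalently,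
there is `λ* ≥ 0` with `sign(θ̂ᵢ) = sign(Yᵢ)` (so `θ̂ᵢ = 0` when `Yᵢ = 0`),
`|Yᵢ| = |θ̂ᵢ| + λ*·|θ̂ᵢ|^(p-1)` for all `i`, and `λ*·(‖θ̂‖_p^p − 1) = 0`. -/
theorem projection_lp_ball_variational (d : ℕ) (p : ℝ) (hp : 1 < p)
    (Ψ : ℝ → ℝ → ℝ)
    (hΨ : ∀ lam : ℝ, 0 ≤ lam → ∀ t : ℝ, 0 ≤ t →
      0 ≤ Ψ lam t ∧ Ψ lam t + lam * Ψ lam t ^ (p - 1) = t)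
    (Y : Fin d → ℝ)
    (proj : (Fin d → ℝ) → Fin d → ℝ) (hproj : IsProjOn (lpBall d p) proj) :
    (∀ i, proj Y i =
        Real.sign (Y i) *
          Ψ (sInf {lam : ℝ | 0 ≤ lam ∧ ∑ j, Ψ lam |Y j| ^ p ≤ 1}) |Y i|) ∧
    ∃ lam : ℝ, 0 ≤ lam ∧
      (∀ i, Real.sign (proj Y i) = Real.sign (Y i) ∧ (Y i = 0 → proj Y i = 0) ∧
        |Y i| = |proj Y i| + lam * |proj Y i| ^ (p - 1)) ∧
      lam * ((∑ i, |proj Y i| ^ p) - 1) = 0 := by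
  
  have hp0 : (0:ℝ) < p := by linarith
  have hp1 : (0:ℝ) < p - 1 := by linarith
  set S := {lam : ℝ | 0 ≤ lam ∧ ∑ j, Ψ lam |Y j| ^ p ≤ 1} with hS
  set g : ℝ → ℝ := fun lam => ∑ j, Ψ lam |Y j| ^ p with hg
  -- continuity of g on [0, ∞)
  have hcont : ContinuousOn g (Set.Ici 0) := by
    apply continuousOn_finset_sum
    intro j _
    have lip : ContinuousOn (fun lam => Ψ lam |Y j|) (Set.Ici 0) := by
      apply LipschitzOnWith.continuousOn (K := Real.toNNReal (|Y j| ^ (p - 1)))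
      apply LipschitzOnWith.of_dist_le_mul
      intro x hx y hy
      rw [Real.dist_eq, Real.dist_eq,
        Real.coe_toNNReal _ (Real.rpow_nonneg (abs_nonneg _) _)]
      rcases le_total x y with h | h
      · have h1 := psi_anti hp hΨ hx h (abs_nonneg (Y j))
        have h2 := psi_lip hp hΨ hx h (abs_nonneg (Y j))
        rw [abs_of_nonneg (sub_nonneg.2 h1), abs_sub_comm,
          abs_of_nonneg (sub_nonneg.2 h)]
        nlinarith
      · have h1 := psi_anti hp hΨ hy h (abs_nonneg (Y j))
        have h2 := psi_lip hp hΨ hy h (abs_nonneg (Y j))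
        rw [abs_sub_comm, abs_of_nonneg (sub_nonneg.2 h1),
          abs_of_nonneg (sub_nonneg.2 h)]
        nlinarith
    exact lip.rpow_const (fun x _ => Or.inr hp0.le)
  -- S is nonempty, bounded below, closed
  have hSne : S.Nonempty := by
    have hsq : (0:ℝ) ≤ ∑ j, (Y j) ^ 2 := Finset.sum_nonneg fun _ _ => sq_nonneg _
    set lam0 : ℝ := 1 + ∑ j, (Y j) ^ 2 with hlam0
    have hlam0pos : 0 < lam0 := by linarith
    refine ⟨lam0, by linarith, ?_⟩
    have hterm : ∀ j, Ψ lam0 |Y j| ^ p ≤ (Y j) ^ 2 / lam0 := by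
      intro j
      obtain ⟨h0, he⟩ := hΨ lam0 hlam0pos.le |Y j| (abs_nonneg _)
      rcases h0.lt_or_eq with hψ | hψ
      · have hb1 : Ψ lam0 |Y j| ^ (p - 1) ≤ |Y j| / lam0 := by
          rw [le_div_iff₀ hlam0pos]
          nlinarith
        have hb2 : Ψ lam0 |Y j| ≤ |Y j| := psi_le hp hΨ hlam0pos.le (abs_nonneg _)
        have hrw : Ψ lam0 |Y j| ^ p = Ψ lam0 |Y j| ^ (p - 1) * Ψ lam0 |Y j| := by
          rw [← Real.rpow_add_one hψ.ne' (p - 1)]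
          ring_nf
        rw [hrw]
        have : Ψ lam0 |Y j| ^ (p - 1) * Ψ lam0 |Y j| ≤ (|Y j| / lam0) * |Y j| :=
          mul_le_mul hb1 hb2 h0 (by positivity)
        calc Ψ lam0 |Y j| ^ (p - 1) * Ψ lam0 |Y j| ≤ (|Y j| / lam0) * |Y j| := this
          _ = (Y j) ^ 2 / lam0 := by rw [div_mul_eq_mul_div, ← abs_mul, ← sq, abs_of_nonneg (sq_nonneg _)]
      · rw [← hψ, Real.zero_rpow hp0.ne']
        positivity
    calc (∑ j, Ψ lam0 |Y j| ^ p) ≤ ∑ j, (Y j) ^ 2 / lam0 :=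
          Finset.sum_le_sum fun j _ => hterm j
      _ = (∑ j, (Y j) ^ 2) / lam0 := by rw [Finset.sum_div]
      _ ≤ 1 := by rw [div_le_one hlam0pos]; linarith
  have hSbdd : BddBelow S := ⟨0, fun x hx => hx.1⟩
  have hSclosed : IsClosed S := by
    have : S = Set.Ici 0 ∩ g ⁻¹' Set.Iic 1 := by
      ext x; simp [hS, hg, Set.mem_setOf_eq]
    rw [this]
    exact hcont.preimage_isClosed_of_isClosed isClosed_Ici isClosed_Iic
  have hmem : sInf S ∈ S := hSclosed.csInf_mem hSne hSbdd
  have h0lam : 0 ≤ sInf S := hmem.1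
  have hgle : g (sInf S) ≤ 1 := hmem.2
  -- complementary slackness
  have hslack : 0 < sInf S → g (sInf S) = 1 := by
    intro hl
    refine le_antisymm hgle ?_
    have hten : Tendsto g (nhdsWithin (sInf S) (Set.Ico 0 (sInf S))) (nhds (g (sInf S))) :=
      (hcont (sInf S) (Set.mem_Ici.2 h0lam)).mono fun x hx => hx.1
    have hne' : (nhdsWithin (sInf S) (Set.Ico 0 (sInf S))).NeBot := by
      apply mem_closure_iff_nhdsWithin_neBot.1
      rw [closure_Ico hl.ne]
      exact ⟨h0lam, le_rfl⟩
    apply ge_of_tendsto hten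
    filter_upwards [self_mem_nhdsWithin] with x hx
    by_contra hgx
    push_neg at hgx
    have hxS : x ∈ S := ⟨hx.1, hgx.le⟩
    exact absurd (csInf_le hSbdd hxS) (not_le.2 hx.2)
  
  -- the candidate projection
  set lam := sInf S with hlam
  have hpsi0 : ∀ i, 0 ≤ Ψ lam |Y i| := fun i => (hΨ lam h0lam |Y i| (abs_nonneg _)).1
  have hpsieq : ∀ i, Ψ lam |Y i| + lam * Ψ lam |Y i| ^ (p - 1) = |Y i| :=
    fun i => (hΨ lam h0lam |Y i| (abs_nonneg _)).2
  set θ : Fin d → ℝ := fun i => Real.sign (Y i) * Ψ lam |Y i| with hθ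
  have habs : ∀ i, |θ i| = Ψ lam |Y i| := by
    intro i
    rcases lt_trichotomy (Y i) 0 with h | h | h
    · rw [hθ]; simp only []
      rw [Real.sign_of_neg h, abs_mul, abs_neg, abs_one, one_mul,
        abs_of_nonneg (hpsi0 i)]
    · rw [hθ]; simp only []
      simp [h, psi_zero hp hΨ h0lam]
    · rw [hθ]; simp only []
      rw [Real.sign_of_pos h, one_mul, abs_of_nonneg (hpsi0 i)]
  have hsum_abs : ∑ i, |θ i| ^ p = g lam := by
    apply Finset.sum_congr rfl
    intro i _
    rw [habs i]
  have hθball : θ ∈ lpBall d p := by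
    show pNorm p θ ≤ 1
    rw [pNorm, hsum_abs]
    have hgnn : 0 ≤ g lam :=
      Finset.sum_nonneg fun j _ => Real.rpow_nonneg (hpsi0 j) p
    exact Real.rpow_le_one hgnn hgle (by positivity)
  -- auxiliary: ψ^(p-1) * ψ = ψ^p
  have hrpowp : ∀ x : ℝ, 0 ≤ x → x ^ (p - 1) * x = x ^ p := by
    intro x hx
    rcases hx.lt_or_eq with h | h
    · rw [← Real.rpow_add_one h.ne' (p - 1)]; ring_nf
    · rw [← h, Real.zero_rpow hp1.ne', Real.zero_rpow hp0.ne', zero_mul]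
  -- variational inequality
  have hvar : ∀ ϑ ∈ lpBall d p, ∑ i, (Y i - θ i) * (ϑ i - θ i) ≤ 0 := by
    intro ϑ hϑ
    have hϑnn : (0:ℝ) ≤ ∑ i, |ϑ i| ^ p :=
      Finset.sum_nonneg fun j _ => Real.rpow_nonneg (abs_nonneg _) p
    have hϑp : ∑ i, |ϑ i| ^ p ≤ 1 := by
      have h1 : (∑ i, |ϑ i| ^ p) ^ (1 / p) ≤ 1 := hϑ
      have h2 : ((∑ i, |ϑ i| ^ p) ^ (1 / p)) ^ p ≤ 1 :=
        Real.rpow_le_one (Real.rpow_nonneg hϑnn _) h1 hp0.le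
      rwa [← Real.rpow_mul hϑnn, one_div, inv_mul_cancel₀ hp0.ne',
        Real.rpow_one] at h2
    have keyi : ∀ i, (Y i - θ i) * (ϑ i - θ i) ≤
        lam * (Ψ lam |Y i| ^ (p - 1) * |ϑ i| - Ψ lam |Y i| ^ p) := by
      intro i
      have hYi : Y i - θ i = Real.sign (Y i) * (lam * Ψ lam |Y i| ^ (p - 1)) := by
        have h1 : Real.sign (Y i) * |Y i| = Y i := sign_mul_abs' _
        have h2 : |Y i| - Ψ lam |Y i| = lam * Ψ lam |Y i| ^ (p - 1) := by
          linarith [hpsieq i]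
        calc Y i - θ i = Real.sign (Y i) * |Y i| - Real.sign (Y i) * Ψ lam |Y i| := by
              rw [h1, hθ]
          _ = Real.sign (Y i) * (|Y i| - Ψ lam |Y i|) := by ring
          _ = _ := by rw [h2]
      rcases eq_or_ne (Y i) 0 with h0 | h0
      · have hψ0 : Ψ lam |Y i| = 0 := by
          rw [h0, abs_zero, psi_zero hp hΨ h0lam]
        rw [hYi, hψ0, Real.zero_rpow hp1.ne', Real.zero_rpow hp0.ne']
        simp
      · have habs_sign : |Real.sign (Y i)| = 1 := by
          rcases h0.lt_or_gt with h | h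
          · rw [Real.sign_of_neg h]; norm_num
          · rw [Real.sign_of_pos h]; norm_num
        have hs2 : Real.sign (Y i) * Real.sign (Y i) = 1 := by
          rcases h0.lt_or_gt with h | h
          · rw [Real.sign_of_neg h]; norm_num
          · rw [Real.sign_of_pos h]; norm_num
        have hsϑ : Real.sign (Y i) * ϑ i ≤ |ϑ i| := by
          calc Real.sign (Y i) * ϑ i ≤ |Real.sign (Y i) * ϑ i| := le_abs_self _
            _ = |ϑ i| := by rw [abs_mul, habs_sign, one_mul]
        have hθi : θ i = Real.sign (Y i) * Ψ lam |Y i| := by rw [hθ]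
        rw [hYi, hθi]
        have e1 : Real.sign (Y i) * (lam * Ψ lam |Y i| ^ (p - 1)) *
            (ϑ i - Real.sign (Y i) * Ψ lam |Y i|)
            = lam * (Ψ lam |Y i| ^ (p - 1) * (Real.sign (Y i) * ϑ i))
              - lam * ((Real.sign (Y i) * Real.sign (Y i)) *
                  (Ψ lam |Y i| ^ (p - 1) * Ψ lam |Y i|)) := by ring
        rw [e1, hs2, one_mul, hrpowp _ (hpsi0 i), mul_sub]
        apply sub_le_sub_right
        exact mul_le_mul_of_nonneg_left
          (mul_le_mul_of_nonneg_left hsϑ (Real.rpow_nonneg (hpsi0 i) _)) h0lam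
      -- end keyi
    calc ∑ i, (Y i - θ i) * (ϑ i - θ i)
        ≤ ∑ i, lam * (Ψ lam |Y i| ^ (p - 1) * |ϑ i| - Ψ lam |Y i| ^ p) :=
          Finset.sum_le_sum fun i _ => keyi i
      _ = lam * ((∑ i, Ψ lam |Y i| ^ (p - 1) * |ϑ i|) - ∑ i, Ψ lam |Y i| ^ p) := by
          rw [← Finset.mul_sum, Finset.sum_sub_distrib]
      _ ≤ 0 := by
          rcases h0lam.lt_or_eq with hl | hl
          · have hg1 : g lam = 1 := hslack hl
            have hsum_eq : ∑ i, Ψ lam |Y i| ^ p = 1 := hg1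
            have hHold : ∑ i, Ψ lam |Y i| ^ (p - 1) * |ϑ i| ≤ 1 := by
              have hpq : (p / (p - 1)).HolderConjugate p :=
                ((Real.holderConjugate_iff_eq_conjExponent hp).2 rfl).symm
              have hH := Real.inner_le_Lp_mul_Lq_of_nonneg Finset.univ hpq
                (f := fun i => Ψ lam |Y i| ^ (p - 1)) (g := fun i => |ϑ i|)
                (fun i _ => Real.rpow_nonneg (hpsi0 i) _)
                (fun i _ => abs_nonneg _)
              have hfq : ∀ i, (Ψ lam |Y i| ^ (p - 1)) ^ (p / (p - 1)) =
                  Ψ lam |Y i| ^ p := by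
                intro i
                rw [← Real.rpow_mul (hpsi0 i)]
                congr 1
                field_simp
              simp only [hfq] at hH
              rw [hsum_eq, Real.one_rpow] at hH
              have hb2 : (∑ i, |ϑ i| ^ p) ^ (1 / p) ≤ 1 :=
                Real.rpow_le_one hϑnn hϑp (by positivity)
              calc ∑ i, Ψ lam |Y i| ^ (p - 1) * |ϑ i| ≤
                    1 * (∑ i, |ϑ i| ^ p) ^ (1 / p) := hH
                _ ≤ 1 * 1 := by rw [one_mul]; linarith [hb2]
                _ = 1 := by norm_num
            have hfac : (∑ i, Ψ lam |Y i| ^ (p - 1) * |ϑ i|) -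
                ∑ i, Ψ lam |Y i| ^ p ≤ 0 := by
              rw [hsum_eq]; linarith
            have := mul_le_mul_of_nonneg_left hfac h0lam
            simpa using this
          · rw [← hl, zero_mul]
  -- identify proj Y with θ
  obtain ⟨hmem', hmin⟩ := hproj Y
  have hexp : sqDist Y (proj Y) = sqDist Y θ + ∑ i, (θ i - proj Y i) ^ 2
      + 2 * ∑ i, (Y i - θ i) * (θ i - proj Y i) := by
    simp only [sqDist, Finset.mul_sum, ← Finset.sum_add_distrib]
    exact Finset.sum_congr rfl fun i _ => by ring
  have h1 : sqDist Y (proj Y) ≤ sqDist Y θ := hmin θ hθball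
  have h2 : ∑ i, (Y i - θ i) * (proj Y i - θ i) ≤ 0 := hvar _ hmem'
  have h2' : 0 ≤ ∑ i, (Y i - θ i) * (θ i - proj Y i) := by
    have hneg : ∑ i, (Y i - θ i) * (θ i - proj Y i)
        = -∑ i, (Y i - θ i) * (proj Y i - θ i) := by
      rw [← Finset.sum_neg_distrib]
      exact Finset.sum_congr rfl fun i _ => by ring
    rw [hneg]
    linarith
  have hkey : ∑ i, (θ i - proj Y i) ^ 2 ≤ 0 := by linarith
  have hprojθ : ∀ i, proj Y i = θ i := by
    intro i
    have hnn : ∀ j ∈ Finset.univ, (0:ℝ) ≤ (θ j - proj Y j) ^ 2 :=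
      fun _ _ => sq_nonneg _
    have hs0 : ∑ i, (θ i - proj Y i) ^ 2 = 0 :=
      le_antisymm hkey (Finset.sum_nonneg hnn)
    have hz := (Finset.sum_eq_zero_iff_of_nonneg hnn).1 hs0 i (Finset.mem_univ i)
    have := pow_eq_zero_iff (two_ne_zero) |>.1 hz
    linarith [sub_eq_zero.1 this]
  refine ⟨fun i => by rw [hprojθ i, hθ], ⟨lam, h0lam, fun i => ?_, ?_⟩⟩
  · rw [hprojθ i, habs i]
    refine ⟨?_, ?_, ?_⟩
    · rcases lt_trichotomy (Y i) 0 with h | h | h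
      · rw [hθ]; simp only []
        rw [Real.sign_of_neg h, Real.sign_of_neg (by
          have := psi_pos hp hΨ h0lam (abs_pos.2 h.ne : 0 < |Y i|)
          nlinarith)]
      · rw [hθ]; simp only []
        rw [h, Real.sign_zero, zero_mul, Real.sign_zero]
      · rw [hθ]; simp only []
        rw [Real.sign_of_pos h, Real.sign_of_pos (by
          have := psi_pos hp hΨ h0lam (abs_pos.2 h.ne' : 0 < |Y i|)
          nlinarith)]
    · intro h0
      rw [hθ]; simp only []
      rw [h0, Real.sign_zero, zero_mul]
    · linarith [hpsieq i]
  · have hsum : ∑ i, |proj Y i| ^ p = g lam := by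
      rw [← hsum_abs]
      exact Finset.sum_congr rfl fun i _ => by rw [hprojθ i]
    rw [hsum]
    rcases h0lam.lt_or_eq with hl | hl
    · rw [hslack hl]; ring
    · rw [← hl]; ring
end
end

section
/- Risk bound for the MLE under hard sparsity: for every d ≥ 1, every s ∈ {1, …, d}, and every σ > 0, the worst-case risk of the projection onto the set of s-sparse vectors satisfies R^MLE(B_0^d(s), σ) ≤ 48 · σ² · s · log(e·d/s). -/
open MeasureTheory ProbabilityTheory Real Filter Pointwise
open scoped ENNReal NNReal

noncomputable section

open Classical in
/-- The set `B_0^d(s)` of `s`-sparse vectors in `ℝ^d`. -/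
def sparseSet (d s : ℕ) : Set (Fin d → ℝ) :=
  {x | (Finset.univ.filter fun i => x i ≠ 0).card ≤ s}

lemma aux_scalar (y : ℝ) : y ≤ 4 / Real.exp 1 * Real.exp (y/4) := by
  have h := Real.add_one_le_exp (y/4 - 1)
  have h2 : Real.exp (y/4 - 1) = Real.exp (y/4) / Real.exp 1 := by
    rw [Real.exp_sub]
  have he : (0:ℝ) < Real.exp 1 := Real.exp_pos 1
  rw [h2] at h
  have := mul_le_mul_of_nonneg_left h (by norm_num : (0:ℝ) ≤ 4)
  calc y = 4 * (y/4 - 1 + 1) := by ring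
    _ ≤ 4 * (Real.exp (y/4) / Real.exp 1) := this
    _ = 4 / Real.exp 1 * Real.exp (y/4) := by ring

lemma map_eval_pi {d : ℕ} (i : Fin d) :
    (stdGaussian d).map (Function.eval i) = gaussianReal 0 1 := by
  ext s hs
  rw [Measure.map_apply (measurable_pi_apply i) hs]
  have : Function.eval i ⁻¹' s = Set.pi Set.univ (Function.update (fun _ : Fin d => (Set.univ : Set ℝ)) i s) := by
    rw [Set.eval_preimage]
  rw [this, _root_.stdGaussian, Measure.pi_pi]
  rw [Finset.prod_eq_single i]
  · simp
  · intro j _ hj; simp [Function.update_of_ne hj]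
  · simp

lemma lintegral_eval {d : ℕ} (i : Fin d) {g : ℝ → ℝ≥0∞} (hg : Measurable g) :
    ∫⁻ ξ, g (ξ i) ∂(stdGaussian d) = ∫⁻ x, g x ∂(gaussianReal 0 1) := by
  rw [← map_eval_pi i, lintegral_map hg (measurable_pi_apply i)]

lemma mgf_quarter :
    ∫⁻ x, ENNReal.ofReal (Real.exp (x^2/4)) ∂(gaussianReal 0 1)
      = ENNReal.ofReal (Real.sqrt 2) := by
  rw [gaussianReal_of_var_ne_zero 0 one_ne_zero,
    lintegral_withDensity_eq_lintegral_mul _ (measurable_gaussianPDF 0 1)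
      (by measurability)]
  have hpt : ∀ x : ℝ, (gaussianPDF 0 1 * fun x => ENNReal.ofReal (Real.exp (x^2/4))) x
      = ENNReal.ofReal ((Real.sqrt (2 * π))⁻¹ * Real.exp (-(4⁻¹:ℝ) * x^2)) := by
    intro x
    simp only [Pi.mul_apply, gaussianPDF, ← ENNReal.ofReal_mul (gaussianPDFReal_nonneg 0 1 x)]
    congr 1
    rw [gaussianPDFReal_def]
    simp only [NNReal.coe_one, mul_one, sub_zero]
    rw [mul_assoc, ← Real.exp_add]
    ring_nf
  simp_rw [hpt]
  rw [← ofReal_integral_eq_lintegral_ofReal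
      (((integrable_exp_neg_mul_sq (by norm_num : (0:ℝ) < 4⁻¹)).const_mul _))
      (Filter.Eventually.of_forall fun x => by positivity)]
  congr 1
  rw [integral_const_mul, integral_gaussian]
  have h4 : Real.sqrt (π / 4⁻¹) = Real.sqrt π * 2 := by
    rw [show π / (4:ℝ)⁻¹ = π * 4 by field_simp, Real.sqrt_mul pi_pos.le, show Real.sqrt 4 = 2 by
      rw [show (4:ℝ) = 2^2 by norm_num, Real.sqrt_sq (by norm_num)]]
  rw [h4, Real.sqrt_mul (by norm_num : (0:ℝ) ≤ 2) π]
  have hπ : 0 < Real.sqrt π := Real.sqrt_pos.2 pi_pos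
  have h2 : Real.sqrt 2 * Real.sqrt 2 = 2 := Real.mul_self_sqrt (by norm_num)
  field_simp
  nlinarith [Real.sqrt_pos.2 (show (0:ℝ) < 2 by norm_num)]

lemma pointwise_bound {d : ℕ} (s : ℕ) (σ : ℝ) (hσ : 0 < σ)
    (proj : (Fin d → ℝ) → Fin d → ℝ) (hproj : IsProjOn (sparseSet d s) proj)
    (θ : Fin d → ℝ) (hθ : θ ∈ sparseSet d s) (ξ : Fin d → ℝ) (t : ℝ) (ht : 0 ≤ t) :
    sqDist (proj (θ + σ • ξ)) θ ≤
      4*σ^2 * (2*s*t + 4/Real.exp 1 * Real.exp (-t/4) * ∑ i, Real.exp ((ξ i)^2/4)) := by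
  classical
  set y : Fin d → ℝ := θ + σ • ξ with hy
  obtain ⟨hw, hmin⟩ := hproj y
  set w : Fin d → ℝ := proj y with hwdef
  set v : Fin d → ℝ := fun i => w i - θ i with hv
  have h2 : sqDist y w ≤ sqDist y θ := hmin θ hθ
  have hyi : ∀ i, y i - w i = σ * ξ i - v i := by
    intro i; simp [hy, hv, Pi.add_apply, Pi.smul_apply, smul_eq_mul]; ring
  have hyi2 : ∀ i, y i - θ i = σ * ξ i := by
    intro i; simp [hy, Pi.add_apply, Pi.smul_apply, smul_eq_mul]
  have hkey : ∑ i, v i ^ 2 ≤ 2*σ * ∑ i, ξ i * v i := by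
    have e1 : sqDist y w = ∑ i, ((σ * ξ i)^2 - 2*σ*(ξ i * v i) + v i ^ 2) := by
      unfold sqDist
      refine Finset.sum_congr rfl fun i _ => ?_
      rw [hyi i]; ring
    have e2 : sqDist y θ = ∑ i, (σ * ξ i)^2 := by
      unfold sqDist
      refine Finset.sum_congr rfl fun i _ => ?_
      rw [hyi2 i]
    rw [e1, e2, Finset.sum_add_distrib, Finset.sum_sub_distrib, ← Finset.mul_sum] at h2
    linarith
  set S : Finset (Fin d) := Finset.univ.filter (fun i => v i ≠ 0) with hS
  have hScard : (S.card : ℝ) ≤ 2 * s := by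
    have hsub : S ⊆ (Finset.univ.filter fun i => w i ≠ 0) ∪
        (Finset.univ.filter fun i => θ i ≠ 0) := by
      intro i hi
      simp only [hS, Finset.mem_filter, Finset.mem_union, Finset.mem_univ, true_and] at *
      by_contra hcon
      push_neg at hcon
      refine hi ?_
      show w i - θ i = 0
      rw [hcon.1, hcon.2, sub_zero]
    have hws : (Finset.univ.filter fun i => w i ≠ 0).card ≤ s := by
      have := hw
      simp only [sparseSet, Set.mem_setOf_eq] at this
      convert this using 2
    have hθs : (Finset.univ.filter fun i => θ i ≠ 0).card ≤ s := by
      have := hθ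
      simp only [sparseSet, Set.mem_setOf_eq] at this
      convert this using 2
    have := (Finset.card_le_card hsub).trans
      ((Finset.card_union_le _ _).trans (add_le_add hws hθs))
    push_cast
    exact_mod_cast le_trans (Nat.cast_le.mpr this) (by push_cast; linarith)
  have hrestr1 : ∑ i, ξ i * v i = ∑ i ∈ S, ξ i * v i := by
    refine (Finset.sum_filter_of_ne fun i _ h => ?_).symm
    intro hv0; exact h (by rw [hv0, mul_zero])
  have hrestr2 : ∑ i, v i ^ 2 = ∑ i ∈ S, v i ^ 2 := by
    refine (Finset.sum_filter_of_ne fun i _ h => ?_).symm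
    intro hv0; exact h (by rw [hv0]; ring)
  have hcs_raw : (∑ i ∈ S, ξ i * v i)^2 ≤ (∑ i ∈ S, ξ i ^ 2) * (∑ i ∈ S, v i ^ 2) :=
    Finset.sum_mul_sq_le_sq_mul_sq S ξ v
  set P : ℝ := ∑ i, v i ^ 2 with hP
  set Q : ℝ := ∑ i ∈ S, ξ i ^ 2 with hQ
  set R : ℝ := ∑ i ∈ S, ξ i * v i with hR
  have hP0 : 0 ≤ P := Finset.sum_nonneg fun i _ => sq_nonneg _
  have hQ0 : 0 ≤ Q := Finset.sum_nonneg fun i _ => sq_nonneg _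
  have hcs : R ^ 2 ≤ Q * P := by rw [← hrestr2] at hcs_raw; exact hcs_raw
  have hkey' : P ≤ 2*σ*R := by rw [hrestr1] at hkey; exact hkey
  have hmain : P ≤ 4*σ^2*Q := by
    rcases eq_or_lt_of_le hP0 with h0 | h0
    · rw [← h0]; positivity
    · have hR0 : 0 ≤ 2*σ*R := le_trans hP0 hkey'
      have h1 : P^2 ≤ (2*σ*R)^2 := by nlinarith
      have h3 : (2*σ*R)^2 ≤ 4*σ^2*(Q*P) := by nlinarith
      have h4 : P * P ≤ (4*σ^2*Q) * P := by nlinarith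
      exact le_of_mul_le_mul_right h4 h0
  have hQbound : Q ≤ 2*s*t + 4/Real.exp 1 * Real.exp (-t/4) * ∑ i, Real.exp ((ξ i)^2/4) := by
    have hterm : ∀ i, ξ i ^ 2 ≤ t + 4/Real.exp 1 * Real.exp (-t/4) * Real.exp ((ξ i)^2/4) := by
      intro i
      have := aux_scalar (ξ i ^ 2 - t)
      have hexp : Real.exp ((ξ i ^ 2 - t)/4) = Real.exp (-t/4) * Real.exp ((ξ i)^2/4) := by
        rw [← Real.exp_add]; ring_nf
      rw [hexp] at this
      ring_nf at this ⊢
      linarith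
    calc Q ≤ ∑ i ∈ S, (t + 4/Real.exp 1 * Real.exp (-t/4) * Real.exp ((ξ i)^2/4)) :=
          Finset.sum_le_sum fun i _ => hterm i
      _ = S.card * t + 4/Real.exp 1 * Real.exp (-t/4) * ∑ i ∈ S, Real.exp ((ξ i)^2/4) := by
          rw [Finset.sum_add_distrib, Finset.sum_const, ← Finset.mul_sum, nsmul_eq_mul]
      _ ≤ 2*s*t + 4/Real.exp 1 * Real.exp (-t/4) * ∑ i, Real.exp ((ξ i)^2/4) := by
          have hsum_le : ∑ i ∈ S, Real.exp ((ξ i)^2/4) ≤ ∑ i, Real.exp ((ξ i)^2/4) :=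
            Finset.sum_le_sum_of_subset_of_nonneg (Finset.subset_univ S)
              (fun i _ _ => (Real.exp_pos _).le)
          have hc : 0 ≤ 4/Real.exp 1 * Real.exp (-t/4) := by positivity
          have := mul_le_mul_of_nonneg_left hsum_le hc
          nlinarith [mul_le_mul_of_nonneg_right hScard ht]
  have hsq : sqDist w θ = P := by
    unfold sqDist; rfl
  calc sqDist (proj y) θ = P := hsq
    _ ≤ 4*σ^2*Q := hmain
    _ ≤ _ := by
        have : 0 ≤ 4*σ^2 := by positivity
        exact mul_le_mul_of_nonneg_left hQbound this

set_option maxHeartbeats 1000000 in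
/-- Risk bound for the MLE under hard sparsity: for every `d ≥ 1`,
`s ∈ {1,…,d}` and `σ > 0`, `R^MLE(B_0^d(s), σ) ≤ 48·σ²·s·log(e·d/s)`. -/
theorem mle_risk_bound_hard_sparse (d : ℕ) (hd : 1 ≤ d) (s : ℕ) (hs1 : 1 ≤ s) (hs2 : s ≤ d)
    (σ : ℝ) (hσ : 0 < σ)
    (proj : (Fin d → ℝ) → Fin d → ℝ) (hproj : IsProjOn (sparseSet d s) proj)
    (hmeas : Measurable proj) :
    supRisk (sparseSet d s) proj σ ≤
      ENNReal.ofReal (48 * σ ^ 2 * s * Real.log (Real.exp 1 * d / s)) := by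
  have hprob : IsProbabilityMeasure (stdGaussian d) := by
    unfold _root_.stdGaussian; infer_instance
  have hs0 : (0:ℝ) < s := by exact_mod_cast hs1
  have hd0 : (0:ℝ) < d := by exact_mod_cast hd
  set t : ℝ := 4 * Real.log ((d:ℝ) / s) with htdef
  have hds1 : (1:ℝ) ≤ (d:ℝ)/s := by
    rw [le_div_iff₀ hs0, one_mul]
    exact_mod_cast hs2
  have hL0 : 0 ≤ Real.log ((d:ℝ)/s) := Real.log_nonneg hds1
  have ht0 : 0 ≤ t := by rw [htdef]; linarith
  have hexp_t : Real.exp (-t/4) = (s:ℝ) / d := by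
    rw [show -t/4 = -Real.log ((d:ℝ)/s) by rw [htdef]; ring, Real.exp_neg,
      Real.exp_log (by positivity), inv_div]
  set A : ℝ := 4*σ^2*(2*s*t) with hAdef
  set B : ℝ := 4*σ^2*(4/Real.exp 1 * Real.exp (-t/4)) with hBdef
  have hA0 : 0 ≤ A := by
    rw [hAdef]
    apply mul_nonneg (by positivity)
    apply mul_nonneg (by positivity) ht0
  have hB0 : 0 ≤ B := by rw [hBdef]; positivity
  have hmeasg : Measurable fun x : ℝ => ENNReal.ofReal (Real.exp (x^2/4)) := by
    measurability
  unfold supRisk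
  refine iSup₂_le fun θ hθ => ?_
  have hrisk : risk proj σ θ ≤
      ∫⁻ ξ, ENNReal.ofReal (A + B * ∑ i, Real.exp ((ξ i)^2/4)) ∂(stdGaussian d) := by
    unfold risk
    refine lintegral_mono fun ξ => ENNReal.ofReal_le_ofReal ?_
    refine le_trans (pointwise_bound s σ hσ proj hproj θ hθ ξ t ht0) (le_of_eq ?_)
    rw [hAdef, hBdef]; ring
  have hcalc : ∫⁻ ξ, ENNReal.ofReal (A + B * ∑ i, Real.exp ((ξ i)^2/4)) ∂(stdGaussian d)
      = ENNReal.ofReal A + ENNReal.ofReal B * ((d:ℝ≥0∞) * ENNReal.ofReal (Real.sqrt 2)) := by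
    have hpt : ∀ ξ : Fin d → ℝ, ENNReal.ofReal (A + B * ∑ i, Real.exp ((ξ i)^2/4))
        = ENNReal.ofReal A + ENNReal.ofReal B * ∑ i, ENNReal.ofReal (Real.exp ((ξ i)^2/4)) := by
      intro ξ
      rw [ENNReal.ofReal_add hA0 (by positivity), ENNReal.ofReal_mul hB0,
        ENNReal.ofReal_sum_of_nonneg (fun i _ => (Real.exp_pos _).le)]
    simp_rw [hpt]
    have hmeas_sum : Measurable fun ξ : Fin d → ℝ =>
        ∑ i : Fin d, ENNReal.ofReal (Real.exp ((ξ i)^2/4)) :=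
      Finset.measurable_sum Finset.univ fun i _ => hmeasg.comp (measurable_pi_apply i)
    rw [lintegral_add_left measurable_const, lintegral_const, measure_univ, mul_one,
      lintegral_const_mul _ hmeas_sum]
    congr 2
    rw [lintegral_finset_sum (μ := stdGaussian d) Finset.univ
      (f := fun (i : Fin d) (ξ : Fin d → ℝ) => ENNReal.ofReal (Real.exp ((ξ i)^2/4)))
      (fun i _ => hmeasg.comp (measurable_pi_apply i))]
    have hone : ∀ i : Fin d,
        ∫⁻ ξ : Fin d → ℝ, ENNReal.ofReal (Real.exp ((ξ i)^2/4)) ∂(stdGaussian d)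
          = ENNReal.ofReal (Real.sqrt 2) := fun i =>
      (lintegral_eval i hmeasg).trans mgf_quarter
    simp_rw [hone]
    rw [Finset.sum_const, Finset.card_univ, Fintype.card_fin, nsmul_eq_mul]
  refine le_trans hrisk (le_trans (le_of_eq hcalc) ?_)
  rw [show ((d:ℝ≥0∞)) = ENNReal.ofReal (d:ℝ) by simp,
    ← ENNReal.ofReal_mul (by positivity : (0:ℝ) ≤ (d:ℝ)),
    ← ENNReal.ofReal_mul hB0, ← ENNReal.ofReal_add hA0 (by positivity)]
  apply ENNReal.ofReal_le_ofReal
  -- real arithmetic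
  have hlog : Real.log (Real.exp 1 * d / s) = 1 + Real.log ((d:ℝ)/s) := by
    rw [show Real.exp 1 * (d:ℝ) / s = Real.exp 1 * ((d:ℝ)/s) by ring,
      Real.log_mul (Real.exp_ne_zero 1) (by positivity), Real.log_exp]
  rw [hlog, hAdef, hBdef, hexp_t, htdef]
  have h4 : Real.sqrt 4 = 2 := by
    rw [show (4:ℝ) = 2^2 by norm_num, Real.sqrt_sq (by norm_num : (0:ℝ) ≤ 2)]
  have hsqrt2 : Real.sqrt 2 ≤ 2 := by
    calc Real.sqrt 2 ≤ Real.sqrt 4 := Real.sqrt_le_sqrt (by norm_num)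
      _ = 2 := h4
  have he1 : 1 ≤ Real.exp 1 := Real.one_le_exp (by norm_num)
  have hB' : 4*σ^2*(4/Real.exp 1 * ((s:ℝ)/d)) * ((d:ℝ) * Real.sqrt 2) ≤ 32*σ^2*s := by
    have hd' : (4:ℝ)/Real.exp 1 ≤ 4 := by
      rw [div_le_iff₀ (Real.exp_pos 1)]
      nlinarith
    have : 4*σ^2*(4/Real.exp 1 * ((s:ℝ)/d)) * ((d:ℝ) * Real.sqrt 2)
        = (4/Real.exp 1) * (4*σ^2*(s:ℝ)*Real.sqrt 2) := by
      field_simp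
    rw [this]
    nlinarith [sq_nonneg σ, mul_nonneg (sq_nonneg σ) hs0.le, Real.sqrt_nonneg 2,
      mul_nonneg (mul_nonneg (sq_nonneg σ) hs0.le) (Real.sqrt_nonneg 2)]
  set L := Real.log ((d:ℝ)/s)
  have hterm1 : 4*σ^2*(2*(s:ℝ)*(4*L)) = 32*σ^2*s*L := by ring
  rw [hterm1]
  have hσs : 0 ≤ σ^2*(s:ℝ) := by positivity
  nlinarith [mul_nonneg hσs hL0]
end
end

section
/- Risk bound for the MLE under weak sparsity: for every p ∈ (0, 1), every d ≥ 1, and every σ > 0, the worst-case risk of the projection onto the unit ℓp ball satisfies R^MLE(B_p^d, σ) ≤ 540 · r(σ, p, d), where r(σ, p, d) = 1 if σ ≥ 1/√(1 + log d); r(σ, p, d) = (σ² log(e·d·σ^p))^{1−p/2} if d^{−1/p} ≤ σ ≤ 1/√(1 + log d); and r(σ, p, d) = σ²d if σ ≤ d^{−1/p}. -/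
open MeasureTheory ProbabilityTheory Real Filter Pointwise
open scoped ENNReal NNReal

noncomputable section

lemma sq_le_two_exp (m : ℝ) : m^2 ≤ 2 * Real.exp (m^2/4) := by
  have h := Real.add_one_le_exp (m^2/8)
  have h2 : (m^2/8 + 1)^2 ≤ (Real.exp (m^2/8))^2 := by
    have : 0 ≤ m^2/8 + 1 := by positivity
    nlinarith
  have h3 : Real.exp (m^2/8) * Real.exp (m^2/8) = Real.exp (m^2/4) := by
    rw [← Real.exp_add]; ring_nf
  nlinarith [sq_nonneg (m^2 - 8)]

lemma ptwise_bound {l : ℝ} (hl : 0 ≤ l) (x : ℝ) :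
    (max (|x| - l) 0)^2 * Real.exp (-x^2/2) ≤
      2 * Real.exp (-l^2/2) * (Real.exp (-(1/4)*(x-l)^2) + Real.exp (-(1/4)*(x+l)^2)) := by
  rcases le_or_gt (|x|) l with h | h
  · rw [max_eq_right (by linarith)]
    have h1 := (Real.exp_pos (-(1/4)*(x-l)^2)).le
    have h2 := (Real.exp_pos (-(1/4)*(x+l)^2)).le
    have h3 := (Real.exp_pos (-l^2/2)).le
    nlinarith
  · set m := |x| - l with hm
    have hm0 : 0 < m := by simp only [hm]; linarith
    rw [max_eq_left (by linarith)]
    have habs : |x| = m + l := by simp [hm]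
    have hx2 : x^2 = (m + l)^2 := by rw [← sq_abs x, habs]
    have hexp1 : Real.exp (-x^2/2) ≤ Real.exp (-l^2/2) * Real.exp (-m^2/2) := by
      rw [← Real.exp_add]
      apply Real.exp_le_exp.2
      rw [hx2]; nlinarith [mul_nonneg hm0.le hl]
    have hkey : m^2 * Real.exp (-m^2/2) ≤ 2 * Real.exp (-(1/4)*m^2) := by
      have e1 : Real.exp (-m^2/2) * Real.exp (m^2/4) = Real.exp (-(1/4)*m^2) := by
        rw [← Real.exp_add]; ring_nf
      calc m^2 * Real.exp (-m^2/2) ≤ (2 * Real.exp (m^2/4)) * Real.exp (-m^2/2) :=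
            mul_le_mul_of_nonneg_right (sq_le_two_exp m) (Real.exp_pos _).le
        _ = 2 * (Real.exp (-m^2/2) * Real.exp (m^2/4)) := by ring
        _ = 2 * Real.exp (-(1/4)*m^2) := by rw [e1]
    have hsum : Real.exp (-(1/4)*m^2) ≤
        Real.exp (-(1/4)*(x-l)^2) + Real.exp (-(1/4)*(x+l)^2) := by
      rcases le_or_gt 0 x with hx | hx
      · have : x - l = m := by rw [hm, abs_of_nonneg hx]
        rw [this]
        nlinarith [(Real.exp_pos (-(1/4)*(x+l)^2)).le]
      · have : (x + l)^2 = m^2 := by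
          have : x + l = -m := by rw [hm, abs_of_neg hx]; ring
          rw [this]; ring
        rw [← this]
        nlinarith [(Real.exp_pos (-(1/4)*(x-l)^2)).le]
    calc m^2 * Real.exp (-x^2/2) ≤ m^2 * (Real.exp (-l^2/2) * Real.exp (-m^2/2)) :=
          mul_le_mul_of_nonneg_left hexp1 (sq_nonneg m)
      _ = Real.exp (-l^2/2) * (m^2 * Real.exp (-m^2/2)) := by ring
      _ ≤ Real.exp (-l^2/2) * (2 * Real.exp (-(1/4)*m^2)) :=
          mul_le_mul_of_nonneg_left hkey (Real.exp_pos _).le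
      _ = 2 * Real.exp (-l^2/2) * Real.exp (-(1/4)*m^2) := by ring
      _ ≤ 2 * Real.exp (-l^2/2) * (Real.exp (-(1/4)*(x-l)^2) + Real.exp (-(1/4)*(x+l)^2)) := by
          apply mul_le_mul_of_nonneg_left hsum
          positivity


lemma meas_g (l : ℝ) : Measurable fun x : ℝ => ENNReal.ofReal ((max (|x| - l) 0)^2) := by
  fun_prop

lemma gauss_moment {l : ℝ} (hl : 0 ≤ l) :
    ∫⁻ x, ENNReal.ofReal ((max (|x| - l) 0)^2) ∂(gaussianReal 0 1) ≤
      ENNReal.ofReal (6 * Real.exp (-l^2/2)) := by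
  set G : ℝ → ℝ := fun x =>
    (Real.sqrt (2*π))⁻¹ *
      (2 * Real.exp (-l^2/2) * (Real.exp (-(1/4)*(x-l)^2) + Real.exp (-(1/4)*(x+l)^2))) with hG
  have hpdf : ∀ x : ℝ, gaussianPDFReal 0 1 x = (Real.sqrt (2*π))⁻¹ * Real.exp (-x^2/2) := by
    intro x
    simp [gaussianPDFReal]
  have hGint : Integrable G := by
    apply Integrable.const_mul
    apply Integrable.const_mul
    exact ((integrable_exp_neg_mul_sq (by norm_num : (0:ℝ) < 1/4)).comp_sub_right l).add
      ((integrable_exp_neg_mul_sq (by norm_num : (0:ℝ) < 1/4)).comp_add_right l)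
  have hGnn : 0 ≤ᵐ[(volume : Measure ℝ)] G := by
    filter_upwards with x
    simp only [hG]
    positivity
  have step1 : ∫⁻ x, ENNReal.ofReal ((max (|x| - l) 0)^2) ∂(gaussianReal 0 1) =
      ∫⁻ x, ENNReal.ofReal (gaussianPDFReal 0 1 x * (max (|x| - l) 0)^2) := by
    rw [gaussianReal_of_var_ne_zero 0 one_ne_zero,
      lintegral_withDensity_eq_lintegral_mul _ (measurable_gaussianPDF 0 1) (meas_g l)]
    congr 1
    ext x
    simp only [Pi.mul_apply, gaussianPDF]
    rw [← ENNReal.ofReal_mul (gaussianPDFReal_nonneg 0 1 x)]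
  rw [step1]
  have step2 : ∫⁻ x, ENNReal.ofReal (gaussianPDFReal 0 1 x * (max (|x| - l) 0)^2) ≤
      ∫⁻ x, ENNReal.ofReal (G x) := by
    apply lintegral_mono
    intro x
    apply ENNReal.ofReal_le_ofReal
    rw [hpdf x]
    simp only [hG]
    calc (Real.sqrt (2*π))⁻¹ * Real.exp (-x^2/2) * (max (|x| - l) 0)^2
        = (Real.sqrt (2*π))⁻¹ * ((max (|x| - l) 0)^2 * Real.exp (-x^2/2)) := by ring
      _ ≤ _ := by
          apply mul_le_mul_of_nonneg_left (ptwise_bound hl x)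
          positivity
  refine step2.trans ?_
  rw [← ofReal_integral_eq_lintegral_ofReal hGint hGnn]
  apply ENNReal.ofReal_le_ofReal
  have hgauss : ∀ c : ℝ, ∫ x : ℝ, Real.exp (-(1/4)*(x - c)^2) = 2 * Real.sqrt π := by
    intro c
    rw [show (fun x : ℝ => Real.exp (-(1/4)*(x - c)^2)) = fun x : ℝ =>
      (fun y : ℝ => Real.exp (-(1/4)*y^2)) (x - c) from rfl]
    rw [integral_sub_right_eq_self (fun y : ℝ => Real.exp (-(1/4)*y^2)) c]
    rw [integral_gaussian]
    rw [show π / (1/4) = 4 * π by ring, show (4:ℝ)*π = 2^2*π by norm_num,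
      Real.sqrt_mul (by positivity), Real.sqrt_sq (by norm_num)]
  have hgauss2 : ∀ c : ℝ, ∫ x : ℝ, Real.exp (-(1/4)*(x + c)^2) = 2 * Real.sqrt π := by
    intro c
    have := hgauss (-c)
    simpa [sub_neg_eq_add] using this
  have hInt : ∫ x, G x = (Real.sqrt (2*π))⁻¹ * (2 * Real.exp (-l^2/2) * (4 * Real.sqrt π)) := by
    simp only [hG]
    rw [integral_const_mul, integral_const_mul,
      MeasureTheory.integral_add
        ((integrable_exp_neg_mul_sq (by norm_num : (0:ℝ) < 1/4)).comp_sub_right l)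
        ((integrable_exp_neg_mul_sq (by norm_num : (0:ℝ) < 1/4)).comp_add_right l)]
    rw [hgauss l, hgauss2 l]
    ring
  rw [hInt]
  have hs2 : Real.sqrt (2*π) = Real.sqrt 2 * Real.sqrt π := Real.sqrt_mul (by norm_num) π
  have hπ : 0 < Real.sqrt π := Real.sqrt_pos.2 Real.pi_pos
  have h2 : 0 < Real.sqrt 2 := Real.sqrt_pos.2 (by norm_num)
  have hcoef : (Real.sqrt (2*π))⁻¹ * (4 * Real.sqrt π) ≤ 3 := by
    rw [hs2, mul_inv]
    have he : (Real.sqrt 2)⁻¹ * (Real.sqrt π)⁻¹ * (4 * Real.sqrt π) = 4 * (Real.sqrt 2)⁻¹ := by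
      field_simp
    rw [he, ← div_eq_mul_inv, div_le_iff₀ h2]
    nlinarith [Real.sq_sqrt (show (0:ℝ) ≤ 2 by norm_num), Real.sqrt_nonneg 2]
  calc (Real.sqrt (2*π))⁻¹ * (2 * Real.exp (-l^2/2) * (4 * Real.sqrt π))
      = (2 * Real.exp (-l^2/2)) * ((Real.sqrt (2*π))⁻¹ * (4 * Real.sqrt π)) := by ring
    _ ≤ (2 * Real.exp (-l^2/2)) * 3 := by
        apply mul_le_mul_of_nonneg_left hcoef
        positivity
    _ = 6 * Real.exp (-l^2/2) := by ring

lemma aux_lintegral_eval {d : ℕ} (i : Fin d) (f : ℝ → ℝ≥0∞) (hf : Measurable f) :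
    ∫⁻ x, f (x i) ∂(Measure.pi fun _ : Fin d => gaussianReal 0 1) =
      ∫⁻ t, f t ∂(gaussianReal 0 1) := by
  have hmap : (Measure.pi fun _ : Fin d => gaussianReal 0 1).map (Function.eval i) =
      gaussianReal 0 1 := by
    apply Measure.ext
    intro s hs
    rw [Measure.map_apply (measurable_pi_apply i) hs]
    rw [show Function.eval i ⁻¹' s =
        Set.pi Set.univ (Function.update (fun _ : Fin d => (Set.univ : Set ℝ)) i s) from
      Set.eval_preimage, Measure.pi_pi]
    calc ∏ j, (gaussianReal 0 1) (Function.update (fun _ : Fin d => (Set.univ : Set ℝ)) i s j)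
        = ∏ j, if j = i then (gaussianReal 0 1) s else 1 := by
          apply Finset.prod_congr rfl
          intro j _
          by_cases hj : j = i <;> simp [Function.update_apply, hj]
      _ = (gaussianReal 0 1) s := by simp
  conv_rhs => rw [← hmap]
  exact (lintegral_map hf (measurable_pi_apply i)).symm

lemma l1_interp {d : ℕ} (p : ℝ) (hp0 : 0 < p) (hp1 : p < 1) (h : Fin d → ℝ) :
    ∑ i, |h i| ≤ (∑ i, |h i| ^ p) ^ ((2-p)⁻¹) * (∑ i, (h i)^2) ^ ((1-p)/(2-p)) := by
  have h2p : (0:ℝ) < 2 - p := by linarith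
  have h1p : (0:ℝ) < 1 - p := by linarith
  have hconj : (2-p).HolderConjugate ((2-p)/(1-p)) := by
    rw [Real.holderConjugate_iff]
    constructor
    · linarith
    · rw [inv_div, inv_eq_one_div, ← add_div, div_eq_one_iff_eq h2p.ne']
      ring
  set a : ℝ := p/(2-p) with ha
  set b : ℝ := 2*(1-p)/(2-p) with hb
  have key := Real.inner_le_Lp_mul_Lq_of_nonneg Finset.univ hconj
    (f := fun i => |h i| ^ a) (g := fun i => |h i| ^ b)
    (fun i _ => by positivity) (fun i _ => by positivity)
  have e1 : ∀ i : Fin d, |h i| ^ a * |h i| ^ b = |h i| := by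
    intro i
    have hab : a + b = 1 := by rw [ha, hb]; field_simp; ring
    rw [← Real.rpow_add' (abs_nonneg _) (by rw [hab]; norm_num), hab, Real.rpow_one]
  have e2 : ∀ i : Fin d, (|h i| ^ a) ^ (2-p) = |h i| ^ p := by
    intro i
    rw [← Real.rpow_mul (abs_nonneg _), show a * (2-p) = p by rw [ha]; field_simp]
  have e3 : ∀ i : Fin d, (|h i| ^ b) ^ ((2-p)/(1-p)) = (h i)^2 := by
    intro i
    rw [← Real.rpow_mul (abs_nonneg _), show b * ((2-p)/(1-p)) = 2 by rw [hb]; field_simp]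
    rw [show ((2:ℝ)) = ((2:ℕ):ℝ) by norm_num, Real.rpow_natCast, sq_abs]
  simp only [e1, e2, e3] at key
  rw [one_div, show 1/((2-p)/(1-p)) = (1-p)/(2-p) by rw [one_div_div]] at key
  exact key


lemma mem_ball_sum {d : ℕ} {p : ℝ} (hp0 : 0 < p) {x : Fin d → ℝ} (hx : x ∈ lpBall d p) :
    ∑ i, |x i| ^ p ≤ 1 := by
  have hs : (0:ℝ) ≤ ∑ i, |x i| ^ p :=
    Finset.sum_nonneg fun i _ => Real.rpow_nonneg (abs_nonneg _) p
  have hx' : (∑ i, |x i| ^ p) ^ (1/p) ≤ 1 := hx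
  calc ∑ i, |x i| ^ p = ((∑ i, |x i| ^ p) ^ (1/p)) ^ p := by
        rw [← Real.rpow_mul hs, one_div, inv_mul_cancel₀ hp0.ne', Real.rpow_one]
    _ ≤ 1 := Real.rpow_le_one (Real.rpow_nonneg hs _) hx' hp0.le

lemma rpow_sub_le {p : ℝ} (hp0 : 0 < p) (hp1 : p < 1) (x y : ℝ) :
    |x - y| ^ p ≤ |x| ^ p + |y| ^ p := by
  have h1 : |x - y| ^ p ≤ (|x| + |y|) ^ p :=
    Real.rpow_le_rpow (abs_nonneg _) (abs_sub _ _) hp0.le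
  refine h1.trans ?_
  have h2 := NNReal.rpow_add_le_add_rpow (Real.toNNReal |x|) (Real.toNNReal |y|) hp0.le hp1.le
  have e : ((Real.toNNReal |x| + Real.toNNReal |y| : ℝ≥0) : ℝ) = |x| + |y| := by
    simp [Real.coe_toNNReal, abs_nonneg]
  calc (|x| + |y|) ^ p = (((Real.toNNReal |x| + Real.toNNReal |y| : ℝ≥0) : ℝ)) ^ p := by rw [e]
    _ = (((Real.toNNReal |x| + Real.toNNReal |y|) ^ p : ℝ≥0) : ℝ) := by
        rw [← NNReal.coe_rpow]
    _ ≤ (((Real.toNNReal |x|) ^ p + (Real.toNNReal |y|) ^ p : ℝ≥0) : ℝ) := by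
        exact_mod_cast h2
    _ = |x| ^ p + |y| ^ p := by
        push_cast [NNReal.coe_rpow, Real.coe_toNNReal _ (abs_nonneg _)]
        ring

lemma key_det {d : ℕ} {p σ l : ℝ} (hp0 : 0 < p) (hp1 : p < 1) (hσ : 0 < σ) (hl : 0 ≤ l)
    {proj : (Fin d → ℝ) → Fin d → ℝ} (hproj : IsProjOn (lpBall d p) proj)
    {θ : Fin d → ℝ} (hθ : θ ∈ lpBall d p) (ξ : Fin d → ℝ) :
    sqDist (proj (θ + σ • ξ)) θ ≤
      2 * (4*σ*l)^(2-p) + 16*σ^2 * ∑ i, (max (|ξ i| - l) 0)^2 := by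
  set y : Fin d → ℝ := θ + σ • ξ with hy
  set η : Fin d → ℝ := proj y with hη
  set h : Fin d → ℝ := fun i => η i - θ i with hh
  set m : Fin d → ℝ := fun i => max (|ξ i| - l) 0 with hm
  have h2p : (0:ℝ) < 2 - p := by linarith
  have hmnn : ∀ i, 0 ≤ m i := fun i => le_max_right _ _
  set S2 : ℝ := ∑ i, (h i)^2 with hS2
  set W : ℝ := Real.sqrt (∑ i, (m i)^2) with hW
  set r : ℝ := Real.sqrt S2 with hr
  have hS2nn : 0 ≤ S2 := Finset.sum_nonneg fun i _ => sq_nonneg _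
  have hWnn : 0 ≤ W := Real.sqrt_nonneg _
  have hrnn : 0 ≤ r := Real.sqrt_nonneg _
  have hr2 : r^2 = S2 := Real.sq_sqrt hS2nn
  have hW2 : W^2 = ∑ i, (m i)^2 := Real.sq_sqrt (Finset.sum_nonneg fun i _ => sq_nonneg _)
  -- goal in terms of S2
  have hgoal_eq : sqDist (proj y) θ = S2 := by
    simp only [sqDist, hS2, hh, hη]
  rw [hgoal_eq]
  -- nonnegativity of goal pieces
  have hterm1 : (0:ℝ) ≤ 2 * (4*σ*l)^(2-p) := by positivity
  have hterm2 : (0:ℝ) ≤ 16*σ^2 * ∑ i, (m i)^2 := by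
    have := Finset.sum_nonneg (fun i (_ : i ∈ Finset.univ) => sq_nonneg (m i))
    positivity
  -- basic inequality
  have hbasic : S2 ≤ 2*σ*∑ i, ξ i * h i := by
    have hmin := (hproj y).2 θ hθ
    simp only [sqDist] at hmin
    have ey : ∀ i, y i - η i = σ * ξ i - h i := by
      intro i; simp only [hy, hh, Pi.add_apply, Pi.smul_apply, smul_eq_mul]; ring
    have ey2 : ∀ i, y i - θ i = σ * ξ i := by
      intro i; simp only [hy, Pi.add_apply, Pi.smul_apply, smul_eq_mul]; ring
    have e1 : ∑ i, (y i - η i)^2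
        = ∑ i, (σ*ξ i)^2 - 2*σ*(∑ i, ξ i * h i) + S2 := by
      rw [Finset.mul_sum, ← Finset.sum_sub_distrib, hS2, ← Finset.sum_add_distrib]
      apply Finset.sum_congr rfl
      intro i _
      rw [ey i]; ring
    have e2 : ∑ i, (y i - θ i)^2 = ∑ i, (σ*ξ i)^2 := by
      apply Finset.sum_congr rfl
      intro i _
      rw [ey2 i]
    rw [e1, e2] at hmin
    linarith
  -- bound the inner product
  have hinner : ∑ i, ξ i * h i ≤ l * (∑ i, |h i|) + W * r := by
    have hpt : ∀ i, ξ i * h i ≤ l * |h i| + m i * |h i| := by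
      intro i
      have h1 : ξ i * h i ≤ |ξ i| * |h i| := by
        calc ξ i * h i ≤ |ξ i * h i| := le_abs_self _
          _ = |ξ i| * |h i| := abs_mul _ _
      have h2 : |ξ i| ≤ l + m i := by
        have := le_max_left (|ξ i| - l) 0
        simp only [hm]; linarith
      calc ξ i * h i ≤ |ξ i| * |h i| := h1
        _ ≤ (l + m i) * |h i| := mul_le_mul_of_nonneg_right h2 (abs_nonneg _)
        _ = l * |h i| + m i * |h i| := by ring
    calc ∑ i, ξ i * h i ≤ ∑ i, (l * |h i| + m i * |h i|) := Finset.sum_le_sum fun i _ => hpt i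
      _ = l * (∑ i, |h i|) + ∑ i, m i * |h i| := by
          rw [Finset.sum_add_distrib, Finset.mul_sum]
      _ ≤ l * (∑ i, |h i|) + W * r := by
          have hcs := Finset.sum_mul_sq_le_sq_mul_sq Finset.univ m (fun i => |h i|)
          have habs : ∑ i, (|h i|)^2 = S2 := by
            rw [hS2]; apply Finset.sum_congr rfl; intro i _; rw [sq_abs]
          rw [habs] at hcs
          have hnn : 0 ≤ ∑ i, m i * |h i| :=
            Finset.sum_nonneg fun i _ => mul_nonneg (hmnn i) (abs_nonneg _)
          have : ∑ i, m i * |h i| ≤ Real.sqrt ((∑ i, (m i)^2) * S2) := by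
            rw [← Real.sqrt_sq hnn]
            exact Real.sqrt_le_sqrt hcs
          rw [Real.sqrt_mul (Finset.sum_nonneg fun i _ => sq_nonneg _), ← hW, ← hr] at this
          linarith
  -- lp mass of h
  have hSp : ∑ i, |h i| ^ p ≤ 2 := by
    have hsub : ∀ i, |h i| ^ p ≤ |η i| ^ p + |θ i| ^ p := fun i => rpow_sub_le hp0 hp1 _ _
    calc ∑ i, |h i| ^ p ≤ ∑ i, (|η i| ^ p + |θ i| ^ p) := Finset.sum_le_sum fun i _ => hsub i
      _ = (∑ i, |η i| ^ p) + ∑ i, |θ i| ^ p := Finset.sum_add_distrib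
      _ ≤ 1 + 1 := add_le_add (mem_ball_sum hp0 (hproj y).1) (mem_ball_sum hp0 hθ)
      _ = 2 := by norm_num
  -- l1 interpolation
  have hl1 : ∑ i, |h i| ≤ 2 ^ ((2-p)⁻¹) * S2 ^ ((1-p)/(2-p)) := by
    refine (l1_interp p hp0 hp1 h).trans ?_
    apply mul_le_mul_of_nonneg_right _ (Real.rpow_nonneg hS2nn _)
    exact Real.rpow_le_rpow (Finset.sum_nonneg fun i _ => Real.rpow_nonneg (abs_nonneg _) _)
      hSp (by positivity)
  -- combine
  set T1 : ℝ := 2*σ*(l * ∑ i, |h i|) with hT1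
  set T2 : ℝ := 2*σ*(W * r) with hT2
  have hcomb : S2 ≤ T1 + T2 := by
    have := mul_le_mul_of_nonneg_left hinner (by linarith : (0:ℝ) ≤ 2*σ)
    rw [mul_add] at this
    exact hbasic.trans this
  rcases le_total T1 T2 with hc | hc
  · -- S2 ≤ 2 T2 = 4 σ W r, so r ≤ 4σW, S2 ≤ 16 σ² W²
    have hS2le : S2 ≤ 4*σ*W*r := by
      have e2 : 4*σ*W*r = 2*σ*(W*r) + 2*σ*(W*r) := by ring
      rw [e2]; rw [hT1, hT2] at hc hcomb; linarith
    have hfin : S2 ≤ 16*σ^2*(W^2) := by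
      rcases eq_or_lt_of_le hrnn with hr0 | hr0
      · have : S2 = 0 := by rw [← hr2, ← hr0]; ring
        rw [this]; positivity
      · have hrle : r ≤ 4*σ*W := by
          have : r * r ≤ (4*σ*W) * r := by rw [← sq] at *; nlinarith [hr2]
          exact le_of_mul_le_mul_right this hr0
        calc S2 = r^2 := hr2.symm
          _ ≤ (4*σ*W)^2 := by nlinarith
          _ = 16*σ^2*W^2 := by ring
    rw [hW2] at hfin
    linarith
  · -- S2 ≤ 2 T1
    have hS2le : S2 ≤ 4*σ*l*(∑ i, |h i|) := by
      have e2 : 4*σ*l*(∑ i, |h i|) = 2*σ*(l*(∑ i, |h i|)) + 2*σ*(l*(∑ i, |h i|)) := by ring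
      rw [e2]; rw [hT1, hT2] at hc hcomb; linarith
    set c : ℝ := (1-p)/(2-p) with hc'
    set K : ℝ := 4*σ*l*2^((2-p)⁻¹) with hK
    have hKnn : 0 ≤ K := by positivity
    have hS2K : S2 ≤ K * S2 ^ c := by
      calc S2 ≤ 4*σ*l*(∑ i, |h i|) := hS2le
        _ ≤ 4*σ*l*(2 ^ ((2-p)⁻¹) * S2 ^ c) := by
            apply mul_le_mul_of_nonneg_left hl1 (by positivity)
        _ = K * S2 ^ c := by rw [hK]; ring
    have hfin : S2 ≤ 2*(4*σ*l)^(2-p) := by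
      rcases eq_or_lt_of_le hS2nn with hS0 | hS0
      · rw [← hS0]; positivity
      · -- divide: S2^(1-c) ≤ K
        have hsum : (2-p)⁻¹ + c = 1 := by
          rw [hc', inv_eq_one_div, ← add_div, div_eq_one_iff_eq h2p.ne']
          ring
        have hsplit : S2 ^ ((2-p)⁻¹) * S2 ^ c = S2 := by
          rw [← Real.rpow_add hS0, hsum, Real.rpow_one]
        have hcpos : (0:ℝ) < S2 ^ c := Real.rpow_pos_of_pos hS0 _
        have hdiv : S2 ^ ((2-p)⁻¹) ≤ K := by
          have h' : S2 ^ ((2-p)⁻¹) * S2 ^ c ≤ K * S2 ^ c := by rw [hsplit]; exact hS2K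
          exact le_of_mul_le_mul_right h' hcpos
        have : (S2 ^ ((2-p)⁻¹)) ^ (2-p) ≤ K ^ (2-p) :=
          Real.rpow_le_rpow (Real.rpow_nonneg hS2nn _) hdiv h2p.le
        rw [← Real.rpow_mul hS2nn, inv_mul_cancel₀ h2p.ne', Real.rpow_one] at this
        calc S2 ≤ K ^ (2-p) := this
          _ = (4*σ*l)^(2-p) * (2^((2-p)⁻¹))^(2-p) := by
              rw [hK, Real.mul_rpow (by positivity) (by positivity)]
          _ = (4*σ*l)^(2-p) * 2 := by
              rw [← Real.rpow_mul (by norm_num : (0:ℝ) ≤ 2), inv_mul_cancel₀ h2p.ne',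
                Real.rpow_one]
          _ = 2*(4*σ*l)^(2-p) := by ring
    linarith


instance (d : ℕ) : IsProbabilityMeasure (stdGaussian d) := by
  unfold _root_.stdGaussian; infer_instance

lemma meas_coord {d : ℕ} (l : ℝ) (i : Fin d) :
    Measurable fun ξ : Fin d → ℝ => ENNReal.ofReal ((max (|ξ i| - l) 0)^2) := by
  fun_prop

lemma risk_le_bound {d : ℕ} {p σ l : ℝ} (hp0 : 0 < p) (hp1 : p < 1) (hσ : 0 < σ) (hl : 0 ≤ l)
    {proj : (Fin d → ℝ) → Fin d → ℝ} (hproj : IsProjOn (lpBall d p) proj)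
    {θ : Fin d → ℝ} (hθ : θ ∈ lpBall d p) :
    risk proj σ θ ≤
      ENNReal.ofReal (2 * (4*σ*l)^(2-p) + 96 * σ^2 * d * Real.exp (-l^2/2)) := by
  have hC1 : (0:ℝ) ≤ 2 * (4*σ*l)^(2-p) := by positivity
  have step1 : risk proj σ θ ≤
      ∫⁻ ξ, (ENNReal.ofReal (2 * (4*σ*l)^(2-p)) +
        ENNReal.ofReal (16*σ^2) * ∑ i, ENNReal.ofReal ((max (|ξ i| - l) 0)^2))
        ∂(stdGaussian d) := by
    apply lintegral_mono
    intro ξ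
    calc ENNReal.ofReal (sqDist (proj (θ + σ • ξ)) θ)
        ≤ ENNReal.ofReal (2 * (4*σ*l)^(2-p) + 16*σ^2 * ∑ i, (max (|ξ i| - l) 0)^2) :=
          ENNReal.ofReal_le_ofReal (key_det hp0 hp1 hσ hl hproj hθ ξ)
      _ = ENNReal.ofReal (2 * (4*σ*l)^(2-p)) +
          ENNReal.ofReal (16*σ^2 * ∑ i, (max (|ξ i| - l) 0)^2) := by
          rw [ENNReal.ofReal_add hC1]
          positivity
      _ = ENNReal.ofReal (2 * (4*σ*l)^(2-p)) +
          ENNReal.ofReal (16*σ^2) * ∑ i, ENNReal.ofReal ((max (|ξ i| - l) 0)^2) := by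
          congr 1
          rw [ENNReal.ofReal_mul (by positivity : (0:ℝ) ≤ 16*σ^2),
            ENNReal.ofReal_sum_of_nonneg (fun i _ => by positivity)]
  refine step1.trans ?_
  rw [lintegral_add_left measurable_const, lintegral_const_mul _
    (Finset.measurable_sum Finset.univ fun i _ => meas_coord l i),
    lintegral_finset_sum _ (fun i _ => meas_coord l i), lintegral_const,
    measure_univ, mul_one]
  have hsum : ∑ i : Fin d, ∫⁻ ξ, ENNReal.ofReal ((max (|ξ i| - l) 0)^2) ∂(stdGaussian d) ≤
      (d : ℝ≥0∞) * ENNReal.ofReal (6 * Real.exp (-l^2/2)) := by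
    have heach : ∀ i : Fin d,
        ∫⁻ ξ, ENNReal.ofReal ((max (|ξ i| - l) 0)^2) ∂(stdGaussian d) ≤
          ENNReal.ofReal (6 * Real.exp (-l^2/2)) := by
      intro i
      rw [show stdGaussian d = Measure.pi fun _ : Fin d => gaussianReal 0 1 from rfl]
      rw [aux_lintegral_eval i (fun t => ENNReal.ofReal ((max (|t| - l) 0)^2)) (by fun_prop)]
      exact gauss_moment hl
    calc ∑ i : Fin d, ∫⁻ ξ, ENNReal.ofReal ((max (|ξ i| - l) 0)^2) ∂(stdGaussian d)
        ≤ ∑ _i : Fin d, ENNReal.ofReal (6 * Real.exp (-l^2/2)) :=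
          Finset.sum_le_sum fun i _ => heach i
      _ = (d : ℝ≥0∞) * ENNReal.ofReal (6 * Real.exp (-l^2/2)) := by
          rw [Finset.sum_const, Finset.card_univ, Fintype.card_fin, nsmul_eq_mul]
  calc ENNReal.ofReal (2 * (4*σ*l)^(2-p)) +
      ENNReal.ofReal (16*σ^2) *
        ∑ i : Fin d, ∫⁻ ξ, ENNReal.ofReal ((max (|ξ i| - l) 0)^2) ∂(stdGaussian d)
      ≤ ENNReal.ofReal (2 * (4*σ*l)^(2-p)) +
        ENNReal.ofReal (16*σ^2) * ((d : ℝ≥0∞) * ENNReal.ofReal (6 * Real.exp (-l^2/2))) :=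
        add_le_add_right (mul_le_mul_right hsum _) _
    _ = ENNReal.ofReal (2 * (4*σ*l)^(2-p) + 96 * σ^2 * d * Real.exp (-l^2/2)) := by
        rw [← ENNReal.ofReal_natCast d, ← ENNReal.ofReal_mul (by positivity),
          ← ENNReal.ofReal_mul (by positivity), ← ENNReal.ofReal_add hC1 (by positivity)]
        congr 1
        ring

-- ℓ2 norm of points in the ball
lemma ball_l2 {d : ℕ} {p : ℝ} (hp0 : 0 < p) (hp2 : p ≤ 2) {x : Fin d → ℝ}
    (hx : x ∈ lpBall d p) : ∑ i, (x i)^2 ≤ 1 := by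
  have hsum := mem_ball_sum hp0 hx
  have hle1 : ∀ i, |x i| ≤ 1 := by
    intro i
    by_contra hcon
    push_neg at hcon
    have h1 : (1:ℝ) < |x i| ^ p := by
      calc (1:ℝ) = 1 ^ p := (Real.one_rpow p).symm
        _ < |x i| ^ p := Real.rpow_lt_rpow (by norm_num) hcon hp0
    have h2 : |x i| ^ p ≤ ∑ j, |x j| ^ p :=
      Finset.single_le_sum (fun j _ => Real.rpow_nonneg (abs_nonneg _) p) (Finset.mem_univ i)
    linarith
  have hpt : ∀ i, (x i)^2 ≤ |x i| ^ p := by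
    intro i
    rcases eq_or_lt_of_le (abs_nonneg (x i)) with h0 | h0
    · rw [← sq_abs, ← h0]
      rw [Real.zero_rpow hp0.ne']
      norm_num
    · calc (x i)^2 = |x i|^2 := (sq_abs _).symm
        _ = |x i| ^ ((2:ℕ):ℝ) := by rw [Real.rpow_natCast]
        _ ≤ |x i| ^ p := Real.rpow_le_rpow_of_exponent_ge h0 (hle1 i) (by exact_mod_cast hp2)
  calc ∑ i, (x i)^2 ≤ ∑ i, |x i| ^ p := Finset.sum_le_sum fun i _ => hpt i
    _ ≤ 1 := hsum

lemma risk_le_four {d : ℕ} {p σ : ℝ} (hp0 : 0 < p) (hp1 : p < 1) (hσ : 0 < σ)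
    {proj : (Fin d → ℝ) → Fin d → ℝ} (hproj : IsProjOn (lpBall d p) proj)
    {θ : Fin d → ℝ} (hθ : θ ∈ lpBall d p) :
    risk proj σ θ ≤ ENNReal.ofReal 4 := by
  have hpt : ∀ ξ : Fin d → ℝ, sqDist (proj (θ + σ • ξ)) θ ≤ 4 := by
    intro ξ
    have h1 := ball_l2 hp0 (by linarith) (hproj (θ + σ • ξ)).1
    have h2 := ball_l2 hp0 (by linarith) hθ
    have : sqDist (proj (θ + σ • ξ)) θ ≤
        2 * (∑ i, (proj (θ + σ • ξ) i)^2) + 2 * (∑ i, (θ i)^2) := by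
      rw [sqDist, Finset.mul_sum, Finset.mul_sum, ← Finset.sum_add_distrib]
      apply Finset.sum_le_sum
      intro i _
      nlinarith [sq_nonneg (proj (θ + σ • ξ) i + θ i)]
    linarith
  calc risk proj σ θ ≤ ∫⁻ _, ENNReal.ofReal 4 ∂(stdGaussian d) :=
      lintegral_mono fun ξ => ENNReal.ofReal_le_ofReal (hpt ξ)
    _ = ENNReal.ofReal 4 := by rw [lintegral_const, measure_univ, mul_one]


/-- Risk bound for the MLE under weak sparsity: for every `p ∈ (0,1)`,
`d ≥ 1` and `σ > 0`, `R^MLE(B_p^d, σ) ≤ 540·r(σ,p,d)`, where `r(σ,p,d)` is `1` in the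
high-noise regime, `(σ² log(e·d·σ^p))^{1−p/2}` in the intermediate regime, and `σ²d` in
the low-noise regime. -/
theorem mle_risk_bound_weak_sparse (d : ℕ) (hd : 1 ≤ d) (p : ℝ) (hp0 : 0 < p) (hp1 : p < 1)
    (σ : ℝ) (hσ : 0 < σ)
    (proj : (Fin d → ℝ) → Fin d → ℝ) (hproj : IsProjOn (lpBall d p) proj)
    (hmeas : Measurable proj) :
    (1 / Real.sqrt (1 + Real.log d) ≤ σ →
      supRisk (lpBall d p) proj σ ≤ ENNReal.ofReal 540) ∧
    ((d : ℝ) ^ (-(1 / p)) ≤ σ → σ ≤ 1 / Real.sqrt (1 + Real.log d) →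
      supRisk (lpBall d p) proj σ ≤
        ENNReal.ofReal
          (540 * (σ ^ 2 * Real.log (Real.exp 1 * d * σ ^ p)) ^ (1 - p / 2))) ∧
    (σ ≤ (d : ℝ) ^ (-(1 / p)) →
      supRisk (lpBall d p) proj σ ≤ ENNReal.ofReal (540 * (σ ^ 2 * d))) := by
  have hd1 : (1:ℝ) ≤ (d:ℝ) := by exact_mod_cast hd
  have hdpos : (0:ℝ) < (d:ℝ) := by linarith
  refine ⟨?_, ?_, ?_⟩
  · -- high noise regime: trivial bound 4
    intro _
    apply iSup₂_le
    intro θ hθ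
    exact (risk_le_four hp0 hp1 hσ hproj hθ).trans
      (ENNReal.ofReal_le_ofReal (by norm_num))
  · -- intermediate regime
    intro hlow _
    set L : ℝ := Real.log (Real.exp 1 * d * σ ^ p) with hLdef
    have hσp_pos : (0:ℝ) < σ ^ p := Real.rpow_pos_of_pos hσ p
    have hdinv : (d:ℝ)⁻¹ ≤ σ ^ p := by
      have h1 : ((d:ℝ) ^ (-(1/p))) ^ p ≤ σ ^ p :=
        Real.rpow_le_rpow (Real.rpow_nonneg hdpos.le _) hlow hp0.le
      rwa [← Real.rpow_mul hdpos.le, show -(1/p) * p = -1 by field_simp,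
        Real.rpow_neg_one] at h1
    have hprodpos : (0:ℝ) < Real.exp 1 * d * σ ^ p := by positivity
    have hge_e : Real.exp 1 ≤ Real.exp 1 * d * σ ^ p := by
      have : (1:ℝ) ≤ d * σ ^ p := by
        calc (1:ℝ) = d * (d:ℝ)⁻¹ := by field_simp
          _ ≤ d * σ ^ p := by
            apply mul_le_mul_of_nonneg_left hdinv hdpos.le
      nlinarith [Real.exp_pos 1]
    have hL1 : 1 ≤ L := by
      rw [hLdef]
      calc (1:ℝ) = Real.log (Real.exp 1) := (Real.log_exp 1).symm
        _ ≤ Real.log (Real.exp 1 * d * σ ^ p) :=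
          Real.log_le_log (Real.exp_pos 1) hge_e
    have hLpos : (0:ℝ) < L := by linarith
    set l : ℝ := Real.sqrt (2*L) with hldef
    have hlnn : 0 ≤ l := Real.sqrt_nonneg _
    have hl2 : l^2 = 2*L := Real.sq_sqrt (by linarith)
    have hexp : Real.exp (-l^2/2) = (Real.exp 1 * d * σ ^ p)⁻¹ := by
      rw [hl2, show -(2*L)/2 = -L by ring, Real.exp_neg, Real.exp_log hprodpos]
    set X : ℝ := (σ ^ 2 * L) ^ (1 - p/2) with hXdef
    have hXnn : 0 ≤ X := Real.rpow_nonneg (by positivity) _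
    have hreal : 2 * (4*σ*l)^(2-p) + 96 * σ^2 * d * Real.exp (-l^2/2) ≤ 540 * X := by
      -- first term
      have hfirst : (4*σ*l)^(2-p) ≤ 32 * X := by
        have hbase : (0:ℝ) ≤ 4*σ*l := by positivity
        have hsq : (4*σ*l)^(2:ℕ) = 32 * (σ^2 * L) := by
          rw [show ((4*σ*l)^(2:ℕ) : ℝ) = 16 * σ^2 * l^2 by ring, hl2]; ring
        have e1 : (4*σ*l)^(2-p) = ((4*σ*l)^(2:ℕ)) ^ ((2-p)/2) := by
          rw [← Real.rpow_natCast (4*σ*l) 2, ← Real.rpow_mul hbase]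
          congr 1
          push_cast
          ring
        rw [e1, hsq]
        have e2 : (32 * (σ^2 * L)) ^ ((2-p)/2) = 32 ^ ((2-p)/2) * (σ^2*L) ^ ((2-p)/2) :=
          Real.mul_rpow (by norm_num) (by positivity)
        rw [e2]
        have h32 : (32:ℝ) ^ ((2-p)/2) ≤ 32 := by
          calc (32:ℝ) ^ ((2-p)/2) ≤ 32 ^ (1:ℝ) :=
            Real.rpow_le_rpow_of_exponent_le (by norm_num) (by linarith)
            _ = 32 := Real.rpow_one _
        have : (σ^2*L) ^ ((2-p)/2) = X := by
          rw [hXdef]; congr 1; ring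
        rw [this]
        exact mul_le_mul_of_nonneg_right h32 hXnn
      -- second term
      have hsecond : 96 * σ^2 * d * Real.exp (-l^2/2) ≤ 36 * X := by
        rw [hexp]
        have e1 : 96 * σ^2 * d * (Real.exp 1 * d * σ ^ p)⁻¹ =
            96 * (Real.exp 1)⁻¹ * (σ^2 * (σ ^ p)⁻¹) := by
          field_simp
        rw [e1]
        have e2 : σ^2 * (σ ^ p)⁻¹ = σ ^ (2 - p) := by
          rw [← Real.rpow_natCast σ 2, ← Real.rpow_neg hσ.le, ← Real.rpow_add hσ]
          congr 1
        rw [e2]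
        have h96 : 96 * (Real.exp 1)⁻¹ ≤ 36 := by
          have he : (2.7182818283:ℝ) < Real.exp 1 := Real.exp_one_gt_d9
          have hepos : (0:ℝ) < Real.exp 1 := Real.exp_pos 1
          rw [← div_eq_mul_inv, div_le_iff₀ hepos]
          nlinarith
        have hσ2p : σ ^ (2-p) ≤ X := by
          have e3 : σ ^ (2-p) = (σ^2 : ℝ) ^ (1 - p/2) := by
            rw [← Real.rpow_natCast σ 2, ← Real.rpow_mul hσ.le]
            congr 1
            push_cast
            ring
          rw [e3, hXdef]
          apply Real.rpow_le_rpow (by positivity) _ (by linarith)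
          nlinarith [sq_nonneg σ]
        calc 96 * (Real.exp 1)⁻¹ * σ ^ (2-p) ≤ 36 * σ ^ (2-p) := by
              apply mul_le_mul_of_nonneg_right h96 (Real.rpow_nonneg hσ.le _)
          _ ≤ 36 * X := by linarith [hσ2p]
      linarith
    apply iSup₂_le
    intro θ hθ
    exact (risk_le_bound hp0 hp1 hσ hlnn hproj hθ).trans (ENNReal.ofReal_le_ofReal hreal)
  · -- low noise regime: l = 0
    intro _
    apply iSup₂_le
    intro θ hθ
    refine (risk_le_bound hp0 hp1 hσ le_rfl hproj hθ).trans (ENNReal.ofReal_le_ofReal ?_)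
    have e1 : (4*σ*(0:ℝ))^(2-p) = 0 := by
      rw [mul_zero, Real.zero_rpow (by linarith : (2:ℝ)-p ≠ 0)]
    have e2 : Real.exp (-(0:ℝ)^2/2) = 1 := by norm_num
    rw [e1, e2]
    have : (0:ℝ) ≤ σ^2 * d := by positivity
    nlinarith
end
end

section
/- Fix p ∈ (0, 1). Then the worst-case risk of the projection onto the unit ℓp ball satisfies R^MLE(B_p^d, σ) ≤ 4 · min{ σ²d, 1, ε_p(σ)² }, where ε_p(σ)² = inf_{ε > 0} { ε² + (σ²/ε²) · ‖Φ_{p,ε}‖_{L²}² } and Φ_{p,ε}(ξ) = sup{ ⟨x, ξ⟩ : x ∈ ℝ^d, ‖x‖_p^p ≤ 2, ‖x‖₂ ≤ ε } for ξ ∼ N(0, I_d). -/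
open MeasureTheory ProbabilityTheory Real Filter Pointwise
open scoped ENNReal NNReal

noncomputable section

/-- The random supremum `Φ_{p,ε}(ξ) = sup{⟨x,ξ⟩ : ‖x‖_p^p ≤ 2, ‖x‖₂ ≤ ε}`. -/
def Phi {d : ℕ} (p ε : ℝ) (ξ : Fin d → ℝ) : ℝ :=
  sSup {v | ∃ x : Fin d → ℝ,
    (∑ i, |x i| ^ p) ≤ 2 ∧ (∑ i, x i ^ 2) ≤ ε ^ 2 ∧ v = ∑ i, x i * ξ i}

/-- The fixed-point quantity `ε_p(σ)² = inf_{ε>0} {ε² + (σ²/ε²)·‖Φ_{p,ε}‖_{L²}²}`. -/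
def epsPSq (d : ℕ) (p σ : ℝ) : ℝ :=
  ⨅ ε : {e : ℝ // 0 < e},
    (ε : ℝ) ^ 2 + σ ^ 2 / (ε : ℝ) ^ 2 * ∫ ξ, Phi p (ε : ℝ) ξ ^ 2 ∂(stdGaussian d)


namespace MleAux

/-! ### Gaussian second moment -/

lemma integral_sq_exp : ∫ x : ℝ, x ^ 2 * rexp (-x ^ 2 / 2) = Real.sqrt (2 * π) := by
  have hb : (0:ℝ) < 1/2 := by norm_num
  have hrw : ∀ x : ℝ, rexp (-x ^ 2 / 2) = rexp (-(1/2) * x ^ 2) := by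
    intro x; ring_nf
  have hint2 : Integrable fun x : ℝ => rexp (-(1/2) * x ^ 2) := integrable_exp_neg_mul_sq hb
  have hint1 : Integrable fun x : ℝ => x ^ 2 * rexp (-(1/2) * x ^ 2) := by
    have := integrable_rpow_mul_exp_neg_mul_sq hb (s := 2) (by norm_num)
    have h2 : ∀ x : ℝ, x ^ (2:ℝ) = x ^ 2 := fun x => by
      rw [show ((2:ℝ) = ((2:ℕ):ℝ)) by norm_num, Real.rpow_natCast]
    simpa only [h2] using this
  have hderiv : ∀ x : ℝ, HasDerivAt (fun x : ℝ => -x * rexp (-(1/2) * x ^ 2))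
      ((x ^ 2 - 1) * rexp (-(1/2) * x ^ 2)) x := by
    intro x
    have h1 : HasDerivAt (fun x : ℝ => -(1/2) * x ^ 2) (-(1/2) * (2 * x)) x := by
      simpa using ((hasDerivAt_pow 2 x).const_mul (-(1/2):ℝ))
    have h2 : HasDerivAt (fun x : ℝ => rexp (-(1/2) * x ^ 2))
        (rexp (-(1/2) * x ^ 2) * (-(1/2) * (2 * x))) x := h1.exp
    have h3 : HasDerivAt (fun x : ℝ => -x) (-1 : ℝ) x := (hasDerivAt_id x).neg
    have := (h3.mul h2 : HasDerivAt (fun y : ℝ => -y * rexp (-(1/2) * y ^ 2)) _ x)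
    refine this.congr_deriv ?_
    ring
  have hint' : Integrable fun x : ℝ => (x ^ 2 - 1) * rexp (-(1/2) * x ^ 2) := by
    have : (fun x : ℝ => (x ^ 2 - 1) * rexp (-(1/2) * x ^ 2))
        = fun x => x ^ 2 * rexp (-(1/2) * x ^ 2) - rexp (-(1/2) * x ^ 2) := by
      ext x; ring
    rw [this]; exact hint1.sub hint2
  have htop : Tendsto (fun x : ℝ => -x * rexp (-(1/2) * x ^ 2)) atTop (nhds 0) := by
    have ho := rpow_mul_exp_neg_mul_sq_isLittleO_exp_neg hb 1
    have hexp : Tendsto (fun x : ℝ => rexp (-(1/2) * x)) atTop (nhds 0) := by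
      have : Tendsto (fun x : ℝ => -(1/2) * x) atTop atBot :=
        (tendsto_const_mul_atBot_of_neg (by norm_num)).mpr tendsto_id
      exact Real.tendsto_exp_atBot.comp this
    have h0 : Tendsto (fun x : ℝ => x ^ (1:ℝ) * rexp (-(1/2) * x ^ 2)) atTop (nhds 0) :=
      ho.trans_tendsto hexp
    have : Tendsto (fun x : ℝ => x * rexp (-(1/2) * x ^ 2)) atTop (nhds 0) := by
      refine h0.congr' ?_
      filter_upwards [eventually_ge_atTop (0:ℝ)] with x hx
      rw [Real.rpow_one]
    simpa using this.neg
  have hbot : Tendsto (fun x : ℝ => -x * rexp (-(1/2) * x ^ 2)) atBot (nhds 0) := by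
    have hcomp := (Tendsto.comp (by simpa using htop.neg) tendsto_neg_atBot_atTop :
      Tendsto ((fun x : ℝ => -(-x * rexp (-(1/2) * x ^ 2))) ∘ (fun x : ℝ => -x)) atBot (nhds (-0)))
    simp only [Function.comp_def, neg_neg, neg_zero] at hcomp
    refine hcomp.congr ?_
    intro x; ring_nf
  have key : ∫ x : ℝ, (x ^ 2 - 1) * rexp (-(1/2) * x ^ 2) = 0 := by
    have := MeasureTheory.integral_of_hasDerivAt_of_tendsto hderiv hint' hbot htop
    simpa using this
  have hsplit : ∫ x : ℝ, x ^ 2 * rexp (-(1/2) * x ^ 2)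
      = ∫ x : ℝ, rexp (-(1/2) * x ^ 2) := by
    have h := integral_sub hint1 hint2
    have : (fun x : ℝ => x ^ 2 * rexp (-(1/2) * x ^ 2) - rexp (-(1/2) * x ^ 2))
        = fun x => (x ^ 2 - 1) * rexp (-(1/2) * x ^ 2) := by ext x; ring
    rw [this, key] at h
    linarith
  calc ∫ x : ℝ, x ^ 2 * rexp (-x ^ 2 / 2) = ∫ x : ℝ, x ^ 2 * rexp (-(1/2) * x ^ 2) := by
        congr 1; ext x; rw [hrw]
    _ = ∫ x : ℝ, rexp (-(1/2) * x ^ 2) := hsplit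
    _ = Real.sqrt (π / (1/2)) := integral_gaussian (1/2)
    _ = Real.sqrt (2 * π) := by norm_num; ring_nf

lemma pdf_sq_eq (x : ℝ) :
    gaussianPDFReal 0 1 x * x ^ 2 = (Real.sqrt (2 * π))⁻¹ * (x ^ 2 * rexp (-x ^ 2 / 2)) := by
  simp only [gaussianPDFReal, NNReal.coe_one, mul_one, sub_zero]
  ring

lemma integrable_pdf_sq : Integrable (fun x : ℝ => gaussianPDFReal 0 1 x * x ^ 2) := by
  have hb : (0:ℝ) < 1/2 := by norm_num
  have hint1 : Integrable fun x : ℝ => x ^ 2 * rexp (-(1/2) * x ^ 2) := by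
    have := integrable_rpow_mul_exp_neg_mul_sq hb (s := 2) (by norm_num)
    have h2 : ∀ x : ℝ, x ^ (2:ℝ) = x ^ 2 := fun x => by
      rw [show ((2:ℝ) = ((2:ℕ):ℝ)) by norm_num, Real.rpow_natCast]
    simpa only [h2] using this
  have : Integrable fun x : ℝ => (Real.sqrt (2 * π))⁻¹ * (x ^ 2 * rexp (-(1/2) * x ^ 2)) :=
    hint1.const_mul _
  refine this.congr ?_
  refine ae_of_all _ fun x => ?_
  show _ = gaussianPDFReal 0 1 x * x ^ 2
  rw [pdf_sq_eq]
  congr 2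
  ring_nf

lemma integral_pdf_sq : ∫ x : ℝ, gaussianPDFReal 0 1 x * x ^ 2 = 1 := by
  simp only [pdf_sq_eq]
  rw [integral_const_mul, integral_sq_exp]
  rw [inv_mul_cancel₀]
  positivity

lemma lintegral_sq_gaussian :
    ∫⁻ x, ENNReal.ofReal (x ^ 2) ∂(gaussianReal 0 1) = 1 := by
  rw [gaussianReal_of_var_ne_zero 0 one_ne_zero]
  rw [lintegral_withDensity_eq_lintegral_mul _ (measurable_gaussianPDF 0 1)
    (by fun_prop : Measurable fun x : ℝ => ENNReal.ofReal (x ^ 2))]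
  have h : ∀ x : ℝ, (gaussianPDF 0 1 * fun x => ENNReal.ofReal (x ^ 2)) x
      = ENNReal.ofReal (gaussianPDFReal 0 1 x * x ^ 2) := by
    intro x
    simp only [Pi.mul_apply, gaussianPDF]
    rw [← ENNReal.ofReal_mul (gaussianPDFReal_nonneg 0 1 x)]
  simp_rw [h]
  rw [← ofReal_integral_eq_lintegral_ofReal integrable_pdf_sq
    (ae_of_all _ fun x => mul_nonneg (gaussianPDFReal_nonneg 0 1 x) (sq_nonneg x))]
  rw [integral_pdf_sq]; simp

lemma integrable_sq_gaussian : Integrable (fun x : ℝ => x ^ 2) (gaussianReal 0 1) := by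
  refine ⟨(by fun_prop : Measurable fun x : ℝ => x ^ 2).aestronglyMeasurable, ?_⟩
  rw [hasFiniteIntegral_iff_norm]
  have : ∀ x : ℝ, ENNReal.ofReal ‖x ^ 2‖ = ENNReal.ofReal (x ^ 2) := by
    intro x; rw [Real.norm_eq_abs, abs_of_nonneg (sq_nonneg x)]
  simp_rw [this, lintegral_sq_gaussian]
  exact ENNReal.one_lt_top

/-! ### Marginals of the standard Gaussian -/

instance (d : ℕ) : IsProbabilityMeasure (stdGaussian d) := by
  unfold _root_.stdGaussian; infer_instance

lemma map_eval_stdGaussian (d : ℕ) (i : Fin d) :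
    (stdGaussian d).map (fun ξ => ξ i) = gaussianReal 0 1 := by
  ext s hs
  rw [Measure.map_apply (measurable_pi_apply i) hs]
  have hpre : (fun ξ : Fin d → ℝ => ξ i) ⁻¹' s
      = Set.pi Set.univ (Function.update (fun _ : Fin d => (Set.univ : Set ℝ)) i s) := by
    ext f
    simp only [Set.mem_preimage, Set.mem_univ_pi]
    constructor
    · intro h j
      rcases eq_or_ne j i with rfl | hj
      · simpa [Function.update_self] using h
      · simp [Function.update_of_ne hj]
    · intro h
      have := h i
      simpa [Function.update_self] using this
  rw [_root_.stdGaussian, hpre, Measure.pi_pi]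
  rw [Finset.prod_eq_single i]
  · simp [Function.update_self]
  · intro j _ hj
    simp [Function.update_of_ne hj]
  · simp

lemma lintegral_eval_sq (d : ℕ) (i : Fin d) :
    ∫⁻ ξ, ENNReal.ofReal ((ξ i) ^ 2) ∂(stdGaussian d) = 1 := by
  rw [← lintegral_sq_gaussian, ← map_eval_stdGaussian d i,
    lintegral_map (by fun_prop) (measurable_pi_apply i)]

lemma integrable_eval_sq (d : ℕ) (i : Fin d) :
    Integrable (fun ξ : Fin d → ℝ => (ξ i) ^ 2) (stdGaussian d) := by
  have h : Integrable (fun x : ℝ => x ^ 2) (gaussianReal 0 1) := integrable_sq_gaussian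
  rw [← map_eval_stdGaussian d i] at h
  have := (integrable_map_measure (g := fun x : ℝ => x ^ 2)
    ((measurable_id.pow_const 2).aestronglyMeasurable)
    (measurable_pi_apply i).aemeasurable (μ := stdGaussian d)).mp h
  exact this

/-! ### Properties of `Phi` -/

variable {d : ℕ} {p ε : ℝ}

lemma phiSet_nonempty (hp : p ≠ 0) (ξ : Fin d → ℝ) :
    (0:ℝ) ∈ {v | ∃ x : Fin d → ℝ,
      (∑ i, |x i| ^ p) ≤ 2 ∧ (∑ i, x i ^ 2) ≤ ε ^ 2 ∧ v = ∑ i, x i * ξ i} := by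
  refine ⟨0, ?_, ?_, ?_⟩ <;> simp [Real.zero_rpow hp, sq_nonneg]

lemma phiSet_le (hε : 0 ≤ ε) (ξ : Fin d → ℝ) {v : ℝ}
    (hv : v ∈ {v | ∃ x : Fin d → ℝ,
      (∑ i, |x i| ^ p) ≤ 2 ∧ (∑ i, x i ^ 2) ≤ ε ^ 2 ∧ v = ∑ i, x i * ξ i}) :
    v ≤ ε * Real.sqrt (∑ i, ξ i ^ 2) := by
  obtain ⟨x, -, hx2, rfl⟩ := hv
  have hcs := Real.sum_mul_le_sqrt_mul_sqrt Finset.univ x ξ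
  have hx : Real.sqrt (∑ i, x i ^ 2) ≤ ε := by
    have := Real.sqrt_le_sqrt hx2
    rwa [Real.sqrt_sq hε] at this
  calc ∑ i, x i * ξ i ≤ Real.sqrt (∑ i, x i ^ 2) * Real.sqrt (∑ i, ξ i ^ 2) := hcs
    _ ≤ ε * Real.sqrt (∑ i, ξ i ^ 2) :=
        mul_le_mul_of_nonneg_right hx (Real.sqrt_nonneg _)

lemma phiSet_bddAbove (hε : 0 ≤ ε) (ξ : Fin d → ℝ) :
    BddAbove {v | ∃ x : Fin d → ℝ,
      (∑ i, |x i| ^ p) ≤ 2 ∧ (∑ i, x i ^ 2) ≤ ε ^ 2 ∧ v = ∑ i, x i * ξ i} :=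
  ⟨ε * Real.sqrt (∑ i, ξ i ^ 2), fun _ hv => phiSet_le hε ξ hv⟩

lemma phi_nonneg (hp : p ≠ 0) (hε : 0 ≤ ε) (ξ : Fin d → ℝ) : 0 ≤ Phi (d := d) p ε ξ :=
  le_csSup (phiSet_bddAbove hε ξ) (phiSet_nonempty hp ξ)

lemma phi_le (hp : p ≠ 0) (hε : 0 ≤ ε) (ξ : Fin d → ℝ) :
    Phi (d := d) p ε ξ ≤ ε * Real.sqrt (∑ i, ξ i ^ 2) :=
  csSup_le ⟨0, phiSet_nonempty hp ξ⟩ fun v hv => phiSet_le hε ξ hv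

lemma phi_lip (hp : p ≠ 0) (hε : 0 ≤ ε) (ξ ξ' : Fin d → ℝ) :
    Phi (d := d) p ε ξ ≤ Phi p ε ξ' + ε * Real.sqrt (∑ i, (ξ i - ξ' i) ^ 2) := by
  refine csSup_le ⟨0, phiSet_nonempty hp ξ⟩ ?_
  rintro v ⟨x, hxp, hx2, rfl⟩
  have h1 : ∑ i, x i * ξ' i ≤ Phi p ε ξ' :=
    le_csSup (phiSet_bddAbove hε ξ') ⟨x, hxp, hx2, rfl⟩
  have h2 : ∑ i, x i * (ξ i - ξ' i) ≤ ε * Real.sqrt (∑ i, (ξ i - ξ' i) ^ 2) :=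
    phiSet_le hε _ ⟨x, hxp, hx2, rfl⟩
  have : ∑ i, x i * ξ i = (∑ i, x i * ξ' i) + ∑ i, x i * (ξ i - ξ' i) := by
    rw [← Finset.sum_add_distrib]
    exact Finset.sum_congr rfl fun i _ => by ring
  rw [this]
  exact add_le_add h1 h2

lemma phi_continuous (hp : p ≠ 0) (hε : 0 ≤ ε) : Continuous (Phi (d := d) p ε) := by
  rw [Metric.continuous_iff]
  intro ξ δ hδ
  refine ⟨δ / (ε * Real.sqrt d + 1), by positivity, fun ξ' hξ' => ?_⟩
  have hsum : ∀ η η' : Fin d → ℝ, Real.sqrt (∑ i, (η i - η' i) ^ 2)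
      ≤ Real.sqrt d * dist η η' := by
    intro η η'
    have hb : ∀ i, (η i - η' i) ^ 2 ≤ (dist η η') ^ 2 := by
      intro i
      have h1 : |η i - η' i| ≤ dist η η' := by
        rw [← Real.dist_eq]
        exact dist_le_pi_dist η η' i
      calc (η i - η' i) ^ 2 = |η i - η' i| ^ 2 := (sq_abs _).symm
        _ ≤ (dist η η') ^ 2 := by
            exact pow_le_pow_left₀ (abs_nonneg _) h1 2
    calc Real.sqrt (∑ i, (η i - η' i) ^ 2) ≤ Real.sqrt (∑ _i : Fin d, (dist η η') ^ 2) :=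
          Real.sqrt_le_sqrt (Finset.sum_le_sum fun i _ => hb i)
      _ = Real.sqrt (d * (dist η η') ^ 2) := by
          rw [Finset.sum_const, Finset.card_univ, Fintype.card_fin, nsmul_eq_mul]
      _ = Real.sqrt d * dist η η' := by
          rw [Real.sqrt_mul (Nat.cast_nonneg d), Real.sqrt_sq dist_nonneg]
  have habs : |Phi p ε ξ' - Phi p ε ξ| ≤ ε * (Real.sqrt d * dist ξ' ξ) := by
    rw [abs_sub_le_iff]
    constructor
    · have h1 := phi_lip hp hε ξ' ξ
      have h2 := mul_le_mul_of_nonneg_left (hsum ξ' ξ) hε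
      linarith
    · have h1 := phi_lip hp hε ξ ξ'
      have h2 := mul_le_mul_of_nonneg_left (hsum ξ ξ') hε
      have hdist : dist ξ ξ' = dist ξ' ξ := dist_comm ξ ξ'
      rw [hdist] at h2
      linarith
  rw [Real.dist_eq]
  calc |Phi p ε ξ' - Phi p ε ξ| ≤ ε * (Real.sqrt d * dist ξ' ξ) := habs
    _ ≤ ε * Real.sqrt d * (δ / (ε * Real.sqrt d + 1)) := by
        rw [mul_assoc]
        refine mul_le_mul_of_nonneg_left ?_ hε
        exact mul_le_mul_of_nonneg_left hξ'.le (Real.sqrt_nonneg _)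
    _ < (ε * Real.sqrt d + 1) * (δ / (ε * Real.sqrt d + 1)) := by
        have hpos : (0:ℝ) < δ / (ε * Real.sqrt d + 1) := by positivity
        have : ε * Real.sqrt d < ε * Real.sqrt d + 1 := by linarith
        exact mul_lt_mul_of_pos_right this hpos
    _ = δ := by field_simp

/-! ### ℓp ball geometry -/

lemma ball_sum_rpow (hp0 : 0 < p) {x : Fin d → ℝ} (hx : x ∈ lpBall d p) :
    (∑ i, |x i| ^ p) ≤ 1 := by
  have hS : (0:ℝ) ≤ ∑ i, |x i| ^ p :=
    Finset.sum_nonneg fun i _ => Real.rpow_nonneg (abs_nonneg _) p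
  have hpN : (0:ℝ) ≤ pNorm p x := Real.rpow_nonneg hS _
  have h1 : pNorm p x ^ p ≤ 1 ^ p :=
    Real.rpow_le_rpow hpN hx hp0.le
  rw [Real.one_rpow] at h1
  rw [pNorm, ← Real.rpow_mul hS, one_div, inv_mul_cancel₀ hp0.ne', Real.rpow_one] at h1
  exact h1

lemma ball_abs_le (hp0 : 0 < p) {x : Fin d → ℝ} (hx : x ∈ lpBall d p) (i : Fin d) :
    |x i| ≤ 1 := by
  have h := ball_sum_rpow hp0 hx
  have hterm : |x i| ^ p ≤ 1 := by
    refine le_trans ?_ h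
    exact Finset.single_le_sum (fun j _ => Real.rpow_nonneg (abs_nonneg _) p) (Finset.mem_univ i)
  by_contra h1
  push_neg at h1
  have : (1:ℝ) < |x i| ^ p := by
    calc (1:ℝ) = 1 ^ p := (Real.one_rpow p).symm
      _ < |x i| ^ p := Real.rpow_lt_rpow (by norm_num) h1 hp0
  linarith

lemma ball_sum_sq (hp0 : 0 < p) (hp1 : p < 1) {x : Fin d → ℝ} (hx : x ∈ lpBall d p) :
    (∑ i, x i ^ 2) ≤ 1 := by
  refine le_trans (Finset.sum_le_sum fun i _ => ?_) (ball_sum_rpow hp0 hx)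
  rcases eq_or_ne (x i) 0 with h | h
  · simp [h, Real.zero_rpow hp0.ne']
  · have habs : 0 < |x i| := abs_pos.mpr h
    have : |x i| ^ (2:ℝ) ≤ |x i| ^ p :=
      Real.rpow_le_rpow_of_exponent_ge habs (ball_abs_le hp0 hx i) (by linarith)
    calc x i ^ 2 = |x i| ^ (2:ℕ) := by rw [sq_abs]
      _ = |x i| ^ ((2:ℕ):ℝ) := (Real.rpow_natCast _ 2).symm
      _ ≤ |x i| ^ p := by exact_mod_cast this

lemma real_rpow_add_le {u v : ℝ} (hu : 0 ≤ u) (hv : 0 ≤ v) (hp : 0 ≤ p) (hp1 : p ≤ 1) :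
    (u + v) ^ p ≤ u ^ p + v ^ p := by
  have := NNReal.rpow_add_le_add_rpow ⟨u, hu⟩ ⟨v, hv⟩ hp hp1
  have hc := NNReal.coe_le_coe.mpr this
  push_cast [NNReal.coe_rpow] at hc
  exact hc

lemma sub_pnorm_le (hp0 : 0 < p) (hp1 : p < 1) {a θ : Fin d → ℝ}
    (ha : a ∈ lpBall d p) (hθ : θ ∈ lpBall d p) :
    (∑ i, |a i - θ i| ^ p) ≤ 2 := by
  have h1 : ∀ i, |a i - θ i| ^ p ≤ |a i| ^ p + |θ i| ^ p := by
    intro i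
    calc |a i - θ i| ^ p ≤ (|a i| + |θ i|) ^ p :=
          Real.rpow_le_rpow (abs_nonneg _) (abs_sub _ _) hp0.le
      _ ≤ |a i| ^ p + |θ i| ^ p :=
          real_rpow_add_le (abs_nonneg _) (abs_nonneg _) hp0.le hp1.le
  calc (∑ i, |a i - θ i| ^ p) ≤ ∑ i, (|a i| ^ p + |θ i| ^ p) :=
        Finset.sum_le_sum fun i _ => h1 i
    _ = (∑ i, |a i| ^ p) + ∑ i, |θ i| ^ p := Finset.sum_add_distrib
    _ ≤ 1 + 1 := add_le_add (ball_sum_rpow hp0 ha) (ball_sum_rpow hp0 hθ)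
    _ = 2 := by norm_num

/-! ### Pointwise risk bounds -/

lemma basic_ineq {σ : ℝ} {θ a ξ : Fin d → ℝ}
    (hbasic : sqDist (θ + σ • ξ) a ≤ sqDist (θ + σ • ξ) θ) :
    (∑ i, (a i - θ i) ^ 2) ≤ 2 * σ * ∑ i, ξ i * (a i - θ i) := by
  have hexp : sqDist (θ + σ • ξ) a
      = sqDist (θ + σ • ξ) θ - 2 * σ * (∑ i, ξ i * (a i - θ i))
        + ∑ i, (a i - θ i) ^ 2 := by
    simp only [sqDist, Pi.add_apply, Pi.smul_apply, smul_eq_mul]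
    rw [Finset.mul_sum, ← Finset.sum_sub_distrib, ← Finset.sum_add_distrib]
    exact Finset.sum_congr rfl fun i _ => by ring
  rw [hexp] at hbasic
  linarith

lemma pointwise_noise {σ : ℝ} (hσ : 0 < σ) {θ a ξ : Fin d → ℝ}
    (hbasic : sqDist (θ + σ • ξ) a ≤ sqDist (θ + σ • ξ) θ) :
    sqDist a θ ≤ 4 * σ ^ 2 * ∑ i, ξ i ^ 2 := by
  have key := basic_ineq hbasic
  have hcs := Real.sum_mul_le_sqrt_mul_sqrt Finset.univ ξ (fun i => a i - θ i)
  set s : ℝ := ∑ i, (a i - θ i) ^ 2 with hs_def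
  set t : ℝ := ∑ i, ξ i ^ 2 with ht_def
  have hsq : sqDist a θ = s := rfl
  rw [hsq]
  have hs0 : 0 ≤ s := Finset.sum_nonneg fun i _ => sq_nonneg _
  have ht0 : 0 ≤ t := Finset.sum_nonneg fun i _ => sq_nonneg _
  have h1 : s ≤ 2 * σ * (Real.sqrt t * Real.sqrt s) := by
    calc s ≤ 2 * σ * ∑ i, ξ i * (a i - θ i) := key
      _ ≤ 2 * σ * (Real.sqrt t * Real.sqrt s) :=
          mul_le_mul_of_nonneg_left hcs (by positivity)
  nlinarith [Real.sq_sqrt hs0, Real.sq_sqrt ht0, Real.sqrt_nonneg s, Real.sqrt_nonneg t,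
    sq_nonneg (Real.sqrt s - 2 * σ * Real.sqrt t)]

lemma pointwise_ball (hp0 : 0 < p) (hp1 : p < 1) {θ a : Fin d → ℝ}
    (hθ : θ ∈ lpBall d p) (ha : a ∈ lpBall d p) :
    sqDist a θ ≤ 4 := by
  have h1 := ball_sum_sq hp0 hp1 hθ
  have h2 := ball_sum_sq hp0 hp1 ha
  have : sqDist a θ ≤ ∑ i, (2 * a i ^ 2 + 2 * θ i ^ 2) :=
    Finset.sum_le_sum fun i _ => by nlinarith [sq_nonneg (a i + θ i)]
  rw [Finset.sum_add_distrib, ← Finset.mul_sum, ← Finset.mul_sum] at this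
  linarith

lemma pointwise_loc (hp0 : 0 < p) (hp1 : p < 1) {σ ε : ℝ} (hσ : 0 < σ) (hε : 0 < ε)
    {θ a ξ : Fin d → ℝ} (hθ : θ ∈ lpBall d p) (ha : a ∈ lpBall d p)
    (hbasic : sqDist (θ + σ • ξ) a ≤ sqDist (θ + σ • ξ) θ) :
    sqDist a θ ≤ ε ^ 2 + 4 * σ ^ 2 / ε ^ 2 * Phi p ε ξ ^ 2 := by
  have key := basic_ineq hbasic
  set s : ℝ := ∑ i, (a i - θ i) ^ 2 with hs_def
  have hsq : sqDist a θ = s := rfl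
  rw [hsq]
  by_cases hs : s ≤ ε ^ 2
  · have : (0:ℝ) ≤ 4 * σ ^ 2 / ε ^ 2 * Phi p ε ξ ^ 2 := by positivity
    linarith
  · push_neg at hs
    have hs0 : 0 < s := lt_trans (by positivity) hs
    have hrs : 0 < Real.sqrt s := Real.sqrt_pos.mpr hs0
    have hεs : ε < Real.sqrt s := by
      have := Real.sqrt_lt_sqrt (sq_nonneg ε) hs
      rwa [Real.sqrt_sq hε.le] at this
    set c : ℝ := ε / Real.sqrt s with hc_def
    have hc0 : 0 < c := div_pos hε hrs
    have hc1 : c ≤ 1 := (div_le_one hrs).mpr hεs.le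
    set x : Fin d → ℝ := fun i => c * (a i - θ i) with hx_def
    have hx2 : (∑ i, x i ^ 2) ≤ ε ^ 2 := by
      have : (∑ i, x i ^ 2) = c ^ 2 * s := by
        rw [hs_def, Finset.mul_sum]
        exact Finset.sum_congr rfl fun i _ => by rw [hx_def]; ring
      rw [this, hc_def]
      rw [div_pow, Real.sq_sqrt hs0.le]
      rw [div_mul_eq_mul_div, mul_div_assoc, div_self hs0.ne']
      simp
    have hxp : (∑ i, |x i| ^ p) ≤ 2 := by
      have hbound : ∀ i, |x i| ^ p ≤ |a i - θ i| ^ p := by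
        intro i
        rw [hx_def]
        simp only
        rw [abs_mul, abs_of_pos hc0, Real.mul_rpow hc0.le (abs_nonneg _)]
        have h1 : c ^ p ≤ 1 := Real.rpow_le_one hc0.le hc1 hp0.le
        exact mul_le_of_le_one_left (Real.rpow_nonneg (abs_nonneg _) p) h1
      exact le_trans (Finset.sum_le_sum fun i _ => hbound i) (sub_pnorm_le hp0 hp1 ha hθ)
    have hmem : (∑ i, x i * ξ i) ≤ Phi p ε ξ :=
      le_csSup (phiSet_bddAbove hε.le ξ) ⟨x, hxp, hx2, rfl⟩
    have hxi : (∑ i, x i * ξ i) = c * ∑ i, ξ i * (a i - θ i) := by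
      rw [Finset.mul_sum]
      exact Finset.sum_congr rfl fun i _ => by rw [hx_def]; ring
    have hkey2 : ε * Real.sqrt s ≤ 2 * σ * Phi p ε ξ := by
      have h1 : c * s ≤ c * (2 * σ * ∑ i, ξ i * (a i - θ i)) :=
        mul_le_mul_of_nonneg_left key hc0.le
      have h2 : c * (2 * σ * ∑ i, ξ i * (a i - θ i)) = 2 * σ * (∑ i, x i * ξ i) := by
        rw [hxi]; ring
      have h3 : 2 * σ * (∑ i, x i * ξ i) ≤ 2 * σ * Phi p ε ξ :=
        mul_le_mul_of_nonneg_left hmem (by positivity)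
      have h4 : c * s = ε * Real.sqrt s := by
        rw [hc_def]
        rw [div_mul_eq_mul_div, mul_div_assoc, Real.div_sqrt]
      linarith
    have hsqrt : Real.sqrt s ≤ 2 * σ * Phi p ε ξ / ε := by
      rw [le_div_iff₀ hε]
      calc Real.sqrt s * ε = ε * Real.sqrt s := by ring
        _ ≤ 2 * σ * Phi p ε ξ := hkey2
    have hfinal : s ≤ (2 * σ * Phi p ε ξ / ε) ^ 2 := by
      have := pow_le_pow_left₀ (Real.sqrt_nonneg s) hsqrt 2
      rwa [Real.sq_sqrt hs0.le] at this
    have heq : (2 * σ * Phi p ε ξ / ε) ^ 2 = 4 * σ ^ 2 / ε ^ 2 * Phi p ε ξ ^ 2 := by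
      field_simp
      ring
    rw [heq] at hfinal
    have : (0:ℝ) ≤ ε ^ 2 := sq_nonneg ε
    linarith

end MleAux


namespace MleAux

lemma riskA {d : ℕ} {p σ : ℝ} (hσ : 0 < σ)
    {proj : (Fin d → ℝ) → Fin d → ℝ} (hproj : IsProjOn (lpBall d p) proj)
    {θ : Fin d → ℝ} (hθ : θ ∈ lpBall d p) :
    risk proj σ θ ≤ ENNReal.ofReal (4 * (σ ^ 2 * d)) := by
  have hpt : ∀ ξ : Fin d → ℝ, ENNReal.ofReal (sqDist (proj (θ + σ • ξ)) θ)
      ≤ ENNReal.ofReal (4 * σ ^ 2 * ∑ i, ξ i ^ 2) := by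
    intro ξ
    refine ENNReal.ofReal_le_ofReal ?_
    exact pointwise_noise hσ ((hproj (θ + σ • ξ)).2 θ hθ)
  calc risk proj σ θ ≤ ∫⁻ ξ, ENNReal.ofReal (4 * σ ^ 2 * ∑ i, ξ i ^ 2) ∂(stdGaussian d) :=
        lintegral_mono hpt
    _ = ∫⁻ ξ, ENNReal.ofReal (4 * σ ^ 2) * ∑ i, ENNReal.ofReal (ξ i ^ 2) ∂(stdGaussian d) := by
        congr 1
        ext ξ
        rw [ENNReal.ofReal_mul (by positivity), ENNReal.ofReal_sum_of_nonneg
          (fun i _ => sq_nonneg _)]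
    _ = ENNReal.ofReal (4 * σ ^ 2) * ∫⁻ ξ, ∑ i, ENNReal.ofReal (ξ i ^ 2) ∂(stdGaussian d) :=
        lintegral_const_mul _ (by
          exact Finset.measurable_sum _ fun i _ => by fun_prop)
    _ = ENNReal.ofReal (4 * σ ^ 2) * ∑ i, ∫⁻ ξ : Fin d → ℝ, ENNReal.ofReal (ξ i ^ 2)
          ∂(stdGaussian d) := by
        rw [lintegral_finset_sum _ fun i _ => by fun_prop]
    _ = ENNReal.ofReal (4 * σ ^ 2) * d := by
        simp_rw [lintegral_eval_sq]
        rw [Finset.sum_const, Finset.card_univ, Fintype.card_fin, nsmul_eq_mul, mul_one]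
    _ = ENNReal.ofReal (4 * (σ ^ 2 * d)) := by
        rw [← ENNReal.ofReal_natCast d, ← ENNReal.ofReal_mul (by positivity : (0:ℝ) ≤ 4 * σ ^ 2)]
        congr 1
        ring

lemma riskB {d : ℕ} {p σ : ℝ} (hp0 : 0 < p) (hp1 : p < 1)
    {proj : (Fin d → ℝ) → Fin d → ℝ} (hproj : IsProjOn (lpBall d p) proj)
    {θ : Fin d → ℝ} (hθ : θ ∈ lpBall d p) :
    risk proj σ θ ≤ ENNReal.ofReal (4 * 1) := by
  have hpt : ∀ ξ : Fin d → ℝ, ENNReal.ofReal (sqDist (proj (θ + σ • ξ)) θ)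
      ≤ ENNReal.ofReal 4 := fun ξ =>
    ENNReal.ofReal_le_ofReal (pointwise_ball hp0 hp1 hθ (hproj (θ + σ • ξ)).1)
  calc risk proj σ θ ≤ ∫⁻ _ξ, ENNReal.ofReal 4 ∂(stdGaussian d) := lintegral_mono hpt
    _ = ENNReal.ofReal 4 := by rw [lintegral_const, measure_univ, mul_one]
    _ = ENNReal.ofReal (4 * 1) := by norm_num

lemma integrable_phi_sq {d : ℕ} {p ε : ℝ} (hp : p ≠ 0) (hε : 0 < ε) :
    Integrable (fun ξ : Fin d → ℝ => Phi p ε ξ ^ 2) (stdGaussian d) := by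
  have hbound : Integrable (fun ξ : Fin d → ℝ => ε ^ 2 * ∑ i, ξ i ^ 2) (stdGaussian d) :=
    (integrable_finset_sum _ fun i _ => integrable_eval_sq d i).const_mul _
  refine hbound.mono' ((phi_continuous hp hε.le).pow 2).aestronglyMeasurable ?_
  refine ae_of_all _ fun ξ => ?_
  have h0 := phi_nonneg hp hε.le ξ
  have h1 := phi_le hp hε.le ξ
  have hsum : (0:ℝ) ≤ ∑ i, ξ i ^ 2 := Finset.sum_nonneg fun i _ => sq_nonneg _
  rw [Real.norm_eq_abs, abs_of_nonneg (by positivity)]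
  calc Phi p ε ξ ^ 2 ≤ (ε * Real.sqrt (∑ i, ξ i ^ 2)) ^ 2 :=
        pow_le_pow_left₀ h0 h1 2
    _ = ε ^ 2 * ∑ i, ξ i ^ 2 := by
        rw [mul_pow, Real.sq_sqrt hsum]

lemma riskC {d : ℕ} {p σ : ℝ} (hp0 : 0 < p) (hp1 : p < 1) (hσ : 0 < σ)
    {proj : (Fin d → ℝ) → Fin d → ℝ} (hproj : IsProjOn (lpBall d p) proj)
    {θ : Fin d → ℝ} (hθ : θ ∈ lpBall d p) {ε : ℝ} (hε : 0 < ε) :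
    risk proj σ θ ≤ ENNReal.ofReal (4 * (ε ^ 2 + σ ^ 2 / ε ^ 2
      * ∫ ξ, Phi p ε ξ ^ 2 ∂(stdGaussian d))) := by
  have hInt : Integrable (fun ξ : Fin d → ℝ => Phi p ε ξ ^ 2) (stdGaussian d) :=
    integrable_phi_sq hp0.ne' hε
  have hg : Integrable (fun ξ : Fin d → ℝ => ε ^ 2 + 4 * σ ^ 2 / ε ^ 2 * Phi p ε ξ ^ 2)
      (stdGaussian d) := (integrable_const _).add (hInt.const_mul _)
  have hpt : ∀ ξ : Fin d → ℝ, ENNReal.ofReal (sqDist (proj (θ + σ • ξ)) θ)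
      ≤ ENNReal.ofReal (ε ^ 2 + 4 * σ ^ 2 / ε ^ 2 * Phi p ε ξ ^ 2) := fun ξ =>
    ENNReal.ofReal_le_ofReal
      (pointwise_loc hp0 hp1 hσ hε hθ (hproj (θ + σ • ξ)).1 ((hproj (θ + σ • ξ)).2 θ hθ))
  have hInn : (0:ℝ) ≤ ∫ ξ, Phi p ε ξ ^ 2 ∂(stdGaussian d) :=
    integral_nonneg fun ξ => sq_nonneg _
  calc risk proj σ θ
      ≤ ∫⁻ ξ, ENNReal.ofReal (ε ^ 2 + 4 * σ ^ 2 / ε ^ 2 * Phi p ε ξ ^ 2) ∂(stdGaussian d) :=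
        lintegral_mono hpt
    _ = ENNReal.ofReal (∫ ξ, (ε ^ 2 + 4 * σ ^ 2 / ε ^ 2 * Phi p ε ξ ^ 2) ∂(stdGaussian d)) :=
        (ofReal_integral_eq_lintegral_ofReal hg
          (ae_of_all _ fun ξ => by positivity)).symm
    _ = ENNReal.ofReal (ε ^ 2 + 4 * σ ^ 2 / ε ^ 2 * ∫ ξ, Phi p ε ξ ^ 2 ∂(stdGaussian d)) := by
        rw [integral_add (integrable_const _) (hInt.const_mul _), integral_const,
          integral_const_mul, probReal_univ]
        simp
    _ ≤ ENNReal.ofReal (4 * (ε ^ 2 + σ ^ 2 / ε ^ 2 * ∫ ξ, Phi p ε ξ ^ 2 ∂(stdGaussian d))) := by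
        refine ENNReal.ofReal_le_ofReal ?_
        have h1 : 4 * σ ^ 2 / ε ^ 2 * ∫ ξ, Phi p ε ξ ^ 2 ∂(stdGaussian d)
            = 4 * (σ ^ 2 / ε ^ 2 * ∫ ξ, Phi p ε ξ ^ 2 ∂(stdGaussian d)) := by ring
        have h2 : (0:ℝ) ≤ ε ^ 2 := sq_nonneg ε
        rw [h1]
        linarith

lemma riskC' {d : ℕ} {p σ : ℝ} (hp0 : 0 < p) (hp1 : p < 1) (hσ : 0 < σ)
    {proj : (Fin d → ℝ) → Fin d → ℝ} (hproj : IsProjOn (lpBall d p) proj)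
    {θ : Fin d → ℝ} (hθ : θ ∈ lpBall d p) :
    risk proj σ θ ≤ ENNReal.ofReal (4 * epsPSq d p σ) := by
  set F : {e : ℝ // 0 < e} → ℝ := fun ε =>
    (ε : ℝ) ^ 2 + σ ^ 2 / (ε : ℝ) ^ 2 * ∫ ξ, Phi p (ε : ℝ) ξ ^ 2 ∂(stdGaussian d) with hF
  have hEps : epsPSq d p σ = ⨅ ε, F ε := rfl
  refine ENNReal.le_of_forall_pos_le_add fun δ hδ _ => ?_
  have hlt : (⨅ ε, F ε) < (⨅ ε, F ε) + (δ : ℝ) / 4 := by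
    have : (0:ℝ) < (δ:ℝ) / 4 := by positivity
    linarith
  obtain ⟨ε, hεlt⟩ := exists_lt_of_ciInf_lt hlt
  calc risk proj σ θ ≤ ENNReal.ofReal (4 * F ε) := riskC hp0 hp1 hσ hproj hθ ε.2
    _ ≤ ENNReal.ofReal (4 * epsPSq d p σ + δ) := by
        refine ENNReal.ofReal_le_ofReal ?_
        rw [hEps]
        have h4 : 4 * F ε < 4 * ((⨅ ε, F ε) + (δ : ℝ) / 4) :=
          (mul_lt_mul_iff_right₀ (by norm_num)).mpr hεlt
        have h5 : 4 * ((⨅ ε, F ε) + (δ : ℝ) / 4) = 4 * (⨅ ε, F ε) + (δ : ℝ) := by ring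
        rw [h5] at h4
        exact h4.le
    _ ≤ ENNReal.ofReal (4 * epsPSq d p σ) + ENNReal.ofReal δ := ENNReal.ofReal_add_le
    _ = ENNReal.ofReal (4 * epsPSq d p σ) + δ := by rw [ENNReal.ofReal_coe_nnreal]

end MleAux

/-- For `p ∈ (0,1)`, the worst-case risk of the MLE over the unit ℓp
ball satisfies `R^MLE(B_p^d, σ) ≤ 4·min{σ²d, 1, ε_p(σ)²}`. -/
theorem mle_risk_bound_weak_sparse_fixed_point (d : ℕ) (p : ℝ) (hp0 : 0 < p) (hp1 : p < 1)
    (σ : ℝ) (hσ : 0 < σ)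
    (proj : (Fin d → ℝ) → Fin d → ℝ) (hproj : IsProjOn (lpBall d p) proj)
    (hmeas : Measurable proj) :
    supRisk (lpBall d p) proj σ ≤
      ENNReal.ofReal (4 * min (σ ^ 2 * d) (min 1 (epsPSq d p σ))) := by
  have hmono : Monotone ENNReal.ofReal := fun a b h => ENNReal.ofReal_le_ofReal h
  have h4 : ∀ a b : ℝ, 4 * min a b = min (4 * a) (4 * b) := fun a b => by
    rcases le_total a b with h | h
    · rw [min_eq_left h, min_eq_left (by linarith)]
    · rw [min_eq_right h, min_eq_right (by linarith)]
  rw [h4, h4, hmono.map_min, hmono.map_min]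
  refine iSup₂_le fun θ hθ => ?_
  refine le_min (MleAux.riskA hσ hproj hθ) (le_min (MleAux.riskB hp0 hp1 hproj hθ) ?_)
  exact MleAux.riskC' hp0 hp1 hσ hproj hθ
end
end

section
/- There is a universal constant C > 0 such that for every p ∈ (1, 2) with q = p/(p − 1), and every σ with d^{−1/p} ≤ σ ≤ 1/√(1 + log d), the worst-case risk of the maximum likelihood estimator over the unit ℓp ball satisfies R^MLE(B_p^d, σ) ≤ C · min{ 1, σ·√q·d^{1/q} }. -/
open MeasureTheory ProbabilityTheory Real Filter Pointwise
open scoped ENNReal NNReal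

noncomputable section

namespace MLEAux

variable {d : ℕ}

lemma sum_abs_rpow_nonneg (p : ℝ) (x : Fin d → ℝ) : 0 ≤ ∑ i, |x i| ^ p :=
  Finset.sum_nonneg fun _ _ => Real.rpow_nonneg (abs_nonneg _) _

lemma pNorm_nonneg (p : ℝ) (x : Fin d → ℝ) : 0 ≤ pNorm p x :=
  Real.rpow_nonneg (sum_abs_rpow_nonneg p x) _

lemma pNorm_triangle {p : ℝ} (hp : 1 ≤ p) (a b : Fin d → ℝ) :
    pNorm p (fun i => a i + b i) ≤ pNorm p a + pNorm p b := by
  have h1 : pNorm p (fun i => a i + b i) ≤ (∑ i, (|a i| + |b i|) ^ p) ^ (1 / p) := by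
    apply Real.rpow_le_rpow (sum_abs_rpow_nonneg _ _)
    · exact Finset.sum_le_sum fun i _ =>
        Real.rpow_le_rpow (abs_nonneg _) (abs_add_le _ _) (by linarith)
    · positivity
  exact h1.trans
    (Real.Lp_add_le_of_nonneg Finset.univ hp (fun i _ => abs_nonneg (a i)) (fun i _ => abs_nonneg (b i)))

lemma pNorm_smul {p : ℝ} (hp : 0 < p) (c : ℝ) (x : Fin d → ℝ) :
    pNorm p (fun i => c * x i) = |c| * pNorm p x := by
  unfold pNorm
  have h : ∀ i : Fin d, |c * x i| ^ p = |c| ^ p * |x i| ^ p := fun i => by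
    rw [abs_mul, Real.mul_rpow (abs_nonneg _) (abs_nonneg _)]
  simp_rw [h, ← Finset.mul_sum]
  rw [Real.mul_rpow (Real.rpow_nonneg (abs_nonneg _) _) (sum_abs_rpow_nonneg _ _),
    ← Real.rpow_mul (abs_nonneg c), mul_one_div, div_self hp.ne', Real.rpow_one]

lemma lpBall_convex {p : ℝ} (hp : 1 ≤ p) {a b : Fin d → ℝ} (ha : a ∈ lpBall d p)
    (hb : b ∈ lpBall d p) {t : ℝ} (ht0 : 0 ≤ t) (ht1 : t ≤ 1) :
    (fun i => (1 - t) * a i + t * b i) ∈ lpBall d p := by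
  have hp0 : (0:ℝ) < p := lt_of_lt_of_le one_pos hp
  have ha' : pNorm p a ≤ 1 := ha
  have hb' : pNorm p b ≤ 1 := hb
  have hna := pNorm_nonneg p a
  have hnb := pNorm_nonneg p b
  show pNorm p _ ≤ 1
  calc pNorm p (fun i => (1 - t) * a i + t * b i)
      ≤ pNorm p (fun i => (1 - t) * a i) + pNorm p (fun i => t * b i) :=
        pNorm_triangle hp _ _
    _ = |1 - t| * pNorm p a + |t| * pNorm p b := by
        rw [pNorm_smul hp0, pNorm_smul hp0]
    _ ≤ 1 := by
        rw [abs_of_nonneg (by linarith), abs_of_nonneg ht0]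
        nlinarith

lemma proj_inner {p : ℝ} (hp : 1 ≤ p) {proj : (Fin d → ℝ) → Fin d → ℝ}
    (hproj : IsProjOn (lpBall d p) proj) {θ : Fin d → ℝ} (hθ : θ ∈ lpBall d p)
    (y : Fin d → ℝ) :
    sqDist (proj y) θ ≤ ∑ i, (y i - θ i) * (proj y i - θ i) := by
  set P := proj y with hP
  have hPmem : P ∈ lpBall d p := (hproj y).1
  have hmin := (hproj y).2
  set D := ∑ i, (y i - P i) * (θ i - P i) with hD
  set S := ∑ i, (θ i - P i) ^ 2 with hS
  have hS0 : 0 ≤ S := Finset.sum_nonneg fun i _ => sq_nonneg _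
  have key : ∀ t : ℝ, 0 < t → t ≤ 1 → 2 * t * D ≤ t ^ 2 * S := by
    intro t ht0 ht1
    have hz : (fun i => (1 - t) * P i + t * θ i) ∈ lpBall d p :=
      lpBall_convex hp hPmem hθ ht0.le ht1
    have h := hmin _ hz
    have expand : sqDist y (fun i => (1 - t) * P i + t * θ i)
        = sqDist y P - 2 * t * D + t ^ 2 * S := by
      simp only [sqDist, hD, hS, Finset.mul_sum, ← Finset.sum_sub_distrib,
        ← Finset.sum_add_distrib]
      exact Finset.sum_congr rfl fun i _ => by ring
    rw [expand] at h
    linarith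
  have hD0 : D ≤ 0 := by
    by_contra hD'
    push_neg at hD'
    rcases eq_or_lt_of_le hS0 with hSeq | hSpos
    · have h1 := key 1 one_pos le_rfl
      rw [← hSeq] at h1
      nlinarith
    · have ht0 : 0 < min 1 (D / S) := lt_min one_pos (div_pos hD' hSpos)
      have h2 := key _ ht0 (min_le_left _ _)
      have hts : min 1 (D / S) * S ≤ D := by
        calc min 1 (D / S) * S ≤ D / S * S :=
              mul_le_mul_of_nonneg_right (min_le_right _ _) hS0
          _ = D := div_mul_cancel₀ _ hSpos.ne'
      nlinarith [min_le_left (1:ℝ) (D / S)]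
  have ident : ∀ i : Fin d, (P i - θ i) ^ 2
      = (y i - θ i) * (P i - θ i) + (y i - P i) * (θ i - P i) := fun i => by ring
  have : sqDist P θ = ∑ i, (y i - θ i) * (P i - θ i) + D := by
    rw [sqDist, hD, ← Finset.sum_add_distrib]
    exact Finset.sum_congr rfl fun i _ => ident i
  linarith

lemma sum_sq_le_pNorm {p : ℝ} (hp1 : 1 ≤ p) (hp2 : p ≤ 2) (x : Fin d → ℝ) :
    ∑ i, x i ^ 2 ≤ pNorm p x ^ 2 := by
  have hp0 : (0:ℝ) < p := by linarith
  set T := ∑ i, |x i| ^ p with hT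
  have hT0 : 0 ≤ T := sum_abs_rpow_nonneg p x
  rcases eq_or_lt_of_le hT0 with hTeq | hTpos
  · have hx : ∀ i ∈ Finset.univ, |x i| ^ p = (0:ℝ) :=
      (Finset.sum_eq_zero_iff_of_nonneg
        (fun i _ => Real.rpow_nonneg (abs_nonneg _) _)).1 hTeq.symm
    have hx' : ∀ i : Fin d, x i = 0 := by
      intro i
      have h := hx i (Finset.mem_univ i)
      have h2 := (Real.rpow_eq_zero_iff_of_nonneg (abs_nonneg (x i))).1 h
      exact abs_eq_zero.1 h2.1
    have hz : ∑ i, x i ^ 2 = 0 := by simp [hx']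
    rw [hz]
    positivity
  · have hstep : ∀ i : Fin d, x i ^ 2 ≤ T ^ (2 / p - 1) * |x i| ^ p := by
      intro i
      have hxa : (0:ℝ) ≤ |x i| := abs_nonneg _
      rcases eq_or_lt_of_le hxa with h0 | h0
      · rw [← sq_abs, ← h0]
        have : (0:ℝ) ^ p = 0 := Real.zero_rpow hp0.ne'
        rw [this]
        norm_num
      · have hai : (0:ℝ) < |x i| ^ p := Real.rpow_pos_of_pos h0 p
        have hile : |x i| ^ p ≤ T :=
          Finset.single_le_sum (f := fun j => |x j| ^ p)
            (fun j _ => Real.rpow_nonneg (abs_nonneg _) _) (Finset.mem_univ i)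
        have hxx : x i ^ 2 = (|x i| ^ p) ^ (2 / p) := by
          rw [← Real.rpow_mul hxa]
          have e2 : p * (2 / p) = 2 := by field_simp
          rw [e2, ← sq_abs]
          exact (Real.rpow_two _).symm ▸ (Real.rpow_natCast |x i| 2).symm ▸ rfl
        have hexp : (0:ℝ) ≤ 2 / p - 1 := by
          have : (1:ℝ) ≤ 2 / p := (le_div_iff₀ hp0).2 (by linarith)
          linarith
        have hsplit : (|x i| ^ p) ^ (2 / p) = (|x i| ^ p) ^ (2 / p - 1) * |x i| ^ p := by
          rw [← Real.rpow_add_one hai.ne' (2 / p - 1)]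
          congr 1
          ring
        rw [hxx, hsplit]
        exact mul_le_mul_of_nonneg_right
          (Real.rpow_le_rpow hai.le hile hexp) hai.le
    calc ∑ i, x i ^ 2 ≤ ∑ i, T ^ (2 / p - 1) * |x i| ^ p :=
          Finset.sum_le_sum fun i _ => hstep i
      _ = T ^ (2 / p - 1) * T := by rw [← Finset.mul_sum, ← hT]
      _ = T ^ (2 / p) := by
          rw [← Real.rpow_add_one hTpos.ne' (2 / p - 1)]
          congr 1
          ring
      _ = pNorm p x ^ 2 := by
          rw [pNorm, ← hT, ← Real.rpow_natCast (T ^ (1 / p)) 2, ← Real.rpow_mul hT0]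
          congr 1
          push_cast
          ring

lemma sqDist_bound {p q σ : ℝ} (hp1 : 1 < p) (hp2 : p < 2) (hq : q = p / (p - 1))
    (hσ : 0 < σ) {proj : (Fin d → ℝ) → Fin d → ℝ} (hproj : IsProjOn (lpBall d p) proj)
    {θ : Fin d → ℝ} (hθ : θ ∈ lpBall d p) (ξ : Fin d → ℝ) :
    sqDist (proj (θ + σ • ξ)) θ ≤ min 4 (2 * σ * pNorm q ξ) := by
  have hpq : p.HolderConjugate q := (Real.holderConjugate_iff_eq_conjExponent hp1).2 hq
  set y := θ + σ • ξ with hy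
  set P := proj y with hP
  have hPmem : P ∈ lpBall d p := (hproj y).1
  have hP1 : pNorm p P ≤ 1 := hPmem
  have hθ1 : pNorm p θ ≤ 1 := hθ
  have hsub : pNorm p (fun i => P i - θ i) ≤ 2 := by
    have h1 : pNorm p (fun i => P i + (-1) * θ i)
        ≤ pNorm p P + pNorm p (fun i => (-1) * θ i) := by
      have := pNorm_triangle (d := d) hp1.le P (fun i => (-1) * θ i)
      simpa using this
    have h2 : pNorm p (fun i => (-1 : ℝ) * θ i) = pNorm p θ := by
      rw [pNorm_smul (by linarith : (0:ℝ) < p) (-1) θ]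
      simp
    calc pNorm p (fun i => P i - θ i) = pNorm p (fun i => P i + (-1) * θ i) := by
          congr 1; funext i; ring
      _ ≤ pNorm p P + pNorm p (fun i => (-1) * θ i) := h1
      _ = pNorm p P + pNorm p θ := by rw [h2]
      _ ≤ 2 := by linarith
  have hsub0 : 0 ≤ pNorm p (fun i => P i - θ i) := pNorm_nonneg _ _
  -- bound by 4
  have hbound4 : sqDist P θ ≤ 4 := by
    have h1 : sqDist P θ ≤ pNorm p (fun i => P i - θ i) ^ 2 := by
      have := sum_sq_le_pNorm (d := d) hp1.le hp2.le (fun i => P i - θ i)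
      simpa [sqDist] using this
    have h2 : pNorm p (fun i => P i - θ i) ^ 2 ≤ 2 ^ 2 :=
      pow_le_pow_left₀ hsub0 hsub 2
    norm_num at h2
    linarith
  -- bound by Hölder
  have hqnn : 0 ≤ pNorm q ξ := pNorm_nonneg _ _
  have hbound2 : sqDist P θ ≤ 2 * σ * pNorm q ξ := by
    have hpi := proj_inner hp1.le hproj hθ y
    have hyθ : ∀ i, y i - θ i = σ * ξ i := by
      intro i
      simp [hy, Pi.add_apply, Pi.smul_apply, smul_eq_mul]
    have step1 : ∑ i, (y i - θ i) * (P i - θ i) = σ * ∑ i, ξ i * (P i - θ i) := by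
      rw [Finset.mul_sum]
      exact Finset.sum_congr rfl fun i _ => by rw [hyθ i]; ring
    have step2 : ∑ i, ξ i * (P i - θ i) ≤ ∑ i, |P i - θ i| * |ξ i| :=
      Finset.sum_le_sum fun i _ => by
        calc ξ i * (P i - θ i) ≤ |ξ i * (P i - θ i)| := le_abs_self _
          _ = |P i - θ i| * |ξ i| := by rw [abs_mul]; ring
    have step3 : ∑ i, |P i - θ i| * |ξ i|
        ≤ (∑ i, |P i - θ i| ^ p) ^ (1 / p) * (∑ i, |ξ i| ^ q) ^ (1 / q) :=
      Real.inner_le_Lp_mul_Lq_of_nonneg Finset.univ hpq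
        (fun i _ => abs_nonneg _) (fun i _ => abs_nonneg _)
    have step4 : (∑ i, |P i - θ i| ^ p) ^ (1 / p) * (∑ i, |ξ i| ^ q) ^ (1 / q)
        ≤ 2 * pNorm q ξ := by
      have : (∑ i, |P i - θ i| ^ p) ^ (1 / p) = pNorm p (fun i => P i - θ i) := rfl
      rw [this]
      exact mul_le_mul_of_nonneg_right hsub hqnn
    have hsum : ∑ i, ξ i * (P i - θ i) ≤ 2 * pNorm q ξ :=
      le_trans step2 (le_trans step3 step4)
    calc sqDist P θ ≤ ∑ i, (y i - θ i) * (P i - θ i) := hpi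
      _ = σ * ∑ i, ξ i * (P i - θ i) := step1
      _ ≤ σ * (2 * pNorm q ξ) := mul_le_mul_of_nonneg_left hsum hσ.le
      _ = 2 * σ * pNorm q ξ := by ring
  exact le_min hbound4 hbound2

lemma stdGaussian_isProb (d : ℕ) : IsProbabilityMeasure (stdGaussian d) := by
  unfold _root_.stdGaussian
  infer_instance

lemma stdGaussian_map_eval (d : ℕ) (i : Fin d) :
    (stdGaussian d).map (Function.eval i) = gaussianReal 0 1 := by
  apply Measure.ext fun s hs => ?_
  rw [Measure.map_apply (measurable_pi_apply i) hs]
  rw [show Function.eval i ⁻¹' s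
      = Set.pi Set.univ (Function.update (fun _ : Fin d => (Set.univ : Set ℝ)) i s)
    from Set.eval_preimage]
  rw [_root_.stdGaussian, Measure.pi_pi]
  rw [Fintype.prod_eq_single i (fun j hj => by
    rw [Function.update_of_ne hj]
    exact measure_univ)]
  rw [Function.update_self]

lemma lintegral_eval (d : ℕ) (i : Fin d) {h : ℝ → ℝ≥0∞} (hh : Measurable h) :
    ∫⁻ ξ, h (ξ i) ∂(stdGaussian d) = ∫⁻ x, h x ∂(gaussianReal 0 1) := by
  rw [← stdGaussian_map_eval d i, lintegral_map hh (measurable_pi_apply i)]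

lemma lintegral_exp_sq_quarter :
    ∫⁻ x, ENNReal.ofReal (Real.exp (x ^ 2 / 4)) ∂(gaussianReal 0 1)
      = ENNReal.ofReal (Real.sqrt 2) := by
  have hπ : (0:ℝ) < π := Real.pi_pos
  rw [gaussianReal_of_var_ne_zero 0 one_ne_zero]
  rw [lintegral_withDensity_eq_lintegral_mul _ (measurable_gaussianPDF 0 1)
    (by measurability)]
  have hptwise : ∀ x : ℝ, (gaussianPDF 0 1 * fun x => ENNReal.ofReal (Real.exp (x ^ 2 / 4))) x
      = ENNReal.ofReal ((Real.sqrt (2 * π))⁻¹) * ENNReal.ofReal (Real.exp (-(1/4) * x ^ 2)) := by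
    intro x
    simp only [Pi.mul_apply, gaussianPDF, gaussianPDFReal]
    rw [← ENNReal.ofReal_mul (by positivity), ← ENNReal.ofReal_mul (by positivity)]
    congr 1
    simp only [NNReal.coe_one, mul_one, sub_zero]
    rw [mul_assoc, ← Real.exp_add]
    congr 1
    exact congrArg Real.exp (by ring)
  rw [lintegral_congr hptwise]
  rw [lintegral_const_mul' _ _ ENNReal.ofReal_ne_top]
  rw [← ofReal_integral_eq_lintegral_ofReal
    (integrable_exp_neg_mul_sq (by norm_num : (0:ℝ) < 1/4))
    (Filter.Eventually.of_forall fun x => (Real.exp_pos _).le)]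
  rw [integral_gaussian]
  rw [← ENNReal.ofReal_mul (by positivity)]
  congr 1
  have h4 : π / (1/4 : ℝ) = 2 * (2 * π) := by ring
  rw [h4, Real.sqrt_mul (by norm_num : (0:ℝ) ≤ 2)]
  have hne : Real.sqrt (2 * π) ≠ 0 := by positivity
  field_simp
  rw [Real.sqrt_mul (by positivity), Real.sqrt_sq (by norm_num), Real.sq_sqrt (by norm_num)]

lemma abs_rpow_le_exp {q : ℝ} (hq : 0 < q) (x : ℝ) :
    |x| ^ q ≤ (2 * q) ^ (q / 2) * Real.exp (x ^ 2 / 4) := by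
  have hq2 : (0:ℝ) < 2 * q := by linarith
  rcases eq_or_ne x 0 with rfl | hx
  · rw [abs_zero, Real.zero_rpow hq.ne']
    positivity
  · have hx0 : 0 < |x| := abs_pos.2 hx
    have hx2 : (0:ℝ) < x ^ 2 := by positivity
    have hu : (0:ℝ) < x ^ 2 / (2 * q) := by positivity
    have hlog : Real.log (x ^ 2 / (2 * q)) ≤ x ^ 2 / (2 * q) - 1 :=
      Real.log_le_sub_one_of_pos hu
    have hlx : Real.log (x ^ 2) = Real.log (2 * q) + Real.log (x ^ 2 / (2 * q)) := by
      rw [← Real.log_mul hq2.ne' hu.ne']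
      congr 1
      field_simp
    have h2 : Real.log |x| = Real.log (x ^ 2) / 2 := by
      rw [← sq_abs, Real.log_pow]
      push_cast
      ring
    have h1 : |x| ^ q = Real.exp (q * Real.log |x|) := by
      rw [Real.rpow_def_of_pos hx0, mul_comm]
    have h3 : (2 * q) ^ (q / 2) * Real.exp (x ^ 2 / 4)
        = Real.exp (q / 2 * Real.log (2 * q) + x ^ 2 / 4) := by
      rw [Real.rpow_def_of_pos hq2, ← Real.exp_add,
        mul_comm (Real.log (2 * q)) (q / 2)]
    rw [h1, h3]
    apply Real.exp_le_exp.2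
    rw [h2, hlx]
    have hkey : q / 2 * (x ^ 2 / (2 * q)) = x ^ 2 / 4 := by
      field_simp
      ring
    nlinarith [mul_le_mul_of_nonneg_left hlog (by positivity : (0:ℝ) ≤ q / 2)]

lemma moment_bound {q : ℝ} (hq : 0 < q) :
    ∫⁻ x, ENNReal.ofReal |x| ^ q ∂(gaussianReal 0 1)
      ≤ ENNReal.ofReal ((2 * q) ^ (q / 2) * Real.sqrt 2) := by
  calc ∫⁻ x, ENNReal.ofReal |x| ^ q ∂(gaussianReal 0 1)
      ≤ ∫⁻ x, ENNReal.ofReal ((2 * q) ^ (q / 2))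
          * ENNReal.ofReal (Real.exp (x ^ 2 / 4)) ∂(gaussianReal 0 1) := by
        apply lintegral_mono fun x => ?_
        rw [ENNReal.ofReal_rpow_of_nonneg (abs_nonneg x) hq.le,
          ← ENNReal.ofReal_mul (by positivity)]
        exact ENNReal.ofReal_le_ofReal (abs_rpow_le_exp hq x)
    _ = ENNReal.ofReal ((2 * q) ^ (q / 2)) * ENNReal.ofReal (Real.sqrt 2) := by
        rw [lintegral_const_mul' _ _ ENNReal.ofReal_ne_top, lintegral_exp_sq_quarter]
    _ = _ := by rw [← ENNReal.ofReal_mul (by positivity)]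


lemma lintegral_pNorm_le {q : ℝ} (hq : 1 < q) :
    ∫⁻ ξ, ENNReal.ofReal (pNorm q ξ) ∂(stdGaussian d)
      ≤ ((d : ℝ≥0∞) * ENNReal.ofReal ((2 * q) ^ (q / 2) * Real.sqrt 2)) ^ (1 / q) := by
  have hq0 : (0:ℝ) < q := by linarith
  haveI := stdGaussian_isProb d
  set G : (Fin d → ℝ) → ℝ≥0∞ := fun ξ => ∑ i, ENNReal.ofReal |ξ i| ^ q with hG
  have hGmeas : Measurable G :=
    Finset.measurable_sum _ fun i _ =>
      ((measurable_pi_apply i).abs.ennreal_ofReal).pow measurable_const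
  have hGof : ∀ ξ : Fin d → ℝ, ENNReal.ofReal (pNorm q ξ) = G ξ ^ (1 / q) := by
    intro ξ
    rw [pNorm, ← ENNReal.ofReal_rpow_of_nonneg (sum_abs_rpow_nonneg q ξ) (by positivity)]
    congr 1
    rw [ENNReal.ofReal_sum_of_nonneg (fun i _ => Real.rpow_nonneg (abs_nonneg _) _)]
    exact Finset.sum_congr rfl fun i _ =>
      (ENNReal.ofReal_rpow_of_nonneg (abs_nonneg _) hq0.le).symm
  have hconj : q.HolderConjugate (q / (q - 1)) := Real.HolderConjugate.conjExponent hq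
  have hf : AEMeasurable (fun ξ => G ξ ^ (1 / q)) (stdGaussian d) :=
    (hGmeas.pow measurable_const).aemeasurable
  have H := ENNReal.lintegral_mul_le_Lp_mul_Lq (stdGaussian d) hconj hf
    (aemeasurable_const (b := (1 : ℝ≥0∞)))
  simp only [Pi.mul_apply, mul_one, ENNReal.one_rpow, lintegral_one, measure_univ,
    ← ENNReal.rpow_mul, one_div_mul_cancel hq0.ne', ENNReal.rpow_one] at H
  calc ∫⁻ ξ, ENNReal.ofReal (pNorm q ξ) ∂(stdGaussian d)
      = ∫⁻ ξ, G ξ ^ (1 / q) ∂(stdGaussian d) := lintegral_congr hGof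
    _ ≤ (∫⁻ ξ, G ξ ∂(stdGaussian d)) ^ (1 / q) := H
    _ ≤ _ := by
        apply ENNReal.rpow_le_rpow _ (by positivity)
        have hmeas1 : Measurable fun x : ℝ => ENNReal.ofReal |x| ^ q :=
          (measurable_abs.ennreal_ofReal).pow measurable_const
        rw [hG, lintegral_finset_sum _ fun i _ =>
          ((measurable_pi_apply i).abs.ennreal_ofReal).pow measurable_const]
        calc ∑ i : Fin d, ∫⁻ ξ, ENNReal.ofReal |ξ i| ^ q ∂(stdGaussian d)
            = ∑ _i : Fin d, ∫⁻ x, ENNReal.ofReal |x| ^ q ∂(gaussianReal 0 1) :=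
              Finset.sum_congr rfl fun i _ => lintegral_eval d i hmeas1
          _ = (d : ℝ≥0∞) * ∫⁻ x, ENNReal.ofReal |x| ^ q ∂(gaussianReal 0 1) := by
              rw [Finset.sum_const, Finset.card_univ, Fintype.card_fin, nsmul_eq_mul]
          _ ≤ (d : ℝ≥0∞) * ENNReal.ofReal ((2 * q) ^ (q / 2) * Real.sqrt 2) :=
              mul_le_mul_right (moment_bound hq0) _

lemma num_bound {q : ℝ} (hq : 1 < q) {d : ℕ} (hd : 1 ≤ d) :
    ((d : ℝ≥0∞) * ENNReal.ofReal ((2 * q) ^ (q / 2) * Real.sqrt 2)) ^ (1 / q)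
      ≤ ENNReal.ofReal ((d : ℝ) ^ (1 / q) * (2 * Real.sqrt q)) := by
  have hq0 : (0:ℝ) < q := by linarith
  have hd0 : (0:ℝ) < d := by exact_mod_cast hd
  rw [show (d : ℝ≥0∞) = ENNReal.ofReal (d : ℝ) from (ENNReal.ofReal_natCast d).symm,
    ← ENNReal.ofReal_mul hd0.le, ENNReal.ofReal_rpow_of_nonneg (by positivity) (by positivity)]
  apply ENNReal.ofReal_le_ofReal
  rw [Real.mul_rpow hd0.le (by positivity)]
  apply mul_le_mul_of_nonneg_left _ (Real.rpow_nonneg hd0.le _)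
  rw [Real.mul_rpow (by positivity) (Real.sqrt_nonneg 2), ← Real.rpow_mul (by positivity : (0:ℝ) ≤ 2 * q)]
  have e1 : q / 2 * (1 / q) = 1 / 2 := by field_simp
  rw [e1, ← Real.sqrt_eq_rpow, Real.sqrt_mul (by norm_num : (0:ℝ) ≤ 2) q]
  have h2 : Real.sqrt 2 ^ (1 / q) ≤ Real.sqrt 2 := by
    nth_rewrite 2 [show Real.sqrt 2 = Real.sqrt 2 ^ (1:ℝ) from (Real.rpow_one _).symm]
    apply Real.rpow_le_rpow_of_exponent_le (Real.one_le_sqrt.2 (by norm_num))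
    rw [div_le_one hq0]
    linarith
  have h22 : Real.sqrt 2 * Real.sqrt 2 = 2 := Real.mul_self_sqrt (by norm_num)
  have hs2 : (0:ℝ) ≤ Real.sqrt 2 := Real.sqrt_nonneg 2
  have hsq : (0:ℝ) ≤ Real.sqrt q := Real.sqrt_nonneg q
  calc Real.sqrt 2 * Real.sqrt q * Real.sqrt 2 ^ (1 / q)
      ≤ Real.sqrt 2 * Real.sqrt q * Real.sqrt 2 :=
        mul_le_mul_of_nonneg_left h2 (by positivity)
    _ = 2 * Real.sqrt q := by rw [mul_comm (Real.sqrt 2 * Real.sqrt q), ← mul_assoc, h22]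


end MLEAux

/-- There is a universal constant `C > 0` such that for every `d ≥ 1`,
every `p ∈ (1, 2)` with conjugate `q = p/(p-1)`, and every `σ` with
`d^{-1/p} ≤ σ ≤ 1/√(1 + log d)`, the worst-case risk of the MLE over the unit ℓp ball
satisfies `R^MLE(B_p^d, σ) ≤ C·min{1, σ·√q·d^{1/q}}`. -/
theorem mle_risk_upper_intermediate_noise :
    ∃ C : ℝ, 0 < C ∧ ∀ d : ℕ, 1 ≤ d → ∀ p q : ℝ, 1 < p → p < 2 → q = p / (p - 1) →
      ∀ σ : ℝ, (d : ℝ) ^ (-(1 / p)) ≤ σ → σ ≤ 1 / Real.sqrt (1 + Real.log d) →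
        ∀ proj : (Fin d → ℝ) → Fin d → ℝ, IsProjOn (lpBall d p) proj → Measurable proj →
          supRisk (lpBall d p) proj σ ≤
            ENNReal.ofReal (C * min 1 (σ * Real.sqrt q * (d : ℝ) ^ (1 / q))) := by
  refine ⟨4, by norm_num, ?_⟩
  intro d hd p q hp1 hp2 hq σ hσlow _hσhigh proj hproj _hmeas
  have hd0 : (0:ℝ) < d := by exact_mod_cast hd
  have hσ : 0 < σ := lt_of_lt_of_le (Real.rpow_pos_of_pos hd0 _) hσlow
  have hpq : p.HolderConjugate q := (Real.holderConjugate_iff_eq_conjExponent hp1).2 hq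
  have hq1 : 1 < q := Real.HolderTriple.lt (Real.HolderConjugate.symm hpq)
  have hq0 : (0:ℝ) < q := by linarith
  have hsq : (0:ℝ) < Real.sqrt q := Real.sqrt_pos.2 hq0
  have hdq : (0:ℝ) < (d:ℝ) ^ (1/q) := Real.rpow_pos_of_pos hd0 _
  apply iSup₂_le
  intro θ hθ
  rcases le_total (σ * Real.sqrt q * (d:ℝ) ^ (1/q)) 1 with hle | hle
  · rw [min_eq_right hle]
    calc risk proj σ θ
        ≤ ∫⁻ ξ, ENNReal.ofReal (2 * σ * pNorm q ξ) ∂(stdGaussian d) := by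
          apply lintegral_mono fun ξ => ENNReal.ofReal_le_ofReal ?_
          exact le_trans (MLEAux.sqDist_bound hp1 hp2 hq hσ hproj hθ ξ) (min_le_right _ _)
      _ = ENNReal.ofReal (2 * σ) * ∫⁻ ξ, ENNReal.ofReal (pNorm q ξ) ∂(stdGaussian d) := by
          rw [← lintegral_const_mul' _ _ ENNReal.ofReal_ne_top]
          apply lintegral_congr fun ξ => ?_
          rw [← ENNReal.ofReal_mul (by positivity), mul_assoc]
      _ ≤ ENNReal.ofReal (2 * σ)
          * ((d:ℝ≥0∞) * ENNReal.ofReal ((2*q)^(q/2) * Real.sqrt 2)) ^ (1/q) :=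
          mul_le_mul_right (MLEAux.lintegral_pNorm_le hq1) _
      _ ≤ ENNReal.ofReal (2 * σ) * ENNReal.ofReal ((d:ℝ)^(1/q) * (2 * Real.sqrt q)) :=
          mul_le_mul_right (MLEAux.num_bound hq1 hd) _
      _ = ENNReal.ofReal (4 * (σ * Real.sqrt q * (d:ℝ) ^ (1/q))) := by
          rw [← ENNReal.ofReal_mul (by positivity)]
          congr 1
          ring
  · rw [min_eq_left hle]
    calc risk proj σ θ ≤ ∫⁻ _, ENNReal.ofReal 4 ∂(stdGaussian d) := by
          apply lintegral_mono fun ξ => ENNReal.ofReal_le_ofReal ?_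
          exact le_trans (MLEAux.sqDist_bound hp1 hp2 hq hσ hproj hθ ξ) (min_le_left _ _)
      _ = ENNReal.ofReal 4 := by
          haveI := MLEAux.stdGaussian_isProb d
          rw [lintegral_const, measure_univ, mul_one]
      _ = ENNReal.ofReal (4 * 1) := by norm_num
end
end

section
/- Small-ball estimate for ℓr norms of a Gaussian vector: let D ≥ 44 be an integer and ξ ∼ N(0, I_D). Then for every r ∈ [2, 2·log D], P{ ‖ξ‖_r ≥ (1/√(32e)) · √r · D^{1/r} } ≥ 1/2. -/
open MeasureTheory ProbabilityTheory Real Filter Pointwise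
open scoped ENNReal NNReal

noncomputable section

section Helpers

lemma exp_sq_integrableOn (t : ℝ) :
    IntegrableOn (fun x : ℝ => Real.exp (-x ^ 2 / 2)) (Set.Ioi t) := by
  have h : Integrable (fun x : ℝ => Real.exp (-(1/2) * x ^ 2)) := by
    exact integrable_exp_neg_mul_sq (by norm_num)
  have h2 : (fun x : ℝ => Real.exp (-x ^ 2 / 2)) = fun x : ℝ => Real.exp (-(1/2) * x ^ 2) := by
    funext x; congr 1; ring
  rw [h2]
  exact h.integrableOn

lemma mill (t : ℝ) :
    t / (t ^ 2 + 1) * Real.exp (-t ^ 2 / 2) ≤ ∫ x in Set.Ioi t, Real.exp (-x ^ 2 / 2) := by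
  set F : ℝ → ℝ := fun x => x / (x ^ 2 + 1) * Real.exp (-x ^ 2 / 2) with hF
  set F' : ℝ → ℝ := fun x =>
    (1 * (x ^ 2 + 1) - x * (2 * x)) / (x ^ 2 + 1) ^ 2 * Real.exp (-x ^ 2 / 2)
      + x / (x ^ 2 + 1) * (Real.exp (-x ^ 2 / 2) * -x) with hF'
  have hpos : ∀ x : ℝ, (0:ℝ) < x ^ 2 + 1 := fun x => by positivity
  have hderiv : ∀ x : ℝ, HasDerivAt F (F' x) x := by
    intro x
    have h1 : HasDerivAt (fun y : ℝ => y / (y ^ 2 + 1))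
        ((1 * (x ^ 2 + 1) - x * (2 * x)) / (x ^ 2 + 1) ^ 2) x := by
      have hd : HasDerivAt (fun y : ℝ => y ^ 2 + 1) (2 * x) x := by
        simpa using ((hasDerivAt_pow 2 x).add_const 1)
      simpa using (hasDerivAt_id x).fun_div hd (hpos x).ne'
    have h2 : HasDerivAt (fun y : ℝ => Real.exp (-y ^ 2 / 2)) (Real.exp (-x ^ 2 / 2) * -x) x := by
      have hin : HasDerivAt (fun y : ℝ => -y ^ 2 / 2) (-x) x := by
        have := ((hasDerivAt_pow 2 x).neg).div_const 2
        simpa using this.congr_deriv (by ring)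
      simpa using hin.exp
    exact h1.mul h2
  have hF'eq : ∀ x : ℝ, F' x = (1 - 2 * x ^ 2 - x ^ 4) / (x ^ 2 + 1) ^ 2 * Real.exp (-x ^ 2 / 2) := by
    intro x
    rw [hF']
    field_simp
    ring
  have hintF' : IntegrableOn F' (Set.Ioi t) := by
    apply Integrable.mono' (exp_sq_integrableOn t)
    · have : F' = deriv F := funext fun x => ((hderiv x).deriv).symm
      rw [this]
      exact (measurable_deriv F).aestronglyMeasurable
    · refine ae_of_all _ fun x => ?_
      rw [hF'eq, norm_mul, Real.norm_eq_abs, Real.norm_eq_abs, abs_of_pos (Real.exp_pos _)]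
      have h1 : |(1 - 2 * x ^ 2 - x ^ 4) / (x ^ 2 + 1) ^ 2| ≤ 1 := by
        rw [abs_div, abs_of_pos (by positivity : (0:ℝ) < (x ^ 2 + 1) ^ 2)]
        rw [div_le_one (by positivity)]
        rw [abs_le]
        constructor <;> nlinarith [sq_nonneg x, sq_nonneg (x^2)]
      nlinarith [Real.exp_pos (-x ^ 2 / 2)]
  have hlim : Tendsto F atTop (nhds 0) := by
    have h0 : Tendsto (fun x : ℝ => Real.exp (-x ^ 2 / 2)) atTop (nhds 0) := by
      apply Real.tendsto_exp_atBot.comp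
      have h1 : Tendsto (fun x : ℝ => x ^ 2 / 2) atTop atTop := by
        apply Filter.Tendsto.atTop_div_const (by norm_num)
        exact tendsto_pow_atTop (by norm_num)
      have h2 : Tendsto (fun x : ℝ => -(x ^ 2 / 2)) atTop atBot := tendsto_neg_atTop_atBot.comp h1
      simpa [neg_div] using h2
    apply squeeze_zero' _ _ h0
    · filter_upwards [eventually_ge_atTop (0:ℝ)] with x hx
      have := Real.exp_pos (-x^2/2)
      positivity
    · filter_upwards [eventually_ge_atTop (0:ℝ)] with x hx
      have h1 : x / (x ^ 2 + 1) ≤ 1 := by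
        rw [div_le_one (hpos x)]; nlinarith
      calc F x = x / (x ^ 2 + 1) * Real.exp (-x ^ 2 / 2) := rfl
        _ ≤ 1 * Real.exp (-x ^ 2 / 2) :=
            mul_le_mul_of_nonneg_right h1 (Real.exp_pos _).le
        _ = Real.exp (-x ^ 2 / 2) := one_mul _
  have key : ∫ x in Set.Ioi t, F' x = 0 - F t :=
    integral_Ioi_of_hasDerivAt_of_tendsto' (fun x _ => hderiv x) hintF' hlim
  have hFt : F t = ∫ x in Set.Ioi t, -F' x := by
    rw [integral_neg, key]; ring
  calc F t = ∫ x in Set.Ioi t, -F' x := hFt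
    _ ≤ ∫ x in Set.Ioi t, Real.exp (-x ^ 2 / 2) := by
        apply integral_mono hintF'.neg (exp_sq_integrableOn t)
        intro x
        rw [Pi.neg_apply, hF'eq]
        have h2 : (x ^ 4 + 2 * x ^ 2 - 1) / (x ^ 2 + 1) ^ 2 ≤ 1 := by
          rw [div_le_one (by positivity)]; nlinarith
        have h3 : -((1 - 2 * x ^ 2 - x ^ 4) / (x ^ 2 + 1) ^ 2) = (x ^ 4 + 2 * x ^ 2 - 1) / (x ^ 2 + 1) ^ 2 := by
          ring
        rw [← neg_mul, h3]
        nlinarith [Real.exp_pos (-x ^ 2 / 2)]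


lemma gaussianPDFReal_std (x : ℝ) :
    gaussianPDFReal 0 1 x = (Real.sqrt (2 * π))⁻¹ * Real.exp (-x ^ 2 / 2) := by
  simp [gaussianPDFReal]

lemma gauss_Ici_lb {t : ℝ} :
    ENNReal.ofReal ((Real.sqrt (2 * π))⁻¹ * (t / (t ^ 2 + 1) * Real.exp (-t ^ 2 / 2)))
      ≤ gaussianReal 0 1 (Set.Ici t) := by
  rw [gaussianReal_apply_eq_integral 0 one_ne_zero]
  apply ENNReal.ofReal_le_ofReal
  rw [integral_Ici_eq_integral_Ioi]
  have h1 : ∫ x in Set.Ioi t, gaussianPDFReal 0 1 x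
      = (Real.sqrt (2 * π))⁻¹ * ∫ x in Set.Ioi t, Real.exp (-x ^ 2 / 2) := by
    rw [← integral_const_mul]
    congr 1
    funext x
    exact gaussianPDFReal_std x
  rw [h1]
  have h2 : (0:ℝ) ≤ (Real.sqrt (2 * π))⁻¹ := by positivity
  exact mul_le_mul_of_nonneg_left (mill t) h2

lemma gauss_sym (t : ℝ) : gaussianReal 0 1 (Set.Iic (-t)) = gaussianReal 0 1 (Set.Ici t) := by
  have hmap : (gaussianReal 0 1).map (fun x => (-1 : ℝ) * x) = gaussianReal 0 1 := by
    rw [gaussianReal_map_const_mul]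
    norm_num
  conv_lhs => rw [← hmap]
  rw [Measure.map_apply (by fun_prop) measurableSet_Iic]
  congr 1
  ext x
  simp only [Set.mem_preimage, Set.mem_Iic, Set.mem_Ici]
  constructor <;> intro h <;> linarith

lemma gauss_tail {t : ℝ} (ht : 0 < t) :
    2 * ((Real.sqrt (2 * π))⁻¹ * (t / (t ^ 2 + 1) * Real.exp (-t ^ 2 / 2)))
      ≤ (gaussianReal 0 1 {x : ℝ | t ≤ |x|}).toReal := by
  have hset : {x : ℝ | t ≤ |x|} = Set.Iic (-t) ∪ Set.Ici t := by
    ext x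
    simp only [Set.mem_setOf_eq, Set.mem_union, Set.mem_Iic, Set.mem_Ici, le_abs, le_neg]
    tauto
  set q := (Real.sqrt (2 * π))⁻¹ * (t / (t ^ 2 + 1) * Real.exp (-t ^ 2 / 2)) with hq
  have hq0 : 0 ≤ q := by positivity
  have hmeas : gaussianReal 0 1 {x : ℝ | t ≤ |x|}
      = gaussianReal 0 1 (Set.Iic (-t)) + gaussianReal 0 1 (Set.Ici t) := by
    rw [hset]
    apply measure_union _ measurableSet_Ici
    rw [Set.Iic_disjoint_Ici]
    intro h
    linarith
  have hb : ENNReal.ofReal (2 * q) ≤ gaussianReal 0 1 {x : ℝ | t ≤ |x|} := by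
    rw [hmeas, gauss_sym, two_mul, ENNReal.ofReal_add hq0 hq0]
    exact add_le_add gauss_Ici_lb gauss_Ici_lb
  have hfin : gaussianReal 0 1 {x : ℝ | t ≤ |x|} ≠ ⊤ := measure_ne_top _ _
  calc 2 * q = (ENNReal.ofReal (2 * q)).toReal := by
        rw [ENNReal.toReal_ofReal (by positivity)]
    _ ≤ _ := ENNReal.toReal_mono hfin hb


instance stdGaussian_prob (d : ℕ) : IsProbabilityMeasure (stdGaussian d) := by
  unfold _root_.stdGaussian; infer_instance

lemma stdGaussian_eval_preimage {d : ℕ} (i : Fin d) {A : Set ℝ} (_hA : MeasurableSet A) :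
    stdGaussian d (Function.eval i ⁻¹' A) = gaussianReal 0 1 A := by
  classical
  rw [_root_.stdGaussian, Set.eval_preimage, Measure.pi_pi]
  simp [Function.update_apply, apply_ite (gaussianReal 0 1), Finset.prod_ite_eq']

lemma stdGaussian_eval_preimage_inter {d : ℕ} {i j : Fin d} (hij : i ≠ j)
    {A B : Set ℝ} :
    stdGaussian d (Function.eval i ⁻¹' A ∩ Function.eval j ⁻¹' B)
      = gaussianReal 0 1 A * gaussianReal 0 1 B := by
  classical
  have hset : Function.eval i ⁻¹' A ∩ Function.eval j ⁻¹' B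
      = Set.univ.pi (fun k => if k = i then A else if k = j then B else Set.univ) := by
    ext x
    simp only [Set.mem_inter_iff, Set.mem_preimage, Set.mem_pi, Set.mem_univ, true_implies]
    constructor
    · rintro ⟨h1, h2⟩ k
      split_ifs with hk1 hk2
      · subst hk1; exact h1
      · subst hk2; exact h2
      · trivial
    · intro h
      refine ⟨?_, ?_⟩
      · have := h i; simpa using this
      · have := h j; simp only [if_neg (Ne.symm hij), if_pos rfl] at this; exact this
  rw [_root_.stdGaussian, hset, Measure.pi_pi]
  rw [← Finset.mul_prod_erase Finset.univ _ (Finset.mem_univ i)]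
  rw [← Finset.mul_prod_erase _ _ (Finset.mem_erase.2 ⟨Ne.symm hij, Finset.mem_univ j⟩)]
  rw [if_pos rfl, if_neg (Ne.symm hij), if_pos rfl]
  have hrest : ∏ k ∈ (Finset.univ.erase i).erase j,
      gaussianReal 0 1 (if k = i then A else if k = j then B else Set.univ) = 1 := by
    apply Finset.prod_eq_one
    intro k hk
    rw [Finset.mem_erase, Finset.mem_erase] at hk
    rw [if_neg hk.2.1, if_neg hk.1]
    simp
  rw [hrest, mul_one]

lemma indepFun_eval {d : ℕ} {i j : Fin d} (hij : i ≠ j) :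
    IndepFun (Function.eval i) (Function.eval j) (stdGaussian d) := by
  rw [ProbabilityTheory.indepFun_iff_measure_inter_preimage_eq_mul]
  intro s t hs ht
  rw [stdGaussian_eval_preimage_inter hij, stdGaussian_eval_preimage i hs,
    stdGaussian_eval_preimage j ht]


-- basic numeric facts
lemma sqrt_two_pi_le : Real.sqrt (2 * π) ≤ 2.51 := by
  rw [show (2.51 : ℝ) = Real.sqrt (2.51 ^ 2) by rw [Real.sqrt_sq]; norm_num]
  apply Real.sqrt_le_sqrt
  nlinarith [Real.pi_lt_d2]

lemma le_sqrt_two : (1.41 : ℝ) ≤ Real.sqrt 2 := by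
  rw [show (1.41 : ℝ) = Real.sqrt (1.41 ^ 2) by rw [Real.sqrt_sq]; norm_num]
  apply Real.sqrt_le_sqrt
  norm_num

/-- Numeric inequality 1: controls `n0 ≤ (1/4) D P`. -/
lemma num1 {r : ℝ} (hr : 2 ≤ r) :
    Real.sqrt (2 * π) * (r + 4)
      ≤ Real.sqrt r * Real.exp ((3 * Real.log 2 + 1) * (r / 2) - r / 8) := by
  have hl2 : (0.6931 : ℝ) ≤ Real.log 2 := le_of_lt (by linarith [Real.log_two_gt_d9])
  have hl2' : Real.log 2 ≤ 0.6932 := le_of_lt (by linarith [Real.log_two_lt_d9])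
  have hsq : (1.41 : ℝ) ≤ Real.sqrt r := le_trans le_sqrt_two (Real.sqrt_le_sqrt hr)
  have harg : (3 * Real.log 2 + 1) * (r / 2) - r / 8
      = (3 * Real.log 2 + 3 / 4) + ((3 * Real.log 2 + 1) / 2 - 1 / 8) * (r - 2) := by ring
  rw [harg, Real.exp_add]
  have h1 : (15.1 : ℝ) ≤ Real.exp (3 * Real.log 2 + 3 / 4) := by
    rw [Real.exp_add, show (3 : ℝ) * Real.log 2 = Real.log 2 + Real.log 2 + Real.log 2 by ring,
      Real.exp_add, Real.exp_add, Real.exp_log two_pos]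
    have h34 : (1.89 : ℝ) ≤ Real.exp (3 / 4) := by
      have h38 : (1.375 : ℝ) ≤ Real.exp (3 / 8) := by
        have := Real.add_one_le_exp (3 / 8 : ℝ); linarith
      have : Real.exp (3 / 4) = Real.exp (3 / 8) * Real.exp (3 / 8) := by
        rw [← Real.exp_add]; norm_num
      rw [this]; nlinarith [Real.exp_pos (3/8 : ℝ)]
    nlinarith
  have hc : (1.41 : ℝ) ≤ (3 * Real.log 2 + 1) / 2 - 1 / 8 := by linarith
  have h2 : 1 + 1.41 * (r - 2) ≤ Real.exp (((3 * Real.log 2 + 1) / 2 - 1 / 8) * (r - 2)) := by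
    have := Real.add_one_le_exp (((3 * Real.log 2 + 1) / 2 - 1 / 8) * (r - 2))
    nlinarith [mul_le_mul_of_nonneg_right hc (by linarith : (0:ℝ) ≤ r - 2)]
  have hpi := sqrt_two_pi_le
  have he1 : (0:ℝ) < Real.exp (3 * Real.log 2 + 3 / 4) := Real.exp_pos _
  have he2 : (0:ℝ) < Real.exp (((3 * Real.log 2 + 1) / 2 - 1 / 8) * (r - 2)) := Real.exp_pos _
  have hsr : (0:ℝ) ≤ Real.sqrt r := Real.sqrt_nonneg r
  calc Real.sqrt (2 * π) * (r + 4) ≤ 2.51 * (r + 4) := by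
        apply mul_le_mul_of_nonneg_right hpi; linarith
    _ ≤ 1.41 * (15.1 * (1 + 1.41 * (r - 2))) := by nlinarith
    _ ≤ Real.sqrt r * (Real.exp (3 * Real.log 2 + 3 / 4)
          * Real.exp (((3 * Real.log 2 + 1) / 2 - 1 / 8) * (r - 2))) := by
        apply mul_le_mul hsq _ (by nlinarith) hsr
        apply mul_le_mul h1 h2 (by nlinarith) he1.le

/-- Numeric inequality 2: `D * P ≥ 4`, i.e. `√(2π)(r+4) ≤ d √r exp(-r/8)`. -/
lemma num2 {d r : ℝ} (hd : 44 ≤ d) (hr1 : 2 ≤ r) (hr2 : r ≤ 2 * Real.log d) :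
    Real.sqrt (2 * π) * (r + 4) ≤ d * Real.sqrt r * Real.exp (-r / 8) := by
  have hd0 : (0:ℝ) < d := by linarith
  have hpi := sqrt_two_pi_le
  have hsr0 : (0:ℝ) ≤ Real.sqrt r := Real.sqrt_nonneg r
  have hsrsq : Real.sqrt r ^ 2 = r := Real.sq_sqrt (by linarith)
  rcases le_or_gt r 8 with hr8 | hr8
  · -- small r case
    have he : Real.exp (-1 : ℝ) ≤ Real.exp (-r / 8) := Real.exp_le_exp.2 (by linarith)
    have he1 : (0.367 : ℝ) ≤ Real.exp (-1 : ℝ) := by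
      rw [Real.exp_neg]
      rw [le_inv_comm₀ (by norm_num) (Real.exp_pos 1)]
      calc Real.exp 1 ≤ 2.7182818286 := le_of_lt Real.exp_one_lt_d9
        _ ≤ 0.367⁻¹ := by norm_num
    -- √2 (r+4) ≤ 6 √r  for r ∈ [2,8]
    have hs2 : Real.sqrt 2 * (r + 4) ≤ 6 * Real.sqrt r := by
      have h2 : Real.sqrt 2 ^ 2 = 2 := Real.sq_sqrt (by norm_num)
      have huv : Real.sqrt 2 ≤ Real.sqrt r := Real.sqrt_le_sqrt hr1
      have hu2v : Real.sqrt r ≤ 2 * Real.sqrt 2 := by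
        rw [show (2:ℝ) * Real.sqrt 2 = Real.sqrt 8 by
          rw [show (8:ℝ) = 2 ^ 2 * 2 by norm_num, Real.sqrt_mul (by positivity), Real.sqrt_sq two_pos.le]]
        exact Real.sqrt_le_sqrt hr8
      have h0 : (0:ℝ) ≤ Real.sqrt 2 := Real.sqrt_nonneg 2
      nlinarith [mul_nonneg (mul_nonneg h0 (sub_nonneg.2 huv)) (sub_nonneg.2 hu2v)]
    have hs2' : (1.41 : ℝ) ≤ Real.sqrt 2 := le_sqrt_two
    calc Real.sqrt (2 * π) * (r + 4) ≤ 2.51 * (r + 4) := by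
          apply mul_le_mul_of_nonneg_right hpi; linarith
      _ ≤ 44 * ((Real.sqrt 2 / 6) * (r + 4)) * 0.367 := by nlinarith
      _ ≤ 44 * Real.sqrt r * 0.367 := by nlinarith
      _ ≤ d * Real.sqrt r * Real.exp (-r / 8) := by
          apply mul_le_mul _ (le_trans he1 he) (by norm_num) (by positivity)
          apply mul_le_mul hd (le_refl _) hsr0 (by linarith)
  · -- large r case: 8 < r ≤ 2 log d
    set L := Real.log d with hL
    have hL4 : 4 ≤ L := by linarith
    have hdL : d = Real.exp L := (Real.exp_log hd0).symm
    have he34 : Real.exp L * Real.exp (-r / 8) = Real.exp (L - r / 8) := by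
      rw [← Real.exp_add]; ring_nf
    have hstep : Real.exp (3 * L / 4) ≤ Real.exp (L - r / 8) := by
      apply Real.exp_le_exp.2; linarith
    -- √r ≤ √(2L)
    have hsrL : Real.sqrt r ≤ Real.sqrt (2 * L) := Real.sqrt_le_sqrt (by linarith)
    have hsL2 : Real.sqrt (2 * L) ^ 2 = 2 * L := Real.sq_sqrt (by linarith)
    have hsL0 : (0:ℝ) ≤ Real.sqrt (2 * L) := Real.sqrt_nonneg _
    -- √(2L) ≤ (L+4)/2.82
    have hsL : Real.sqrt (2 * L) ≤ 0.355 * (L + 4) := by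
      have h8 : (2.82 : ℝ) ≤ Real.sqrt 8 := by
        rw [show (2.82 : ℝ) = Real.sqrt (2.82 ^ 2) by rw [Real.sqrt_sq]; norm_num]
        apply Real.sqrt_le_sqrt; norm_num
      have h8' : Real.sqrt 8 ^ 2 = 8 := Real.sq_sqrt (by norm_num)
      have hprod : Real.sqrt (2 * L) * Real.sqrt 8 ≤ L + 4 := by
        nlinarith [sq_nonneg (Real.sqrt (2 * L) - Real.sqrt 8)]
      have h9 : (2.82 : ℝ) * Real.sqrt (2 * L) ≤ L + 4 := by nlinarith
      linarith
    -- exp(3L/4) ≥ 20 (1 + 0.75 (L - 4))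
    have hexp3 : (20 : ℝ) ≤ Real.exp 3 := by
      have h := Real.exp_one_gt_d9
      have : Real.exp 3 = Real.exp 1 * Real.exp 1 * Real.exp 1 := by
        rw [← Real.exp_add, ← Real.exp_add]; norm_num
      rw [this]; nlinarith
    have hlin : 1 + 0.75 * (L - 4) ≤ Real.exp (3 * (L - 4) / 4) := by
      have := Real.add_one_le_exp (3 * (L - 4) / 4); linarith
    have hsplit : Real.exp (3 * L / 4) = Real.exp 3 * Real.exp (3 * (L - 4) / 4) := by
      rw [← Real.exp_add]; ring_nf
    -- combine
    have hmain : 2.51 * (3 / 2) * Real.sqrt (2 * L) ≤ Real.exp (3 * L / 4) := by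
      calc 2.51 * (3 / 2) * Real.sqrt (2 * L) ≤ 2.51 * (3 / 2) * (0.355 * (L + 4)) :=
            mul_le_mul_of_nonneg_left hsL (by norm_num)
        _ ≤ 20 * (1 + 0.75 * (L - 4)) := by linarith
        _ ≤ Real.exp 3 * Real.exp (3 * (L - 4) / 4) :=
            mul_le_mul hexp3 hlin (by linarith) (by linarith)
        _ = Real.exp (3 * L / 4) := hsplit.symm
    have hr4 : r + 4 ≤ (3 / 2) * r := by linarith
    have hsrpos : (0:ℝ) < Real.sqrt r := Real.sqrt_pos.2 (by linarith)
    -- goal: √(2π)(r+4) ≤ d √r exp(-r/8) = exp(L - r/8) √r ≥ exp(3L/4) √r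
    have hrhs : Real.exp (3 * L / 4) * Real.sqrt r ≤ d * Real.sqrt r * Real.exp (-r / 8) := by
      rw [hdL]
      calc Real.exp (3 * L / 4) * Real.sqrt r ≤ Real.exp (L - r / 8) * Real.sqrt r :=
            mul_le_mul_of_nonneg_right hstep hsr0
        _ = Real.exp L * Real.sqrt r * Real.exp (-r / 8) := by rw [← he34]; ring
    refine le_trans ?_ hrhs
    -- √(2π)(r+4) ≤ exp(3L/4) √r :  (r+4) ≤ (3/2) r = (3/2) √r √r ≤ (3/2) √r √(2L)
    calc Real.sqrt (2 * π) * (r + 4) ≤ 2.51 * ((3 / 2) * r) := by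
          calc Real.sqrt (2 * π) * (r + 4) ≤ 2.51 * (r + 4) :=
                mul_le_mul_of_nonneg_right hpi (by linarith)
            _ ≤ 2.51 * ((3 / 2) * r) := by linarith
      _ = 2.51 * (3 / 2) * (Real.sqrt r * Real.sqrt r) := by
          rw [Real.mul_self_sqrt (by linarith : (0:ℝ) ≤ r)]; ring
      _ ≤ 2.51 * (3 / 2) * (Real.sqrt (2 * L) * Real.sqrt r) :=
          mul_le_mul_of_nonneg_left (mul_le_mul_of_nonneg_right hsrL hsr0) (by norm_num)
      _ = 2.51 * (3 / 2) * Real.sqrt (2 * L) * Real.sqrt r := by ring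
      _ ≤ Real.exp (3 * L / 4) * Real.sqrt r :=
          mul_le_mul_of_nonneg_right hmain hsr0

end Helpers

set_option maxHeartbeats 1000000 in
/-- Small-ball estimate for ℓr norms of a standard Gaussian vector:
if `D ≥ 44` and `r ∈ [2, 2·log D]`, then
`P{‖ξ‖_r ≥ (1/√(32e))·√r·D^{1/r}} ≥ 1/2`. -/
theorem gaussian_lr_norm_small_ball (D : ℕ) (hD : 44 ≤ D)
    (r : ℝ) (hr1 : 2 ≤ r) (hr2 : r ≤ 2 * Real.log D) :
    ENNReal.ofReal (1 / 2) ≤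
      stdGaussian D
        {ξ | 1 / Real.sqrt (32 * Real.exp 1) * Real.sqrt r * (D : ℝ) ^ (1 / r)
              ≤ pNorm r ξ} := by
  classical
  have hr0 : (0:ℝ) < r := by linarith
  set d : ℝ := (D : ℝ) with hd
  have hd44 : (44:ℝ) ≤ d := by rw [hd]; exact_mod_cast hD
  have hd0 : (0:ℝ) < d := by linarith
  have hr2' : r ≤ 2 * Real.log d := hr2
  set t : ℝ := Real.sqrt r / 2 with ht
  have hsr0 : 0 < Real.sqrt r := Real.sqrt_pos.2 hr0
  have ht0 : 0 < t := by rw [ht]; positivity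
  have ht2 : t ^ 2 = r / 4 := by
    rw [ht, div_pow, Real.sq_sqrt hr0.le]; norm_num
  set A : Set ℝ := {x : ℝ | t ≤ |x|} with hA
  have hAm : MeasurableSet A := measurableSet_le measurable_const (by fun_prop)
  set p : ℝ := (gaussianReal 0 1 A).toReal with hp
  have hp0 : 0 ≤ p := ENNReal.toReal_nonneg
  have hp1 : p ≤ 1 := by
    rw [hp]
    exact ENNReal.toReal_le_of_le_ofReal one_pos.le (by simpa using prob_le_one)
  set P : ℝ := 2 * ((Real.sqrt (2 * π))⁻¹ * (t / (t ^ 2 + 1) * Real.exp (-t ^ 2 / 2))) with hP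
  have hPp : P ≤ p := gauss_tail ht0
  have hsqpi : 0 < Real.sqrt (2 * π) := Real.sqrt_pos.2 (by positivity)
  have hPalt : P = 4 * (Real.sqrt (2 * π))⁻¹ * (Real.sqrt r * Real.exp (-r / 8) / (r + 4)) := by
    rw [hP, ht2, ht, show -(r / 4) / 2 = -r / 8 by ring]
    field_simp
  have hP0 : 0 < P := by
    rw [hPalt]; positivity
  -- the count threshold
  set X : ℝ := (3 * Real.log 2 + 1) * (r / 2) with hX
  set n0 : ℝ := d * Real.exp (-X) with hn0
  have hn0pos : 0 < n0 := by rw [hn0]; positivity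
  -- n0 ≤ (1/4) d P
  have hn0P : n0 ≤ 1 / 4 * (d * P) := by
    have h2 : Real.exp (-X) ≤ Real.sqrt r * Real.exp (-r / 8) / (Real.sqrt (2 * π) * (r + 4)) := by
      rw [le_div_iff₀ (by positivity)]
      calc Real.exp (-X) * (Real.sqrt (2 * π) * (r + 4))
          ≤ Real.exp (-X) * (Real.sqrt r * Real.exp (X - r / 8)) :=
            mul_le_mul_of_nonneg_left (num1 hr1) (Real.exp_pos _).le
        _ = Real.sqrt r * (Real.exp (-X) * Real.exp (X - r / 8)) := by ring
        _ = Real.sqrt r * Real.exp (-r / 8) := by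
            rw [← Real.exp_add, show -X + (X - r / 8) = -r / 8 by ring]
    calc n0 = d * Real.exp (-X) := hn0
      _ ≤ d * (Real.sqrt r * Real.exp (-r / 8) / (Real.sqrt (2 * π) * (r + 4))) :=
          mul_le_mul_of_nonneg_left h2 hd0.le
      _ = 1 / 4 * (d * P) := by
          rw [hPalt]; field_simp
  -- 4 ≤ d P
  have hdP4 : (4:ℝ) ≤ d * P := by
    have hgt : 1 ≤ d * Real.sqrt r * Real.exp (-r / 8) / (Real.sqrt (2 * π) * (r + 4)) := by
      rw [le_div_iff₀ (by positivity)]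
      simpa using num2 hd44 hr1 hr2'
    calc (4:ℝ) = 4 * 1 := by norm_num
      _ ≤ 4 * (d * Real.sqrt r * Real.exp (-r / 8) / (Real.sqrt (2 * π) * (r + 4))) := by
          linarith
      _ = d * P := by rw [hPalt]; field_simp
  have hdp4 : (4:ℝ) ≤ d * p := le_trans hdP4 (mul_le_mul_of_nonneg_left hPp hd0.le)
  have hn0p : n0 ≤ 1 / 4 * (d * p) := by nlinarith
  have hc0 : 0 < d * p - n0 := by nlinarith
  -- random variables
  set μ := stdGaussian D with hμ
  set Y : Fin D → (Fin D → ℝ) → ℝ :=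
    fun i => Set.indicator (Function.eval i ⁻¹' A) 1 with hY
  have hYm : ∀ i, Measurable (Y i) := fun i =>
    measurable_const.indicator (hAm.preimage (measurable_pi_apply i))
  have hYb : ∀ i, ∀ ξ, ‖Y i ξ‖ ≤ 1 := by
    intro i ξ
    rw [hY]
    simp only [Set.indicator_apply]
    split_ifs <;> simp
  have hYmem : ∀ i, MemLp (Y i) 2 μ := fun i =>
    MemLp.of_bound (hYm i).aestronglyMeasurable 1 (ae_of_all _ (hYb i))
  have hEY : ∀ i, ∫ ξ, Y i ξ ∂μ = p := by
    intro i
    rw [hY]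
    rw [integral_indicator_one (hAm.preimage (measurable_pi_apply i))]
    rw [hμ, measureReal_def, stdGaussian_eval_preimage i hAm]
  have hYsq : ∀ i, (Y i) ^ 2 = Y i := by
    intro i
    funext ξ
    simp only [Pi.pow_apply, hY, Set.indicator_apply]
    split_ifs <;> norm_num
  have hVarY : ∀ i, variance (Y i) μ = p - p ^ 2 := by
    intro i
    rw [variance_eq_sub (hYmem i), hYsq i, hEY i]
  set N : (Fin D → ℝ) → ℝ := fun ξ => ∑ i, Y i ξ with hN
  have hNsum : N = ∑ i, Y i := by
    funext ξ; rw [hN, Finset.sum_apply]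
  have hNmem : MemLp N 2 μ := by
    rw [hNsum]; exact memLp_finset_sum' _ (fun i _ => hYmem i)
  have hNm : Measurable N := by
    rw [hN]; exact Finset.measurable_sum _ (fun i _ => hYm i)
  have hEN : ∫ ξ, N ξ ∂μ = d * p := by
    rw [hN]
    rw [integral_finset_sum _ (fun i _ => (hYmem i).integrable one_le_two)]
    simp only [hEY]
    rw [Finset.sum_const, Finset.card_univ, Fintype.card_fin, nsmul_eq_mul]
  have hYcomp : ∀ i, Y i = (Set.indicator A (1 : ℝ → ℝ)) ∘ (Function.eval i) := by
    intro i
    funext ξ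
    simp [hY, Set.indicator_apply, Function.eval]
  have hIndep : ∀ i j : Fin D, i ≠ j → IndepFun (Y i) (Y j) μ := by
    intro i j hij
    rw [hYcomp i, hYcomp j]
    exact (indepFun_eval hij).comp (measurable_const.indicator hAm)
      (measurable_const.indicator hAm)
  have hVarN : variance N μ = d * (p - p ^ 2) := by
    rw [hNsum]
    rw [IndepFun.variance_sum (fun i _ => hYmem i)
      (fun i _ j _ hij => hIndep i j hij)]
    simp only [hVarY]
    rw [Finset.sum_const, Finset.card_univ, Fintype.card_fin, nsmul_eq_mul]
  -- Chebyshev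
  have hcheb := meas_ge_le_variance_div_sq (μ := μ) hNmem hc0
  have hbadsub : {ξ | N ξ < n0} ⊆ {ξ | d * p - n0 ≤ |N ξ - ∫ x, N x ∂μ|} := by
    intro ξ hξ
    simp only [Set.mem_setOf_eq] at hξ ⊢
    rw [hEN]
    have h1 : d * p - n0 ≤ d * p - N ξ := by linarith
    calc d * p - n0 ≤ d * p - N ξ := h1
      _ ≤ |d * p - N ξ| := le_abs_self _
      _ = |N ξ - d * p| := abs_sub_comm _ _
  have hvar49 : variance N μ / (d * p - n0) ^ 2 ≤ 4 / 9 := by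
    rw [hVarN, div_le_iff₀ (by positivity)]
    have e1 : d * (p - p ^ 2) ≤ d * p := by nlinarith [mul_nonneg (mul_nonneg hd0.le hp0) hp0]
    have e2 : d * p ≤ (d * p) ^ 2 / 4 := by nlinarith
    have e3 : 3 / 4 * (d * p) ≤ d * p - n0 := by linarith
    have e4 : (d * p) ^ 2 / 4 ≤ 4 / 9 * (d * p - n0) ^ 2 := by
      nlinarith [mul_self_le_mul_self (by positivity : (0:ℝ) ≤ 3 / 4 * (d * p)) e3]
    linarith
  have hbad : μ {ξ | N ξ < n0} ≤ ENNReal.ofReal (4 / 9) := by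
    calc μ {ξ | N ξ < n0} ≤ μ {ξ | d * p - n0 ≤ |N ξ - ∫ x, N x ∂μ|} :=
          measure_mono hbadsub
      _ ≤ ENNReal.ofReal (variance N μ / (d * p - n0) ^ 2) := hcheb
      _ ≤ ENNReal.ofReal (4 / 9) := ENNReal.ofReal_le_ofReal hvar49
  -- measure of the good event
  have hgoodm : MeasurableSet {ξ | n0 ≤ N ξ} := measurableSet_le measurable_const hNm
  have hcompl : {ξ | n0 ≤ N ξ}ᶜ = {ξ | N ξ < n0} := by
    ext ξ; simp [not_le]
  have hgood : ENNReal.ofReal (1 / 2) ≤ μ {ξ | n0 ≤ N ξ} := by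
    have h1 : μ {ξ | n0 ≤ N ξ} + μ {ξ | N ξ < n0} = 1 := by
      rw [← hcompl, measure_add_measure_compl hgoodm, measure_univ]
    have h2 : (1:ℝ≥0∞) ≤ μ {ξ | n0 ≤ N ξ} + ENNReal.ofReal (4 / 9) := by
      rw [← h1]
      exact add_le_add_right hbad _
    have h3 : (1:ℝ≥0∞) - ENNReal.ofReal (4 / 9) ≤ μ {ξ | n0 ≤ N ξ} :=
      tsub_le_iff_right.2 h2
    calc ENNReal.ofReal (1 / 2) ≤ ENNReal.ofReal (1 - 4 / 9) := by
          apply ENNReal.ofReal_le_ofReal; norm_num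
      _ = ENNReal.ofReal 1 - ENNReal.ofReal (4 / 9) := ENNReal.ofReal_sub _ (by norm_num)
      _ = (1:ℝ≥0∞) - ENNReal.ofReal (4 / 9) := by rw [ENNReal.ofReal_one]
      _ ≤ μ {ξ | n0 ≤ N ξ} := h3
  -- threshold identity
  have hsqrt32 : Real.sqrt (32 * Real.exp 1) = 2 * Real.exp ((3 * Real.log 2 + 1) / 2) := by
    have hsq : (2 * Real.exp ((3 * Real.log 2 + 1) / 2)) ^ 2 = 32 * Real.exp 1 := by
      rw [mul_pow, sq (Real.exp _), ← Real.exp_add,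
        show (3 * Real.log 2 + 1) / 2 + (3 * Real.log 2 + 1) / 2 = 3 * Real.log 2 + 1 by ring,
        Real.exp_add, show (3:ℝ) * Real.log 2 = Real.log 2 + (Real.log 2 + Real.log 2) by ring,
        Real.exp_add, Real.exp_add, Real.exp_log two_pos]
      ring
    rw [← hsq, Real.sqrt_sq (by positivity)]
  set u : ℝ := Real.exp (-((3 * Real.log 2 + 1) / 2)) with hu
  have hu0 : 0 < u := Real.exp_pos _
  have hexpXu : Real.exp (-X) = u ^ r := by
    rw [hu, ← Real.exp_mul, hX]
    congr 1
    ring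
  have hthr : (n0 * t ^ r) ^ (1 / r)
      = 1 / Real.sqrt (32 * Real.exp 1) * Real.sqrt r * d ^ (1 / r) := by
    have hrr : r * (1 / r) = 1 := by field_simp
    have htr0 : (0:ℝ) ≤ t ^ r := Real.rpow_nonneg ht0.le r
    rw [hn0, hexpXu]
    rw [Real.mul_rpow (by positivity) htr0, Real.mul_rpow hd0.le (by positivity)]
    rw [← Real.rpow_mul hu0.le, ← Real.rpow_mul ht0.le, hrr, Real.rpow_one, Real.rpow_one]
    rw [hsqrt32, ht, hu, Real.exp_neg]
    field_simp
  -- event inclusion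
  have hincl : {ξ | n0 ≤ N ξ}
      ⊆ {ξ | 1 / Real.sqrt (32 * Real.exp 1) * Real.sqrt r * d ^ (1 / r) ≤ pNorm r ξ} := by
    intro ξ hξ
    simp only [Set.mem_setOf_eq] at hξ ⊢
    have h1 : ∀ i ∈ Finset.univ, Y i ξ * t ^ r ≤ |ξ i| ^ r := by
      intro i _
      by_cases hmem : ξ ∈ Function.eval i ⁻¹' A
      · rw [hY]
        simp only [Set.indicator_of_mem hmem, Pi.one_apply, one_mul]
        have hti : t ≤ |ξ i| := hmem
        exact Real.rpow_le_rpow ht0.le hti hr0.le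
      · rw [hY]
        simp only [Set.indicator_of_notMem hmem, zero_mul]
        exact Real.rpow_nonneg (abs_nonneg _) r
    have hsum : n0 * t ^ r ≤ ∑ i, |ξ i| ^ r := by
      calc n0 * t ^ r ≤ N ξ * t ^ r :=
            mul_le_mul_of_nonneg_right hξ (Real.rpow_nonneg ht0.le r)
        _ = ∑ i, Y i ξ * t ^ r := by rw [hN, Finset.sum_mul]
        _ ≤ ∑ i, |ξ i| ^ r := Finset.sum_le_sum h1
    calc 1 / Real.sqrt (32 * Real.exp 1) * Real.sqrt r * d ^ (1 / r)
        = (n0 * t ^ r) ^ (1 / r) := hthr.symm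
      _ ≤ (∑ i, |ξ i| ^ r) ^ (1 / r) :=
          Real.rpow_le_rpow (by positivity) hsum (by positivity)
      _ = pNorm r ξ := rfl
  exact le_trans hgood (measure_mono hincl)
end
end

section
/- Risk monotonicity of projections onto convex sets under increased noise: fix 0 < σ ≤ ν and let Θ ⊆ ℝ^d be nonempty, closed and convex. Then for every θ* ∈ Θ and every ξ ∈ ℝ^d (deterministically), ‖Π_Θ(θ* + σξ) − θ*‖₂ ≤ ‖Π_Θ(θ* + νξ) − θ*‖₂. Consequently, for Gaussian ξ ∼ N(0, I_d), E‖Π_Θ(θ* + σξ) − θ*‖₂² ≤ E‖Π_Θ(θ* + νξ) − θ*‖₂² for every θ* ∈ Θ, and hence R^MLE(Θ, σ) ≤ R^MLE(Θ, ν). -/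
open MeasureTheory ProbabilityTheory Real Filter Pointwise
open scoped ENNReal NNReal

noncomputable section

def inn {d : ℕ} (x y : Fin d → ℝ) : ℝ := ∑ i, x i * y i

lemma inn_self_nonneg {d : ℕ} (x : Fin d → ℝ) : 0 ≤ inn x x :=
  Finset.sum_nonneg fun i _ => mul_self_nonneg _

lemma vi {d : ℕ} (Θ : Set (Fin d → ℝ)) (hconv : Convex ℝ Θ)
    (proj : (Fin d → ℝ) → Fin d → ℝ) (hproj : IsProjOn Θ proj)
    (y c : Fin d → ℝ) (hc : c ∈ Θ) :
    inn (y - proj y) (c - proj y) ≤ 0 := by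
  set a := proj y with ha
  set I := inn (y - a) (c - a) with hI
  set Q := inn (c - a) (c - a) with hQ
  have hQ0 : 0 ≤ Q := inn_self_nonneg _
  have key : ∀ t : ℝ, 0 < t → t ≤ 1 → 2 * I ≤ t * Q := by
    intro t ht ht1
    have hz : (fun i => a i + t * (c i - a i)) ∈ Θ := by
      have := hconv (hproj y).1 hc (by linarith : (0:ℝ) ≤ 1 - t) (le_of_lt ht) (by ring)
      convert this using 1
      funext i
      simp [Pi.add_apply, smul_eq_mul]
      ring
    have hle := (hproj y).2 _ hz
    have hid : sqDist y (fun i => a i + t * (c i - a i))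
        = sqDist y a - 2 * t * I + t ^ 2 * Q := by
      simp only [sqDist, hI, hQ, inn, Finset.mul_sum, ← Finset.sum_sub_distrib,
        ← Finset.sum_add_distrib]
      apply Finset.sum_congr rfl
      intro i _
      simp only [Pi.sub_apply]
      ring
    rw [hid] at hle
    have h2 : 2 * t * I ≤ t ^ 2 * Q := by linarith
    have := (mul_le_mul_iff_right₀ ht).mp (by nlinarith : t * (2 * I) ≤ t * (t * Q))
    linarith
  by_contra h
  push_neg at h
  rcases lt_or_ge 0 Q with hQpos | hQnp
  · have htle : min 1 (I / Q) ≤ 1 := min_le_left _ _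
    have htpos : 0 < min 1 (I / Q) := lt_min one_pos (div_pos h hQpos)
    have := key _ htpos htle
    have : min 1 (I / Q) * Q ≤ (I / Q) * Q := by
      apply mul_le_mul_of_nonneg_right (min_le_right _ _) (le_of_lt hQpos)
    have hIQ : (I / Q) * Q = I := div_mul_cancel₀ _ (ne_of_gt hQpos)
    linarith [key _ htpos htle]
  · have hQ0' : Q = 0 := le_antisymm hQnp hQ0
    have := key 1 one_pos le_rfl
    rw [hQ0'] at this
    linarith

/-- Risk monotonicity of projections onto convex sets under increased
noise: for `0 < σ ≤ ν`, a nonempty closed convex `Θ`, `θ* ∈ Θ`, one has (i) the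
deterministic pointwise bound `‖Π_Θ(θ* + σξ) − θ*‖₂² ≤ ‖Π_Θ(θ* + νξ) − θ*‖₂²`;
(ii) the corresponding bound in expectation over `ξ ∼ N(0, I_d)`; and (iii)
`R^MLE(Θ, σ) ≤ R^MLE(Θ, ν)`. -/
theorem risk_monotonicity (d : ℕ) (σ ν : ℝ) (hσ : 0 < σ) (hσν : σ ≤ ν)
    (Θ : Set (Fin d → ℝ)) (hne : Θ.Nonempty) (hcl : IsClosed Θ) (hconv : Convex ℝ Θ)
    (proj : (Fin d → ℝ) → Fin d → ℝ) (hproj : IsProjOn Θ proj) (hmeas : Measurable proj) :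
    (∀ θ ∈ Θ, ∀ ξ : Fin d → ℝ,
      sqDist (proj (θ + σ • ξ)) θ ≤ sqDist (proj (θ + ν • ξ)) θ) ∧
    (∀ θ ∈ Θ, risk proj σ θ ≤ risk proj ν θ) ∧
    supRisk Θ proj σ ≤ supRisk Θ proj ν := by
  have hν : 0 < ν := lt_of_lt_of_le hσ hσν
  have part1 : ∀ θ ∈ Θ, ∀ ξ : Fin d → ℝ,
      sqDist (proj (θ + σ • ξ)) θ ≤ sqDist (proj (θ + ν • ξ)) θ := by
    intro θ hθ ξ
    set a := proj (θ + σ • ξ) with ha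
    set b := proj (θ + ν • ξ) with hb
    have h1 := vi Θ hconv proj hproj (θ + σ • ξ) b (hproj (θ + ν • ξ)).1
    have h2 := vi Θ hconv proj hproj (θ + ν • ξ) a (hproj (θ + σ • ξ)).1
    set S := inn (a - θ) (a - θ) with hS
    set T := inn (b - θ) (b - θ) with hT
    set P := inn (a - θ) (b - θ) with hP
    have hS0 : 0 ≤ S := inn_self_nonneg _
    have hT0 : 0 ≤ T := inn_self_nonneg _
    have hid : σ * T + ν * S - (σ + ν) * P
        = ν * inn ((θ + σ • ξ) - a) (b - a) + σ * inn ((θ + ν • ξ) - b) (a - b) := by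
      simp only [hS, hT, hP, inn, Finset.mul_sum, ← Finset.sum_add_distrib,
        ← Finset.sum_sub_distrib]
      apply Finset.sum_congr rfl
      intro i _
      simp only [Pi.sub_apply, Pi.add_apply, Pi.smul_apply, smul_eq_mul]
      ring
    have hkey : σ * T + ν * S ≤ (σ + ν) * P := by nlinarith
    have hCS : P ^ 2 ≤ S * T := by
      have := Finset.sum_mul_sq_le_sq_mul_sq Finset.univ (fun i => (a - θ) i) (fun i => (b - θ) i)
      simpa [hP, hS, hT, inn, sq] using this
    have hP0 : 0 ≤ P := by nlinarith
    have hSeq : sqDist a θ = S := by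
      simp [sqDist, hS, inn, sq]
    have hTeq : sqDist b θ = T := by
      simp [sqDist, hT, inn, sq]
    rw [hSeq, hTeq]
    have h0 : (0:ℝ) ≤ σ * T + ν * S :=
      add_nonneg (mul_nonneg hσ.le hT0) (mul_nonneg hν.le hS0)
    have hF : σ^2 * T^2 + ν^2 * S^2 ≤ (σ^2 + ν^2) * (S * T) := by
      nlinarith [mul_self_le_mul_self h0 hkey,
        mul_le_mul_of_nonneg_left hCS (sq_nonneg (σ + ν))]
    by_contra hc
    push_neg at hc
    have hc' : T < S := hc
    have h3 : σ^2 * S ≤ ν^2 * S :=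
      mul_le_mul_of_nonneg_right (pow_le_pow_left₀ hσ.le hσν 2) hS0
    have h4 : 0 < σ^2 * ((S - T) * (S - T)) :=
      mul_pos (pow_pos hσ 2) (mul_pos (sub_pos.2 hc') (sub_pos.2 hc'))
    have h5 : 0 ≤ (ν^2 * S - σ^2 * S) * (S - T) :=
      mul_nonneg (by linarith) (by linarith)
    nlinarith [hF, h4, h5]
  refine ⟨part1, ?_, ?_⟩
  · intro θ hθ
    exact lintegral_mono fun ξ => ENNReal.ofReal_le_ofReal (part1 θ hθ ξ)
  · refine iSup_mono fun θ => iSup_mono fun hθ => ?_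
    exact lintegral_mono fun ξ => ENNReal.ofReal_le_ofReal (part1 θ hθ ξ)
end
end
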